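/- arXiv:2009.04580 — 7 statements merged into one kernel-verified Lean document; each statement's English description precedes it below -/
import Mathlib

section
/- Assume f satisfies (f1) and (f2), let 0 < a < b < ∞, and let u be a positive solution of (R). Then (u'(r))² + 2F(u(r)) > 0 for every r ∈ [a,b). -/
open Set Filter MeasureTheory

/-- `F(s) = ∫₀ˢ f(t) dt`. -/
noncomputable def Fint (f : ℝ → ℝ) (s : ℝ) : ℝ := ∫ t in (0:ℝ)..s, f t

/-- Condition (f1): `f` is continuous on `[0,∞)`, continuously differentiable on `(0,∞)`,
and `f' ∈ L¹(0,1)`. -/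
def CondF1 (f : ℝ → ℝ) : Prop :=
  ContinuousOn f (Ici 0) ∧ (∀ s ∈ Ioi (0:ℝ), DifferentiableAt ℝ f s) ∧
  ContinuousOn (deriv f) (Ioi 0) ∧ IntervalIntegrable (deriv f) volume 0 1

/-- Condition (f2) in the case `β > B > 0`. -/
def CondF2B (f : ℝ → ℝ) (β B : ℝ) : Prop :=
  f 0 = 0 ∧ 0 < B ∧ B < β ∧ (∀ s, B < s → 0 < f s) ∧
  (∀ s ∈ Icc (0:ℝ) B, f s ≤ 0) ∧ (∃ ε > (0:ℝ), ∀ s ∈ Ioo (0:ℝ) ε, f s < 0) ∧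
  Fint f β = 0

/-- Condition (f2): either `β = B = 0` and `f > 0` on `(0,∞)`, or `β > B > 0` with the
sign conditions and `F(β) = 0`. -/
def CondF2 (f : ℝ → ℝ) (β B : ℝ) : Prop :=
  (β = 0 ∧ B = 0 ∧ f 0 = 0 ∧ ∀ s, 0 < s → 0 < f s) ∨ CondF2B f β B

/-- Condition (f3): the derivative of `s ↦ F(s)/f(s)` is `≥ (n-2)/(2n)` for every `s > β`. -/
def CondF3 (n : ℕ) (f : ℝ → ℝ) (β : ℝ) : Prop :=
  ∀ s, β < s → ∃ d, ((n : ℝ) - 2) / (2 * (n : ℝ)) ≤ d ∧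
    HasDerivAt (fun t => Fint f t / f t) d s

/-- Condition (f4): superlinearity `f(s) ≤ f'(s)(s - B)` for `s > B`, with
`f(s) ≢ f'(s)(s - B)` on `[B, β]`. -/
def CondF4 (f : ℝ → ℝ) (β B : ℝ) : Prop :=
  (∀ s, B < s → f s ≤ deriv f s * (s - B)) ∧
  ¬ (∀ s ∈ Icc B β, f s = deriv f s * (s - B))

/-- A positive solution of problem (R) on the annulus `a < |x| < b`:
`u` is continuous on `[a,b]`, differentiable up to the boundary with derivative `u'`
(one-sided at the endpoints), `u'` is continuous on `[a,b]`, `u` is twice continuously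
differentiable on `(a,b)` where it satisfies `u'' + ((n-1)/r) u' + f(u) = 0`,
`u(a) = u(b) = 0` and `u > 0` on `(a,b)`. -/
def IsPosSolAnn (n : ℕ) (a b : ℝ) (f u u' : ℝ → ℝ) : Prop :=
  ContinuousOn u (Icc a b) ∧
  (∀ r ∈ Icc a b, HasDerivWithinAt u (u' r) (Icc a b) r) ∧
  ContinuousOn u' (Icc a b) ∧
  (∀ r ∈ Ioo a b, HasDerivAt u (u' r) r) ∧
  (∀ r ∈ Ioo a b, HasDerivAt u' (-(((n : ℝ) - 1) / r * u' r + f (u r))) r) ∧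
  u a = 0 ∧ u b = 0 ∧ (∀ r ∈ Ioo a b, 0 < u r)

/-- A positive solution of the exterior problem (R) with `b = ∞`:
`u` is continuous on `[a,∞)`, differentiable on `[a,∞)` with derivative `u'`
(one-sided at `a`), twice continuously differentiable on `(a,∞)` where it satisfies
`u'' + ((n-1)/r) u' + f(u) = 0`, `u(a) = 0`, `u > 0` on `(a,∞)` and `u(r) → 0` as `r → ∞`. -/
def IsPosSolExt (n : ℕ) (a : ℝ) (f u u' : ℝ → ℝ) : Prop :=
  ContinuousOn u (Ici a) ∧
  (∀ r ∈ Ici a, HasDerivWithinAt u (u' r) (Ici a) r) ∧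
  (∀ r ∈ Ioi a, HasDerivAt u (u' r) r) ∧
  (∀ r ∈ Ioi a, HasDerivAt u' (-(((n : ℝ) - 1) / r * u' r + f (u r))) r) ∧
  u a = 0 ∧ (∀ r ∈ Ioi a, 0 < u r) ∧
  Tendsto u atTop (nhds 0)

/-- The Erbe–Tang functional
`P(s) = -2n (F(s)/f(s)) ρ(s)^{n-1} u'(ρ(s)) - ρ(s)^n (u'(ρ(s)))² - 2 ρ(s)^n F(s)`,
where `ρ` is an inverse branch of the solution `u` with derivative `u'`. -/
noncomputable def Pfun (n : ℕ) (f : ℝ → ℝ) (ρ u' : ℝ → ℝ) (s : ℝ) : ℝ :=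
  -2 * (n : ℝ) * (Fint f s / f s) * (ρ s) ^ (n - 1) * u' (ρ s)
    - (ρ s) ^ n * (u' (ρ s)) ^ 2 - 2 * (ρ s) ^ n * Fint f s

/-- Proposition 2.1 (i): under (f1), (f2), a positive solution `u` of (R) satisfies
`(u'(r))² + 2F(u(r)) > 0` for every `r ∈ [a,b)`. -/
theorem energy_positive
    (n : ℕ) (hn : 2 ≤ n) (f : ℝ → ℝ) (β B : ℝ)
    (hf1 : CondF1 f) (hf2 : CondF2 f β B)
    (a b : ℝ) (ha : 0 < a) (hab : a < b)
    (u u' : ℝ → ℝ) (hu : IsPosSolAnn n a b f u u') :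
    ∀ r ∈ Ico a b, 0 < (u' r) ^ 2 + 2 * Fint f (u r) := by
  obtain ⟨hfc, hfd, hfdc, hfi⟩ := hf1
  obtain ⟨huc, huIcc, hu'c, huIoo, hode, hua, hub, hupos⟩ := hu
  have hu_nonneg : ∀ r ∈ Icc a b, 0 ≤ u r := by
    intro r hr
    rcases eq_or_lt_of_le hr.1 with h | h
    · simp [← h, hua]
    rcases eq_or_lt_of_le hr.2 with h' | h'
    · simp [h', hub]
    exact (hupos r ⟨h, h'⟩).le
  set E : ℝ → ℝ := fun t => u' t ^ 2 + 2 * Fint f (u t) with hEdef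
  -- derivative of F at positive points
  have hF : ∀ x : ℝ, 0 < x → HasDerivAt (Fint f) (f x) x := by
    intro x hx
    have hmem : Ici (0:ℝ) ∈ nhds x := Ici_mem_nhds hx
    have hcx : ContinuousAt f x := (hfc x hx.le).continuousAt hmem
    have hint : IntervalIntegrable f volume 0 x := by
      apply ContinuousOn.intervalIntegrable
      apply hfc.mono
      rw [uIcc_of_le hx.le]
      exact Icc_subset_Ici_self
    have hmeas : StronglyMeasurableAtFilter f (nhds x) volume :=
      ⟨Ici 0, hmem, (hfc.aestronglyMeasurable measurableSet_Ici)⟩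
    exact intervalIntegral.integral_hasDerivAt_right hint hmeas hcx
  -- derivative of E on (a,b)
  have hEderiv : ∀ t ∈ Ioo a b, HasDerivAt E (-(2 * ((n:ℝ) - 1) / t * u' t ^ 2)) t := by
    intro t ht
    have h1 := hode t ht
    have h2 := huIoo t ht
    have h3 : HasDerivAt (fun s => Fint f (u s)) (f (u t) * u' t) t :=
      (hF (u t) (hupos t ht)).comp t h2
    have h4 : HasDerivAt (fun s => u' s ^ 2)
        ((2:ℕ) * u' t ^ 1 * (-(((n:ℝ) - 1) / t * u' t + f (u t)))) t := h1.pow 2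
    have h5 := h4.add (h3.const_mul 2)
    refine h5.congr_deriv ?_
    push_cast
    ring
  -- continuity of E on [a,b]
  obtain ⟨c, hc, hcmax⟩ := isCompact_Icc.exists_isMaxOn ⟨a, left_mem_Icc.mpr hab.le⟩ huc
  have hM0 : 0 ≤ u c := hu_nonneg c hc
  have hFcont : ContinuousOn (Fint f) (Icc 0 (u c)) := by
    have hint : IntegrableOn f (uIcc 0 (u c)) volume := by
      rw [uIcc_of_le hM0]
      exact (hfc.mono Icc_subset_Ici_self).integrableOn_Icc
    have := intervalIntegral.continuousOn_primitive_interval hint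
    rwa [uIcc_of_le hM0] at this
  have hmaps : MapsTo u (Icc a b) (Icc 0 (u c)) := fun t ht => ⟨hu_nonneg t ht, hcmax ht⟩
  have hEc : ContinuousOn E (Icc a b) :=
    (hu'c.pow 2).add ((continuousOn_const).mul (hFcont.comp huc hmaps))
  -- E antitone on [a,b]
  have hanti : AntitoneOn E (Icc a b) := by
    apply antitoneOn_of_deriv_nonpos (convex_Icc a b) hEc
    · intro x hx
      rw [interior_Icc] at hx
      exact (hEderiv x hx).differentiableAt.differentiableWithinAt
    · intro x hx
      rw [interior_Icc] at hx
      rw [(hEderiv x hx).deriv]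
      have hx0 : 0 < x := lt_trans ha hx.1
      have hn1 : (0:ℝ) ≤ (n:ℝ) - 1 := by
        have : (2:ℝ) ≤ (n:ℝ) := by exact_mod_cast hn
        linarith
      have : 0 ≤ 2 * ((n:ℝ) - 1) / x * u' x ^ 2 :=
        mul_nonneg (div_nonneg (by linarith) hx0.le) (sq_nonneg _)
      linarith
  intro r hr
  by_contra hcon
  push_neg at hcon
  have hEr : E r ≤ 0 := hcon
  have hEb : E b = u' b ^ 2 := by
    simp [hEdef, hub, Fint, intervalIntegral.integral_same]
  have hEb0 : 0 ≤ E b := by rw [hEb]; positivity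
  have hrm : r ∈ Icc a b := ⟨hr.1, hr.2.le⟩
  have hbm : b ∈ Icc a b := right_mem_Icc.mpr hab.le
  have hzero : ∀ t ∈ Icc r b, E t = 0 := by
    intro t ht
    have htm : t ∈ Icc a b := ⟨le_trans hr.1 ht.1, ht.2⟩
    have h1 : E t ≤ E r := hanti hrm htm ht.1
    have h2 : E b ≤ E t := hanti htm hbm ht.2
    linarith
  have hu'zero : ∀ t ∈ Ioo r b, u' t = 0 := by
    intro t ht
    have htab : t ∈ Ioo a b := ⟨lt_of_le_of_lt hr.1 ht.1, ht.2⟩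
    have hd := hEderiv t htab
    have hz : HasDerivAt E 0 t := by
      have hnb : Ioo r b ∈ nhds t := isOpen_Ioo.mem_nhds ht
      refine (hasDerivAt_const t (0:ℝ)).congr_of_eventuallyEq ?_
      filter_upwards [hnb] with x hx
      exact hzero x (Ioo_subset_Icc_self hx)
    have heq := hd.unique hz
    have htpos : 0 < t := lt_trans ha htab.1
    have hn1 : (0:ℝ) < (n:ℝ) - 1 := by
      have : (2:ℝ) ≤ (n:ℝ) := by exact_mod_cast hn
      linarith
    have hcoef : 0 < 2 * ((n:ℝ) - 1) / t := by positivity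
    have hsq : u' t ^ 2 = 0 := by
      have := neg_eq_zero.mp heq
      rcases mul_eq_zero.mp this with h | h
      · exact absurd h (ne_of_gt hcoef)
      · exact h
    exact pow_eq_zero_iff (n := 2) (by norm_num) |>.mp hsq
  set t0 : ℝ := (r + b) / 2 with ht0def
  have hrb := hr.2
  have ht0 : t0 ∈ Ioo r b := ⟨by simp only [ht0def]; linarith, by simp only [ht0def]; linarith⟩
  have ht0ab : t0 ∈ Ioo a b := ⟨lt_of_le_of_lt hr.1 ht0.1, ht0.2⟩
  have hconst : ∀ x ∈ Icc t0 b, u x = u t0 := by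
    apply constant_of_has_deriv_right_zero
    · exact huc.mono (Icc_subset_Icc ht0ab.1.le le_rfl)
    · intro x hx
      have hx' : x ∈ Ioo r b := ⟨lt_of_lt_of_le ht0.1 hx.1, hx.2⟩
      have := (huIoo x ⟨lt_of_le_of_lt hr.1 hx'.1, hx'.2⟩).hasDerivWithinAt (s := Ici x)
      rwa [hu'zero x hx'] at this
  have : u b = u t0 := hconst b (right_mem_Icc.mpr ht0.2.le)
  rw [hub] at this
  exact absurd (hupos t0 ht0ab) (by rw [← this]; exact lt_irrefl 0)
end

section
/- Assume f satisfies (f1) and (f2), let 0 < a < b < ∞, and let u be a positive solution of (R). Then there exists a number c ∈ (a,b) such that u'(r) > 0 for r ∈ [a,c) and u'(r) < 0 for r ∈ (c,b); moreover, u(c) > β. -/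
open Set Filter MeasureTheory
open Topology

/-- Proposition 2.1 (ii): under (f1), (f2), a positive solution `u` of (R) has a unique
critical point `c ∈ (a,b)`, with `u' > 0` on `[a,c)`, `u' < 0` on `(c,b)` and `u(c) > β`. -/
theorem unique_max_point
    (n : ℕ) (hn : 2 ≤ n) (f : ℝ → ℝ) (β B : ℝ)
    (hf1 : CondF1 f) (hf2 : CondF2 f β B)
    (a b : ℝ) (ha : 0 < a) (hab : a < b)
    (u u' : ℝ → ℝ) (hu : IsPosSolAnn n a b f u u') :
    ∃ c ∈ Ioo a b, (∀ r ∈ Ico a c, 0 < u' r) ∧ (∀ r ∈ Ioo c b, u' r < 0) ∧ β < u c := by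
  obtain ⟨hu_cont, hu_dw, hu'_cont, hu_d, hu'_d, hua, hub, hupos⟩ := hu
  obtain ⟨hf_cont, hf_diff, -, -⟩ := hf1
  have hn1 : (1 : ℝ) ≤ (n : ℝ) - 1 := by
    have : (2 : ℝ) ≤ (n : ℝ) := by exact_mod_cast hn
    linarith
  have hFint : ∀ s : ℝ, Fint f s = ∫ t in (0:ℝ)..s, f t := fun s => rfl
  -- nonnegativity of u on [a,b]
  have hu_nonneg : ∀ r ∈ Icc a b, 0 ≤ u r := by
    intro r hr
    rcases eq_or_lt_of_le hr.1 with h1 | h1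
    · simp [← h1, hua]
    rcases eq_or_lt_of_le hr.2 with h2 | h2
    · simp [h2, hub]
    · exact (hupos r ⟨h1, h2⟩).le
  -- interval integrability of f on nonneg intervals
  have hInt : ∀ x y : ℝ, 0 ≤ x → 0 ≤ y → IntervalIntegrable f volume x y := by
    intro x y hx hy
    exact (hf_cont.mono (fun t ht => le_trans (le_min hx hy) ht.1)).intervalIntegrable
  have hF0 : Fint f 0 = 0 := intervalIntegral.integral_same
  -- FTC : derivative of Fint
  have hFd : ∀ s : ℝ, 0 < s → HasDerivAt (Fint f) (f s) s := by
    intro s hs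
    have hca : ∀ x ∈ Ioi (0:ℝ), ContinuousAt f x :=
      fun x hx => hf_cont.continuousAt (Ici_mem_nhds hx)
    have := intervalIntegral.integral_hasDerivAt_right (hInt 0 s le_rfl hs.le)
      (ContinuousAt.stronglyMeasurableAtFilter isOpen_Ioi hca s hs) (hca s hs)
    exact this
  -- the energy function
  set E : ℝ → ℝ := fun r => u' r ^ 2 / 2 + Fint f (u r) with hE_def
  have hEd : ∀ r ∈ Ioo a b, HasDerivAt E (-(((n : ℝ) - 1) / r) * u' r ^ 2) r := by
    intro r hr
    have h1 := ((hu'_d r hr).pow 2).div_const 2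
    have h2 := (hFd (u r) (hupos r hr)).comp r (hu_d r hr)
    have h3 := h1.add h2
    have heq : ((2:ℕ) : ℝ) * u' r ^ (2 - 1) * -(((n : ℝ) - 1) / r * u' r + f (u r)) / 2
        + f (u r) * u' r = -(((n : ℝ) - 1) / r) * u' r ^ 2 := by
      push_cast
      ring
    rw [heq] at h3
    exact h3
  -- continuity of E on [a,b]
  obtain ⟨cM, hcM, hcMmax⟩ := isCompact_Icc.exists_isMaxOn (Set.nonempty_Icc.2 hab.le) hu_cont
  have hEcont : ContinuousOn E (Icc a b) := by
    have h0M : (0:ℝ) ≤ u cM := hu_nonneg cM hcM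
    have hic : IntegrableOn f (Icc 0 (u cM)) volume :=
      (hf_cont.mono (fun t ht => ht.1)).integrableOn_Icc
    have hFc : ContinuousOn (Fint f) (Icc 0 (u cM)) := by
      have h := intervalIntegral.continuousOn_primitive_interval (μ := volume) (f := f)
        (a := 0) (b := u cM) (by rwa [uIcc_of_le h0M])
      rw [uIcc_of_le h0M] at h
      exact h
    have hmaps : ∀ r ∈ Icc a b, u r ∈ Icc 0 (u cM) :=
      fun r hr => ⟨hu_nonneg r hr, hcMmax hr⟩
    exact ((hu'_cont.pow 2).div_const 2).add (hFc.comp hu_cont hmaps)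
  -- E is antitone
  have hEanti : AntitoneOn E (Icc a b) := by
    apply antitoneOn_of_hasDerivWithinAt_nonpos (convex_Icc a b) hEcont
      (f' := fun r => -(((n : ℝ) - 1) / r) * u' r ^ 2)
    · intro x hx
      rw [interior_Icc] at hx
      exact (hEd x hx).hasDerivWithinAt
    · intro x hx
      rw [interior_Icc] at hx
      have hx0 : 0 < x := ha.trans hx.1
      have : 0 ≤ ((n : ℝ) - 1) / x := div_nonneg (by linarith) hx0.le
      nlinarith [sq_nonneg (u' x)]
  have hEb : E b = u' b ^ 2 / 2 := by simp [hE_def, hub, hF0]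
  -- key : E is positive on the interior
  have hEpos : ∀ r₀ ∈ Ioo a b, 0 < E r₀ := by
    intro r₀ hr₀
    by_contra hcon
    push_neg at hcon
    have hEb0 : 0 ≤ E b := by rw [hEb]; positivity
    have hzero : ∀ r ∈ Icc r₀ b, E r = 0 := by
      intro r hr
      have h1 : E r ≤ E r₀ := hEanti ⟨hr₀.1.le, hr₀.2.le⟩
        ⟨hr₀.1.le.trans hr.1, hr.2⟩ hr.1
      have h2 : E b ≤ E r := hEanti ⟨hr₀.1.le.trans hr.1, hr.2⟩
        (right_mem_Icc.2 hab.le) hr.2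
      linarith
    have hu'0 : ∀ r ∈ Ioo r₀ b, u' r = 0 := by
      intro r hr
      have hmem : Ioo r₀ b ∈ 𝓝 r := isOpen_Ioo.mem_nhds hr
      have heq : E =ᶠ[𝓝 r] fun _ => 0 :=
        Filter.eventually_of_mem hmem (fun x hx => hzero x ⟨hx.1.le, hx.2.le⟩)
      have h0 : HasDerivAt E 0 r := (hasDerivAt_const r (0:ℝ)).congr_of_eventuallyEq heq
      have hrab : r ∈ Ioo a b := ⟨hr₀.1.trans hr.1, hr.2⟩
      have huniq := (hEd r hrab).unique h0
      have hr0 : 0 < r := ha.trans hrab.1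
      have hfrac : 0 < ((n : ℝ) - 1) / r := div_pos (by linarith) hr0
      have hsq : u' r ^ 2 = 0 := by nlinarith [sq_nonneg (u' r)]
      exact pow_eq_zero_iff two_ne_zero |>.mp hsq
    have hmono : MonotoneOn u (Icc r₀ b) := by
      apply monotoneOn_of_hasDerivWithinAt_nonneg (convex_Icc r₀ b)
        (hu_cont.mono (Icc_subset_Icc hr₀.1.le le_rfl)) (f' := u')
      · intro x hx
        rw [interior_Icc] at hx
        exact (hu_d x ⟨hr₀.1.trans hx.1, hx.2⟩).hasDerivWithinAt
      · intro x hx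
        rw [interior_Icc] at hx
        exact (hu'0 x hx).ge
    have hle := hmono (left_mem_Icc.2 hr₀.2.le) (right_mem_Icc.2 hr₀.2.le) hr₀.2.le
    rw [hub] at hle
    exact absurd hle (not_le.2 (hupos r₀ hr₀))
  -- at a critical point, F(u r₀) > 0
  have hFposU : ∀ r₀ ∈ Ioo a b, u' r₀ = 0 → 0 < Fint f (u r₀) := by
    intro r₀ hr₀ hc
    have h1 := hEpos r₀ hr₀
    have h2 : E r₀ = Fint f (u r₀) := by simp [hE_def, hc]
    linarith
  -- critical values exceed β and f is positive there
  have hcrit : ∀ r₀ ∈ Ioo a b, u' r₀ = 0 → β < u r₀ ∧ 0 < f (u r₀) := by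
    intro r₀ hr₀ hc
    rcases hf2 with ⟨hβ, hB, hf0, hfpos⟩ | ⟨hf0, hB, hBβ, hfposB, hfnpos, -, hFβ⟩
    · exact ⟨hβ ▸ hupos r₀ hr₀, hfpos _ (hupos r₀ hr₀)⟩
    · have hFpos := hFposU r₀ hr₀ hc
      have hβlt : β < u r₀ := by
        by_contra hle
        push_neg at hle
        have hs0 : 0 < u r₀ := hupos r₀ hr₀
        have hFle : Fint f (u r₀) ≤ 0 := by
          rcases le_or_gt (u r₀) B with hsB | hBs
          · have hnn := intervalIntegral.integral_nonneg (f := fun t => -f t) (μ := volume)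
              hs0.le (fun t ht => neg_nonneg.2 (hfnpos t ⟨ht.1, ht.2.trans hsB⟩))
            rw [intervalIntegral.integral_neg] at hnn
            rw [hFint]
            linarith
          · have hadd := intervalIntegral.integral_add_adjacent_intervals
              (hInt 0 (u r₀) le_rfl hs0.le) (hInt (u r₀) β hs0.le (hB.trans hBβ).le)
            have hge : 0 ≤ ∫ t in (u r₀)..β, f t :=
              intervalIntegral.integral_nonneg hle
                (fun t ht => (hfposB t (lt_of_lt_of_le hBs ht.1)).le)
            rw [← hFint, ← hFint, hFβ] at hadd
            linarith
        linarith
      exact ⟨hβlt, hfposB _ (hBβ.trans hβlt)⟩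
  -- local sign of u' near a critical point
  have hlocal : ∀ r₀ ∈ Ioo a b, u' r₀ = 0 →
      (∀ᶠ r in 𝓝[<] r₀, 0 < u' r) ∧ (∀ᶠ r in 𝓝[>] r₀, u' r < 0) := by
    intro r₀ hr₀ hc
    have hfupos := (hcrit r₀ hr₀ hc).2
    have hd : HasDerivAt u' (-(f (u r₀))) r₀ := by
      have h := hu'_d r₀ hr₀
      rw [hc] at h
      simpa using h
    have hslope := hasDerivAt_iff_tendsto_slope.1 hd
    have hev : ∀ᶠ r in 𝓝[≠] r₀, slope u' r₀ r < 0 :=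
      hslope.eventually_lt_const (by linarith)
    constructor
    · have h1 : ∀ᶠ r in 𝓝[<] r₀, slope u' r₀ r < 0 :=
        hev.filter_mono (nhdsWithin_mono r₀ (fun x hx => ne_of_lt hx))
      filter_upwards [h1, self_mem_nhdsWithin] with r hsl hrlt
      have hden : r - r₀ < 0 := sub_neg.2 hrlt
      rw [slope_def_field, hc, sub_zero] at hsl
      rcases div_neg_iff.1 hsl with ⟨h1, h2⟩ | ⟨h1, h2⟩
      · exact h1
      · linarith
    · have h1 : ∀ᶠ r in 𝓝[>] r₀, slope u' r₀ r < 0 :=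
        hev.filter_mono (nhdsWithin_mono r₀ (fun x hx => ne_of_gt hx))
      filter_upwards [h1, self_mem_nhdsWithin] with r hsl hrgt
      have hden : 0 < r - r₀ := sub_pos.2 hrgt
      rw [slope_def_field, hc, sub_zero] at hsl
      rcases div_neg_iff.1 hsl with ⟨h1, h2⟩ | ⟨h1, h2⟩
      · linarith
      · exact h1
  -- u dips below the critical value on both sides
  have hdropR : ∀ r₀ ∈ Ioo a b, u' r₀ = 0 → ∀ r₁ ∈ Ioo r₀ b, ∃ s ∈ Ioo r₀ r₁, u s < u r₀ := by
    intro r₀ hr₀ hc r₁ hr₁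
    obtain ⟨t, ht, hsub⟩ := mem_nhdsGT_iff_exists_Ioo_subset.1 ((hlocal r₀ hr₀ hc).2)
    have ht' : r₀ < min t r₁ := lt_min ht hr₁.1
    set s := (r₀ + min t r₁) / 2 with hs_def
    have hs1 : r₀ < s := by rw [hs_def]; linarith
    have hs2 : s < min t r₁ := by rw [hs_def]; linarith
    refine ⟨s, ⟨hs1, hs2.trans_le (min_le_right _ _)⟩, ?_⟩
    have hsab : s < b := (hs2.trans_le (min_le_right _ _)).trans hr₁.2
    obtain ⟨ξ, hξ, hξeq⟩ := exists_hasDerivAt_eq_slope u u' hs1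
      (hu_cont.mono (Icc_subset_Icc hr₀.1.le hsab.le))
      (fun x hx => hu_d x ⟨hr₀.1.trans hx.1, hx.2.trans hsab⟩)
    have hξneg : u' ξ < 0 := hsub ⟨hξ.1, (hξ.2.trans hs2).trans_le (min_le_left _ _)⟩
    rw [hξeq] at hξneg
    rcases div_neg_iff.1 hξneg with ⟨h1, h2⟩ | ⟨h1, h2⟩
    · linarith
    · linarith
  have hdropL : ∀ r₀ ∈ Ioo a b, u' r₀ = 0 → ∀ r₁ ∈ Ioo a r₀, ∃ s ∈ Ioo r₁ r₀, u s < u r₀ := by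
    intro r₀ hr₀ hc r₁ hr₁
    obtain ⟨t, ht, hsub⟩ := mem_nhdsLT_iff_exists_Ioo_subset.1 ((hlocal r₀ hr₀ hc).1)
    have ht' : max t r₁ < r₀ := max_lt ht hr₁.2
    set s := (max t r₁ + r₀) / 2 with hs_def
    have hs1 : max t r₁ < s := by rw [hs_def]; linarith
    have hs2 : s < r₀ := by rw [hs_def]; linarith
    refine ⟨s, ⟨(le_max_right _ _).trans_lt hs1, hs2⟩, ?_⟩
    have hsa : a < s := hr₁.1.trans ((le_max_right _ _).trans_lt hs1)
    obtain ⟨ξ, hξ, hξeq⟩ := exists_hasDerivAt_eq_slope u u' hs2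
      (hu_cont.mono (Icc_subset_Icc hsa.le hr₀.2.le))
      (fun x hx => hu_d x ⟨hsa.trans hx.1, hx.2.trans hr₀.2⟩)
    have hξpos : 0 < u' ξ := hsub ⟨(le_max_left _ _).trans_lt (hs1.trans hξ.1), hξ.2⟩
    rw [hξeq] at hξpos
    rcases div_pos_iff.1 hξpos with ⟨h1, h2⟩ | ⟨h1, h2⟩
    · linarith
    · linarith
  -- uniqueness of critical points
  have hUniqF : ∀ r₀ ∈ Ioo a b, ∀ r₁ ∈ Ioo a b, u' r₀ = 0 → u' r₁ = 0 → r₀ < r₁ → False := by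
    intro r₀ hr₀ r₁ hr₁ hc₀ hc₁ hlt
    obtain ⟨s₀, hs₀, hus₀⟩ := hdropR r₀ hr₀ hc₀ r₁ ⟨hlt, hr₁.2⟩
    obtain ⟨s₁, hs₁, hus₁⟩ := hdropL r₁ hr₁ hc₁ r₀ ⟨hr₀.1, hlt⟩
    obtain ⟨r₂, hr₂mem, hr₂min⟩ := isCompact_Icc.exists_isMinOn (Set.nonempty_Icc.2 hlt.le)
      (hu_cont.mono (Icc_subset_Icc hr₀.1.le hr₁.2.le))
    have h20 : u r₂ ≤ u s₀ := hr₂min ⟨hs₀.1.le, hs₀.2.le⟩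
    have h21 : u r₂ ≤ u s₁ := hr₂min ⟨hs₁.1.le, hs₁.2.le⟩
    have hr₂ne0 : r₀ ≠ r₂ := fun h => by rw [← h] at h20; linarith
    have hr₂ne1 : r₂ ≠ r₁ := fun h => by rw [h] at h21; linarith
    have hr₂Ioo : r₂ ∈ Ioo r₀ r₁ :=
      ⟨lt_of_le_of_ne hr₂mem.1 hr₂ne0, lt_of_le_of_ne hr₂mem.2 hr₂ne1⟩
    have hr₂ab : r₂ ∈ Ioo a b := ⟨hr₀.1.trans hr₂Ioo.1, hr₂Ioo.2.trans hr₁.2⟩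
    have hc₂ : u' r₂ = 0 := by
      have hloc : IsLocalMin u r₂ :=
        hr₂min.isLocalMin (Icc_mem_nhds hr₂Ioo.1 hr₂Ioo.2)
      exact hloc.hasDerivAt_eq_zero (hu_d r₂ hr₂ab)
    obtain ⟨s₂, hs₂, hus₂⟩ := hdropL r₂ hr₂ab hc₂ r₀ ⟨hr₀.1, hr₂Ioo.1⟩
    have hfin : u r₂ ≤ u s₂ := hr₂min ⟨hs₂.1.le, hs₂.2.le.trans hr₂Ioo.2.le⟩
    linarith
  -- existence of the maximum point
  obtain ⟨c, hcmem, hcmax⟩ := isCompact_Icc.exists_isMaxOn (Set.nonempty_Icc.2 hab.le) hu_cont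
  have hmid : (a + b) / 2 ∈ Ioo a b := ⟨by linarith, by linarith⟩
  have hucpos : 0 < u c := lt_of_lt_of_le (hupos _ hmid) (hcmax ⟨hmid.1.le, hmid.2.le⟩)
  have hcIoo : c ∈ Ioo a b := by
    constructor
    · rcases eq_or_lt_of_le hcmem.1 with h | h
      · rw [← h, hua] at hucpos; exact absurd hucpos (lt_irrefl 0)
      · exact h
    · rcases eq_or_lt_of_le hcmem.2 with h | h
      · rw [h, hub] at hucpos; exact absurd hucpos (lt_irrefl 0)
      · exact h
  have hc0 : u' c = 0 :=
    (hcmax.isLocalMax (Icc_mem_nhds hcIoo.1 hcIoo.2)).hasDerivAt_eq_zero (hu_d c hcIoo)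
  -- u'(a) > 0
  have hu'a_pos : 0 < u' a := by
    have hne : u' a ≠ 0 := by
      intro h0
      have hEa : E a = 0 := by simp [hE_def, hua, hF0, h0]
      have h1 : E c ≤ E a := hEanti (left_mem_Icc.2 hab.le) ⟨hcIoo.1.le, hcIoo.2.le⟩ hcIoo.1.le
      have := hEpos c hcIoo
      linarith
    rcases lt_or_gt_of_ne hne with hneg | hpos
    · exfalso
      have hdw := hu_dw a (left_mem_Icc.2 hab.le)
      have hslope := hasDerivWithinAt_iff_tendsto_slope.1 hdw
      have hev : ∀ᶠ r in 𝓝[Icc a b \ {a}] a, slope u a r < 0 :=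
        hslope.eventually_lt_const hneg
      have hmem : Icc a b \ {a} ∈ 𝓝[>] a := by
        rw [Icc_diff_left]
        exact Ioc_mem_nhdsGT_of_mem ⟨le_rfl, hab⟩
      have hev' : ∀ᶠ r in 𝓝[>] a, slope u a r < 0 :=
        hev.filter_mono (nhdsWithin_le_of_mem hmem)
      have hmem' : ∀ᶠ r in 𝓝[>] a, r ∈ Icc a b \ {a} := Filter.eventually_of_mem hmem (fun _ h => h)
      obtain ⟨r, hsl, hrm⟩ := (hev'.and hmem').exists
      have hra : a < r := lt_of_le_of_ne hrm.1.1 (Ne.symm hrm.2)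
      rw [slope_def_field, hua, sub_zero] at hsl
      have hur : u r < 0 := by
        rcases div_neg_iff.1 hsl with ⟨h1, h2⟩ | ⟨h1, h2⟩
        · linarith
        · exact h1
      exact absurd (hu_nonneg r hrm.1) (not_le.2 hur)
    · exact hpos
  -- assembly
  refine ⟨c, hcIoo, ?_, ?_, (hcrit c hcIoo hc0).1⟩
  · intro r hr
    by_contra hcon
    push_neg at hcon
    rcases eq_or_lt_of_le hcon with heq | hlt
    · rcases eq_or_lt_of_le hr.1 with h | h
      · rw [← h] at heq; exact absurd heq (ne_of_gt hu'a_pos)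
      · exact hUniqF r ⟨h, hr.2.trans hcIoo.2⟩ c hcIoo heq hc0 hr.2
    · have hcont' : ContinuousOn u' (Icc a r) :=
        hu'_cont.mono (Icc_subset_Icc le_rfl (hr.2.le.trans hcIoo.2.le))
      have h0mem : (0:ℝ) ∈ Icc (u' r) (u' a) := ⟨hlt.le, hu'a_pos.le⟩
      obtain ⟨z, hz, hz0⟩ := intermediate_value_Icc' hr.1 hcont' h0mem
      have hzne_a : z ≠ a := by intro h; rw [h] at hz0; linarith
      have hzne_r : z ≠ r := by intro h; rw [h] at hz0; linarith
      have hza : a < z := lt_of_le_of_ne hz.1 (Ne.symm hzne_a)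
      have hzr : z < r := lt_of_le_of_ne hz.2 hzne_r
      exact hUniqF z ⟨hza, (hzr.trans hr.2).trans hcIoo.2⟩ c hcIoo hz0 hc0 (hzr.trans hr.2)
  · intro r hr
    have hrab : r ∈ Ioo a b := ⟨hcIoo.1.trans hr.1, hr.2⟩
    obtain ⟨ξ, hξ, hξeq⟩ := exists_hasDerivAt_eq_slope u u' hr.2
      (hu_cont.mono (Icc_subset_Icc hrab.1.le le_rfl))
      (fun x hx => hu_d x ⟨hrab.1.trans hx.1, hx.2⟩)
    have hξneg : u' ξ < 0 := by
      rw [hξeq, hub]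
      apply div_neg_of_neg_of_pos
      · simpa using hupos r hrab
      · linarith [hr.2]
    by_contra hcon
    push_neg at hcon
    rcases eq_or_lt_of_le hcon with heq | hpos
    · exact hUniqF c hcIoo r hrab hc0 heq.symm hr.1
    · have hcont' : ContinuousOn u' (Icc r ξ) :=
        hu'_cont.mono (Icc_subset_Icc hrab.1.le hξ.2.le)
      have h0mem : (0:ℝ) ∈ Icc (u' ξ) (u' r) := ⟨hξneg.le, hpos.le⟩
      obtain ⟨z, hz, hz0⟩ := intermediate_value_Icc' hξ.1.le hcont' h0mem
      have hzne_r : z ≠ r := by intro h; rw [h] at hz0; linarith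
      have hzne_ξ : z ≠ ξ := by intro h; rw [h] at hz0; linarith
      have hrz : r < z := lt_of_le_of_ne hz.1 (Ne.symm hzne_r)
      have hzξ : z < ξ := lt_of_le_of_ne hz.2 hzne_ξ
      exact hUniqF c hcIoo z ⟨hrab.1.trans hrz, hzξ.trans hξ.2⟩ hc0 hz0 (hr.1.trans hrz)
end

section
/- Assume f satisfies (f1) and (f2) with B > 0, and let u be a positive solution of the exterior problem (R) with b = ∞. Then r^{n−1}·u'(r) converges as r → ∞ to some limit L with L ∈ (−∞, 0]. -/
open Set Filter MeasureTheory

/-- Proposition 2.2 (i): under (f1), (f2) with `B > 0`, for a positive solution `u` of the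
exterior problem, `r^{n-1} u'(r)` converges as `r → ∞` to some `L ∈ (-∞, 0]`. -/
theorem rpow_times_deriv_tendsto
    (n : ℕ) (hn : 2 ≤ n) (f : ℝ → ℝ) (β B : ℝ)
    (hf1 : CondF1 f) (hf2 : CondF2B f β B)
    (a : ℝ) (ha : 0 < a)
    (u u' : ℝ → ℝ) (hu : IsPosSolExt n a f u u') :
    ∃ L : ℝ, L ≤ 0 ∧ Tendsto (fun r : ℝ => r ^ (n - 1) * u' r) atTop (nhds L) := by
  obtain ⟨m, rfl⟩ : ∃ m, n = m + 2 := ⟨n - 2, by omega⟩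
  obtain ⟨hu_cont, hu_d1, hu_d, hu_d2, hu_a, hu_pos, hu_lim⟩ := hu
  obtain ⟨hf0, hB, hBβ, hfpos, hfle, -, -⟩ := hf2
  -- eventually `a < r` and `u r < B`
  have hev : ∀ᶠ r in atTop, a < r ∧ u r < B :=
    (eventually_gt_atTop a).and (hu_lim.eventually (gt_mem_nhds hB))
  obtain ⟨R₀, hR₀⟩ := eventually_atTop.1 hev
  have haR₀ : a < R₀ := (hR₀ R₀ le_rfl).1
  set g : ℝ → ℝ := fun r => r ^ (m + 1) * u' r with hg_def
  -- derivative of g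
  have hgd : ∀ r, a < r → HasDerivAt g (-(r ^ (m + 1) * f (u r))) r := by
    intro r hr
    have hr0 : (0:ℝ) < r := ha.trans hr
    have h1 := (hasDerivAt_pow (m + 1) r).fun_mul (hu_d2 r hr)
    refine h1.congr_deriv ?_
    have : r ≠ 0 := ne_of_gt hr0
    push_cast
    field_simp
    ring
  -- g is monotone on Ici R₀
  have hu'cont : ∀ r, a < r → ContinuousAt u' r := fun r hr =>
    (hu_d2 r hr).differentiableAt.continuousAt
  have hgc : ContinuousOn g (Ici R₀) := by
    intro r hr
    exact ((continuous_pow (m+1)).continuousAt.mul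
      (hu'cont r (haR₀.trans_le hr))).continuousWithinAt
  have hgmono : MonotoneOn g (Ici R₀) := by
    apply monotoneOn_of_deriv_nonneg (convex_Ici R₀) hgc
    · intro r hr
      rw [interior_Ici] at hr
      exact (hgd r (haR₀.trans hr)).differentiableAt.differentiableWithinAt
    · intro r hr
      rw [interior_Ici] at hr
      have har : a < r := haR₀.trans hr
      rw [(hgd r har).deriv]
      have hr0 : (0:ℝ) < r := ha.trans har
      have hub : u r ∈ Icc (0:ℝ) B :=
        ⟨(hu_pos r har).le, (hR₀ r hr.le).2.le⟩
      have := hfle (u r) hub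
      nlinarith [pow_pos hr0 (m+1)]
  -- g ≤ 0 on Ici R₀
  have hgle : ∀ r ∈ Ici R₀, g r ≤ 0 := by
    intro r₁ hr₁
    by_contra hpos
    push_neg at hpos
    have har₁ : a < r₁ := haR₀.trans_le hr₁
    -- u' > 0 on Ici r₁, so u is monotone there
    have hu'pos : ∀ r ∈ Ici r₁, 0 ≤ u' r := by
      intro r hr
      have hgr : g r₁ ≤ g r := hgmono hr₁ (mem_Ici.2 (hr₁.trans hr)) hr
      have hr0 : (0:ℝ) < r := ha.trans (har₁.trans_le hr)
      have : 0 < g r := hpos.trans_le hgr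
      have hp : 0 < r ^ (m+1) := pow_pos hr0 _
      simp only [hg_def] at this
      nlinarith
    have humono : MonotoneOn u (Ici r₁) := by
      apply monotoneOn_of_deriv_nonneg (convex_Ici r₁)
      · exact hu_cont.mono (Ici_subset_Ici.2 har₁.le)
      · intro r hr
        rw [interior_Ici] at hr
        exact (hu_d r (har₁.trans hr)).differentiableAt.differentiableWithinAt
      · intro r hr
        rw [interior_Ici] at hr
        rw [(hu_d r (har₁.trans hr)).deriv]
        exact hu'pos r (mem_Ici.2 hr.le)
    have hur₁ : 0 < u r₁ := hu_pos r₁ har₁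
    have : u r₁ ≤ 0 := by
      apply ge_of_tendsto hu_lim
      filter_upwards [eventually_ge_atTop r₁] with r hr
      exact humono self_mem_Ici hr hr
    linarith
  -- the monotone truncation
  set G : ℝ → ℝ := fun r => g (max r R₀) with hG_def
  have hGmono : Monotone G := fun x y hxy =>
    hgmono (mem_Ici.2 (le_max_right _ _)) (mem_Ici.2 (le_max_right _ _)) (max_le_max hxy le_rfl)
  have hGbdd : BddAbove (Set.range G) := by
    refine ⟨0, ?_⟩
    rintro _ ⟨r, rfl⟩
    exact hgle _ (mem_Ici.2 (le_max_right _ _))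
  have hGt : Tendsto G atTop (nhds (⨆ r, G r)) := tendsto_atTop_ciSup hGmono hGbdd
  refine ⟨⨆ r, G r, ciSup_le fun r => hgle _ (mem_Ici.2 (le_max_right _ _)), ?_⟩
  have heq : (fun r : ℝ => r ^ (m + 2 - 1) * u' r) =ᶠ[atTop] G := by
    filter_upwards [eventually_ge_atTop R₀] with r hr
    simp only [hG_def, hg_def, max_eq_left hr]
    norm_num
  exact hGt.congr' heq.symm
end

section
/- Assume f satisfies (f1) and (f2) with B > 0, and let u be a positive solution of the exterior problem (R) with b = ∞. Then r·u'(r) → 0 as r → ∞. -/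
open Set Filter MeasureTheory

/-- Proposition 2.2 (ii): under (f1), (f2) with `B > 0`, for a positive solution `u` of the
exterior problem, `r·u'(r) → 0` as `r → ∞`. -/
theorem r_times_deriv_tendsto_zero
    (n : ℕ) (hn : 2 ≤ n) (f : ℝ → ℝ) (β B : ℝ)
    (hf1 : CondF1 f) (hf2 : CondF2B f β B)
    (a : ℝ) (ha : 0 < a)
    (u u' : ℝ → ℝ) (hu : IsPosSolExt n a f u u') :
    Tendsto (fun r : ℝ => r * u' r) atTop (nhds 0) := by
  obtain ⟨hucont, _, huderiv, hu'deriv, hua, hupos, hulim⟩ := hu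
  obtain ⟨_, hB, _, _, hfnp, _, _⟩ := hf2
  obtain ⟨R₁, hR₁⟩ := eventually_atTop.mp (hulim.eventually (gt_mem_nhds hB))
  set R₀ : ℝ := max R₁ (a + 1) with hR₀def
  have hR₀a : a < R₀ := lt_of_lt_of_le (lt_add_one a) (le_max_right _ _)
  have hR₀pos : (0:ℝ) < R₀ := ha.trans hR₀a
  set g : ℝ → ℝ := fun r => r ^ (n - 1) * u' r with hgdef
  have hgderiv : ∀ r ∈ Ioi a, HasDerivAt g (-(r ^ (n - 1) * f (u r))) r := by
    intro r hr
    have hr0 : (0:ℝ) < r := ha.trans hr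
    have h1 := (hasDerivAt_pow (n - 1) r).mul (hu'deriv r hr)
    refine h1.congr_deriv ?_
    have hpow : r ^ (n - 1) = r ^ (n - 2) * r := by
      rw [← pow_succ]; congr 1; omega
    have hpow2 : r ^ (n - 1 - 1) = r ^ (n - 2) := by congr 1
    have hcast : ((n - 1 : ℕ) : ℝ) = (n : ℝ) - 1 := by
      push_cast [Nat.cast_sub (by omega : 1 ≤ n)]; ring
    rw [hpow, hpow2, hcast]
    field_simp
    ring
  -- monotonicity of g on [R₀, ∞)
  have hIoi : ∀ r ∈ Ioi R₀, r ∈ Ioi a := fun r hr => hR₀a.trans hr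
  have hIci : ∀ r ∈ Ici R₀, r ∈ Ioi a := fun r hr => hR₀a.trans_le hr
  have hgmono : MonotoneOn g (Ici R₀) := by
    apply monotoneOn_of_deriv_nonneg (convex_Ici R₀)
    · intro r hr
      exact ((hgderiv r (hIci r hr)).continuousAt).continuousWithinAt
    · intro r hr
      rw [interior_Ici] at hr
      exact (hgderiv r (hIoi r hr)).differentiableAt.differentiableWithinAt
    · intro r hr
      rw [interior_Ici] at hr
      rw [(hgderiv r (hIoi r hr)).deriv]
      have hr0 : (0:ℝ) < r := ha.trans (hIoi r hr)
      have hfle : f (u r) ≤ 0 := by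
        apply hfnp
        exact ⟨(hupos r (hIoi r hr)).le,
          (hR₁ r ((le_max_left _ _).trans (le_of_lt hr))).le⟩
      nlinarith [pow_pos hr0 (n - 1)]
  -- g ≤ 0 on [R₀, ∞)
  have hgle0 : ∀ r ∈ Ici R₀, g r ≤ 0 := by
    intro r1 hr1
    by_contra hpos
    push_neg at hpos
    have hr1a : a < r1 := hR₀a.trans_le hr1
    have hu'pos : ∀ r ∈ Ici r1, 0 < u' r := by
      intro r hr
      have hle : g r1 ≤ g r := hgmono hr1 (mem_Ici.mpr (le_trans (mem_Ici.mp hr1) (mem_Ici.mp hr))) hr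
      have hgpos : 0 < g r := hpos.trans_le hle
      have hr0 : (0:ℝ) < r := ha.trans (hr1a.trans_le hr)
      by_contra hneg
      push_neg at hneg
      have : g r ≤ 0 := mul_nonpos_of_nonneg_of_nonpos (pow_pos hr0 (n-1)).le hneg
      linarith
    have humono : StrictMonoOn u (Ici r1) := by
      apply strictMonoOn_of_deriv_pos (convex_Ici r1)
      · exact hucont.mono (Ici_subset_Ici.mpr hr1a.le)
      · intro r hr
        rw [interior_Ici] at hr
        rw [(huderiv r (hr1a.trans hr)).deriv]
        exact hu'pos r (mem_Ici.mpr (le_of_lt hr))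
    have hkey : u (r1 + 1) ≤ 0 := by
      apply ge_of_tendsto hulim
      filter_upwards [eventually_ge_atTop (r1 + 1)] with r hr
      exact (humono.monotoneOn) (by simp : r1 + 1 ∈ Ici r1)
        ((le_add_of_nonneg_right zero_le_one).trans hr) hr
    have : 0 < u (r1 + 1) := hupos _ (by linarith : a < r1 + 1)
    linarith
  -- limit of g
  set h : ℝ → ℝ := fun r => g (max r R₀) with hhdef
  have hhmono : Monotone h := fun x y hxy =>
    hgmono (mem_Ici.mpr (le_max_right _ _)) (mem_Ici.mpr (le_max_right _ _)) (max_le_max hxy le_rfl)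
  have hbdd : BddAbove (range h) := by
    refine ⟨0, ?_⟩
    rintro _ ⟨r, rfl⟩
    exact hgle0 _ (mem_Ici.mpr (le_max_right _ _))
  set L : ℝ := ⨆ r, h r with hLdef
  have hhtend : Tendsto h atTop (nhds L) := tendsto_atTop_ciSup hhmono hbdd
  have hgtend : Tendsto g atTop (nhds L) := by
    apply hhtend.congr'
    filter_upwards [eventually_ge_atTop R₀] with r hr
    simp [hhdef, max_eq_left hr]
  have hL0 : L ≤ 0 := ciSup_le fun r => hgle0 _ (mem_Ici.mpr (le_max_right _ _))
  have hle : ∀ r, R₀ ≤ r → g r ≤ L := by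
    intro r hr
    have := le_ciSup hbdd r
    simpa [hhdef, max_eq_left hr] using this
  rcases eq_or_lt_of_le hn with hn2 | hn3
  · -- n = 2 : show L = 0
    subst hn2
    have hLz : L = 0 := by
      rcases eq_or_lt_of_le hL0 with h0 | hLneg
      · exact h0
      · exfalso
        have hu'le : ∀ r ∈ Ici R₀, u' r ≤ L / r := by
          intro r hr
          have hr0 : (0:ℝ) < r := hR₀pos.trans_le hr
          have hg : g r ≤ L := hle r hr
          rw [hgdef] at hg
          norm_num at hg
          rw [le_div_iff₀ hr0, mul_comm]
          linarith [hg]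
        set φ : ℝ → ℝ := fun r => u r - L * Real.log r with hφdef
        have hφderiv : ∀ r ∈ Ioi R₀, HasDerivAt φ (u' r - L / r) r := by
          intro r hr
          have hr0 : (0:ℝ) < r := hR₀pos.trans hr
          have := (huderiv r (hIoi r hr)).sub
            ((Real.hasDerivAt_log hr0.ne').const_mul L)
          exact this.congr_deriv (by ring)
        have hφanti : AntitoneOn φ (Ici R₀) := by
          apply antitoneOn_of_deriv_nonpos (convex_Ici R₀)
          · apply ContinuousOn.sub (hucont.mono (Ici_subset_Ici.mpr hR₀a.le))
            apply ContinuousOn.mul continuousOn_const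
            apply Real.continuousOn_log.mono
            intro x hx
            simp only [mem_compl_iff, mem_singleton_iff]
            exact (hR₀pos.trans_le hx).ne'
          · intro r hr
            rw [interior_Ici] at hr
            exact (hφderiv r hr).differentiableAt.differentiableWithinAt
          · intro r hr
            rw [interior_Ici] at hr
            rw [(hφderiv r hr).deriv]
            have := hu'le r (mem_Ici.mpr (le_of_lt hr))
            linarith
        set r2 : ℝ := Real.exp (Real.log R₀ + u R₀ / (-L) + 1) with hr2def
        have huR₀pos : 0 < u R₀ := hupos _ hR₀a
        have hquot : 0 ≤ u R₀ / (-L) := div_nonneg huR₀pos.le (by linarith)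
        have hr2ge : R₀ ≤ r2 := by
          calc R₀ = Real.exp (Real.log R₀) := (Real.exp_log hR₀pos).symm
            _ ≤ r2 := by rw [hr2def]; exact Real.exp_le_exp.mpr (by linarith)
        have hlog : Real.log r2 = Real.log R₀ + u R₀ / (-L) + 1 := Real.log_exp _
        have hφle : φ r2 ≤ φ R₀ := hφanti self_mem_Ici hr2ge hr2ge
        rw [hφdef] at hφle
        simp only at hφle
        rw [hlog] at hφle
        have hLs : L * (u R₀ / (-L)) = -u R₀ := by
          field_simp [hLneg.ne]
        have hur2 : 0 < u r2 := hupos _ (hR₀a.trans_le hr2ge)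
        nlinarith
    rw [hLz] at hgtend
    apply hgtend.congr
    intro r
    simp [hgdef, pow_one]
  · -- n ≥ 3
    have hk : n - 2 ≠ 0 := by omega
    have htop : Tendsto (fun r : ℝ => r ^ (n - 2)) atTop atTop :=
      tendsto_pow_atTop hk
    have hdiv := hgtend.div_atTop htop
    apply hdiv.congr'
    filter_upwards [eventually_gt_atTop (0:ℝ)] with r hr
    have hpow : r ^ (n - 1) = r ^ (n - 2) * r := by
      rw [← pow_succ]; congr 1; omega
    have hne : r ^ (n - 2) ≠ 0 := pow_ne_zero _ hr.ne'
    rw [hgdef]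
    simp only
    rw [hpow]
    field_simp
end

section
/- Assume f satisfies (f1) and (f2) with β > 0, let 0 < a < b < ∞, and let u₁ and u₂ be two positive solutions of (R) with 0 < u₁'(a) < u₂'(a). If there exists s₀ ∈ (0, min{M₁, M₂}) such that V₁(s) ≤ V₂(s) for all s ∈ [0, s₀], then r₁(s) > r₂(s) and u₁'(r₁(s)) < u₂'(r₂(s)) (equivalently, r₁'(s) > r₂'(s)) for all s ∈ (0, s₀]. -/
open Set Filter MeasureTheory Topology

lemma vc_energy {n : ℕ} {f u u' : ℝ → ℝ} {a b c : ℝ} (hn : 2 ≤ n)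
    (hf : ContinuousOn f (Ici 0)) (ha : 0 < a) (hab : a < b)
    (h : IsPosSolAnn n a b f u u')
    (hc : c ∈ Ioo a b) (hdown : ∀ x ∈ Ioo c b, u' x < 0) :
    ∀ x ∈ Icc a c, 0 < (u' x) ^ 2 + 2 * Fint f (u x) := by
  obtain ⟨hu, -, hu', hud, hu'd, hua, hub, hup0⟩ := h
  have hupos : ∀ x ∈ Icc a b, 0 ≤ u x := by
    intro x hx
    rcases eq_or_lt_of_le hx.1 with h1 | h1
    · rw [← h1, hua]
    rcases eq_or_lt_of_le hx.2 with h2 | h2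
    · rw [h2, hub]
    · exact (hup0 x ⟨h1, h2⟩).le
  obtain ⟨x₀, hx₀, hK⟩ := isCompact_Icc.exists_isMaxOn ⟨a, le_rfl, hab.le⟩ hu
  set K := u x₀ with hKdef
  have hK0 : 0 ≤ K := hupos x₀ hx₀
  have humem : ∀ x ∈ Icc a b, u x ∈ Icc (0:ℝ) K := fun x hx => ⟨hupos x hx, hK hx⟩
  have hFc : ContinuousOn (Fint f) (Icc 0 K) := by
    have : IntegrableOn f (uIcc 0 K) := by
      rw [uIcc_of_le hK0]
      exact (hf.mono Icc_subset_Ici_self).integrableOn_compact isCompact_Icc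
    have h := intervalIntegral.continuousOn_primitive_interval this
    simp only [uIcc_of_le hK0] at h
    exact h
  have HC : ContinuousOn (fun x => (u' x) ^ 2 + 2 * Fint f (u x)) (Icc a b) :=
    (hu'.pow 2).add (continuousOn_const.mul (hFc.comp hu humem))
  have hderH : ∀ x ∈ Ioo a b,
      HasDerivAt (fun y => (u' y) ^ 2 + 2 * Fint f (u y))
        (-2 * ((n:ℝ) - 1) / x * (u' x) ^ 2) x := by
    intro x hx
    have hux : 0 < u x := hup0 x hx
    have hFd : HasDerivAt (Fint f) (f (u x)) (u x) := by
      have hint : IntervalIntegrable f volume 0 (u x) := by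
        apply ContinuousOn.intervalIntegrable
        apply hf.mono
        rw [uIcc_of_le hux.le]
        exact Icc_subset_Ici_self
      have hmeas : StronglyMeasurableAtFilter f (𝓝 (u x)) volume :=
        ContinuousOn.stronglyMeasurableAtFilter isOpen_Ioi (hf.mono Ioi_subset_Ici_self)
          (u x) hux
      have hcont : ContinuousAt f (u x) := hf.continuousAt (Ici_mem_nhds hux)
      exact intervalIntegral.integral_hasDerivAt_right hint hmeas hcont
    have h1 : HasDerivAt (fun y => (u' y) ^ 2)
        (2 * u' x ^ 1 * (-(((n : ℝ) - 1) / x * u' x + f (u x)))) x := by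
      simpa [Pi.pow_def] using (hu'd x hx).pow 2
    have h2 : HasDerivAt (fun y => Fint f (u y)) (f (u x) * u' x) x :=
      (hFd.comp x (hud x hx))
    have := h1.add ((h2.const_mul (2:ℝ)))
    refine this.congr_deriv ?_
    ring
  have hanti : AntitoneOn (fun y => (u' y) ^ 2 + 2 * Fint f (u y)) (Icc a b) := by
    apply antitoneOn_of_deriv_nonpos (convex_Icc a b) HC
    · intro x hx
      rw [interior_Icc] at hx
      exact (hderH x hx).differentiableAt.differentiableWithinAt
    · intro x hx
      rw [interior_Icc] at hx
      rw [(hderH x hx).deriv]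
      have hx0 : 0 < x := ha.trans hx.1
      have hn1 : (0:ℝ) ≤ (n:ℝ) - 1 := by
        have h2n : (2:ℝ) ≤ (n:ℝ) := by exact_mod_cast hn
        linarith
      have hpos : 0 ≤ 2 * ((n:ℝ)-1) / x * (u' x)^2 := by positivity
      have heq : -2*((n:ℝ)-1)/x*(u' x)^2 = -(2*((n:ℝ)-1)/x*(u' x)^2) := by ring
      rw [heq]
      linarith
  have hstrict : StrictAntiOn (fun y => (u' y) ^ 2 + 2 * Fint f (u y)) (Icc c b) := by
    apply strictAntiOn_of_deriv_neg (convex_Icc c b)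
      (HC.mono (Icc_subset_Icc hc.1.le le_rfl))
    intro x hx
    rw [interior_Icc] at hx
    have hxab : x ∈ Ioo a b := ⟨hc.1.trans hx.1, hx.2⟩
    rw [(hderH x hxab).deriv]
    have hx0 : 0 < x := ha.trans hxab.1
    have hu'x : u' x ≠ 0 := (hdown x hx).ne
    have hn1 : (0:ℝ) < (n:ℝ) - 1 := by
      have h2n : (2:ℝ) ≤ (n:ℝ) := by exact_mod_cast hn
      linarith
    have hpos : 0 < 2 * ((n:ℝ)-1) / x * (u' x)^2 := by positivity
    have heq : -2*((n:ℝ)-1)/x*(u' x)^2 = -(2*((n:ℝ)-1)/x*(u' x)^2) := by ring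
    rw [heq]
    linarith
  intro x hx
  have hxab : x ∈ Icc a b := ⟨hx.1, hx.2.trans hc.2.le⟩
  have h1 : (u' c)^2 + 2 * Fint f (u c) ≤ (u' x)^2 + 2 * Fint f (u x) :=
    hanti hxab ⟨hc.1.le, hc.2.le⟩ hx.2
  have h2 : (u' b)^2 + 2 * Fint f (u b) < (u' c)^2 + 2 * Fint f (u c) :=
    hstrict ⟨le_rfl, hc.2.le⟩ ⟨hc.2.le, le_rfl⟩ hc.2
  have h3 : Fint f (u b) = 0 := by
    rw [hub]
    simp [Fint]
  rw [h3] at h2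
  nlinarith [sq_nonneg (u' b)]
lemma vc_mono {u u' : ℝ → ℝ} {a b c : ℝ} (hu : ContinuousOn u (Icc a b))
    (hder : ∀ x ∈ Ioo a b, HasDerivAt u (u' x) x)
    (hc : c ∈ Ioo a b) (hup : ∀ x ∈ Ico a c, 0 < u' x) :
    StrictMonoOn u (Icc a c) := by
  apply strictMonoOn_of_deriv_pos (convex_Icc a c)
    (hu.mono (Icc_subset_Icc le_rfl hc.2.le))
  intro x hx
  rw [interior_Icc] at hx
  rw [(hder x ⟨hx.1, hx.2.trans hc.2⟩).deriv]
  exact hup x ⟨hx.1.le, hx.2⟩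

lemma vc_rcont {u r : ℝ → ℝ} {a c M : ℝ} (hac : a < c) (hM0 : 0 < M) (hMc : M = u c)
    (hmono : StrictMonoOn u (Icc a c)) (hua : u a = 0)
    (hmem : ∀ s ∈ Icc (0:ℝ) M, r s ∈ Icc a c ∧ u (r s) = s)
    (hinv : ∀ x ∈ Icc a c, r (u x) = x) :
    ContinuousOn r (Icc 0 M) := by
  have humem : ∀ x ∈ Icc a c, u x ∈ Icc (0:ℝ) M := by
    intro x hx
    constructor
    · rw [← hua]; exact hmono.monotoneOn ⟨le_rfl, hac.le⟩ hx hx.1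
    · rw [hMc]; exact hmono.monotoneOn hx ⟨hac.le, le_rfl⟩ hx.2
  have hrmono : StrictMonoOn r (Icc 0 M) := by
    intro s hs t ht hst
    by_contra hle
    push_neg at hle
    have h2 := hmono.monotoneOn (hmem t ht).1 (hmem s hs).1 hle
    rw [(hmem t ht).2, (hmem s hs).2] at h2
    exact absurd hst (not_lt.2 h2)
  intro s hs
  have hright : s < M → ContinuousWithinAt r (Ici s) s := by
    intro hsM
    apply hrmono.continuousWithinAt_right_of_exists_between
      (Icc_mem_nhdsGE_of_mem ⟨hs.1, hsM⟩)
    intro b hb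
    have hrsc : r s < c := by
      rcases lt_or_eq_of_le (hmem s hs).1.2 with h | h
      · exact h
      · exfalso
        have h2 := (hmem s hs).2
        rw [h] at h2
        rw [← h2, ← hMc] at hsM
        exact lt_irrefl _ hsM
    have hyc : min b c ∈ Icc a c :=
      ⟨le_trans (hmem s hs).1.1 (le_of_lt (lt_min hb hrsc)), min_le_right _ _⟩
    refine ⟨u (min b c), humem _ hyc, ?_⟩
    rw [hinv _ hyc]
    exact ⟨lt_min hb hrsc, min_le_left _ _⟩
  have hleft : 0 < s → ContinuousWithinAt r (Iic s) s := by
    intro hs0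
    apply hrmono.continuousWithinAt_left_of_exists_between
      (Icc_mem_nhdsLE_of_mem ⟨hs0, hs.2⟩)
    intro b hb
    have hars : a < r s := by
      rcases lt_or_eq_of_le (hmem s hs).1.1 with h | h
      · exact h
      · exfalso
        have h2 := (hmem s hs).2
        rw [← h] at h2
        rw [← h2, hua] at hs0
        exact lt_irrefl _ hs0
    have hyc : max b a ∈ Icc a c :=
      ⟨le_max_right _ _, le_trans (le_of_lt (max_lt hb hars)) (hmem s hs).1.2⟩
    refine ⟨u (max b a), humem _ hyc, ?_⟩
    rw [hinv _ hyc]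
    exact ⟨le_max_left _ _, max_lt hb hars⟩
  rcases eq_or_lt_of_le hs.1 with h0 | h0
  · exact ((hright (h0 ▸ hM0)).mono (by rw [← h0]; exact Icc_subset_Ici_self))
  rcases eq_or_lt_of_le hs.2 with h1 | h1
  · exact ((hleft h0).mono (by rw [h1]; exact Icc_subset_Iic_self))
  · exact ((hleft h0).union (hright h1)).mono
      (fun x hx => (le_total x s).imp (fun h => h) (fun h => h))
lemma vc_pack {n : ℕ} {f u u' r : ℝ → ℝ} {a b c M : ℝ} (hn : 2 ≤ n)
    (hfc : ContinuousOn f (Ici 0)) (ha : 0 < a) (hab : a < b)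
    (h : IsPosSolAnn n a b f u u') (hc : c ∈ Ioo a b)
    (hup : ∀ x ∈ Ico a c, 0 < u' x) (hdown : ∀ x ∈ Ioo c b, u' x < 0)
    (hM : M = u c)
    (hmem : ∀ s ∈ Icc (0:ℝ) M, r s ∈ Icc a c ∧ u (r s) = s)
    (hinv : ∀ x ∈ Icc a c, r (u x) = x) :
    0 < M ∧ r 0 = a ∧ ContinuousOn r (Icc 0 M) ∧
    (∀ s ∈ Ico (0:ℝ) M, 0 < u' (r s)) ∧
    (∀ s ∈ Ioo (0:ℝ) M, HasDerivAt r (u' (r s))⁻¹ s) ∧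
    (∀ s ∈ Icc (0:ℝ) M, 0 < (u' (r s))^2 + 2 * Fint f s) := by
  have hM0 : 0 < M := by rw [hM]; exact h.2.2.2.2.2.2.2 c hc
  have hmono : StrictMonoOn u (Icc a c) := vc_mono h.1 h.2.2.2.1 hc hup
  have hr0 : r 0 = a := by
    apply hmono.injOn (hmem 0 ⟨le_rfl, hM0.le⟩).1 ⟨le_rfl, hc.1.le⟩
    rw [(hmem 0 ⟨le_rfl, hM0.le⟩).2, h.2.2.2.2.2.1]
  have hrc : ContinuousOn r (Icc 0 M) :=
    vc_rcont hc.1 hM0 hM hmono h.2.2.2.2.2.1 hmem hinv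
  have hwpos : ∀ s ∈ Ico (0:ℝ) M, 0 < u' (r s) := by
    intro s hs
    have hm := hmem s ⟨hs.1, hs.2.le⟩
    have hrsc : r s < c := by
      rcases lt_or_eq_of_le hm.1.2 with h' | h'
      · exact h'
      · exfalso
        have h2 := hm.2
        rw [h', ← hM] at h2
        rw [← h2] at hs
        exact lt_irrefl _ hs.2
    exact hup (r s) ⟨hm.1.1, hrsc⟩
  refine ⟨hM0, hr0, hrc, hwpos, ?_, ?_⟩
  · intro s hs
    have hm := hmem s ⟨hs.1.le, hs.2.le⟩
    have hars : a < r s := by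
      rcases lt_or_eq_of_le hm.1.1 with h' | h'
      · exact h'
      · exfalso
        have h2 := hm.2
        rw [← h', h.2.2.2.2.2.1] at h2
        rw [← h2] at hs
        exact lt_irrefl _ hs.1
    have hrb : r s < b := lt_of_le_of_lt hm.1.2 hc.2
    exact HasDerivAt.of_local_left_inverse
      (hrc.continuousAt (Icc_mem_nhds hs.1 hs.2))
      (h.2.2.2.1 (r s) ⟨hars, hrb⟩)
      (hwpos s ⟨hs.1.le, hs.2⟩).ne'
      (eventually_of_mem (Ioo_mem_nhds hs.1 hs.2)
        (fun y hy => (hmem y ⟨hy.1.le, hy.2.le⟩).2))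
  · intro s hs
    have hm := hmem s hs
    have := vc_energy hn hfc ha hab h hc hdown (r s) hm.1
    rwa [hm.2] at this


/-- Lemma 3.2 (V-comparison): if `V₁ ≤ V₂` on `[0, s₀]` for some `s₀ ∈ (0, min{M₁,M₂})`,
then `r₁(s) > r₂(s)` and `u₁'(r₁(s)) < u₂'(r₂(s))` for all `s ∈ (0, s₀]`. -/
theorem V_comparison
    (n : ℕ) (hn : 2 ≤ n) (f : ℝ → ℝ) (β B : ℝ)
    (hf1 : CondF1 f) (hf2 : CondF2B f β B)
    (a b : ℝ) (ha : 0 < a) (hab : a < b)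
    (u₁ u₁' u₂ u₂' : ℝ → ℝ)
    (h₁ : IsPosSolAnn n a b f u₁ u₁') (h₂ : IsPosSolAnn n a b f u₂ u₂')
    (hslope₁ : 0 < u₁' a) (hslope₁₂ : u₁' a < u₂' a)
    (c₁ c₂ : ℝ) (hc₁ : c₁ ∈ Ioo a b) (hc₂ : c₂ ∈ Ioo a b)
    (hc₁up : ∀ r ∈ Ico a c₁, 0 < u₁' r) (hc₁down : ∀ r ∈ Ioo c₁ b, u₁' r < 0)
    (hc₂up : ∀ r ∈ Ico a c₂, 0 < u₂' r) (hc₂down : ∀ r ∈ Ioo c₂ b, u₂' r < 0)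
    (M₁ M₂ : ℝ) (hM₁ : M₁ = u₁ c₁) (hM₂ : M₂ = u₂ c₂)
    (r₁ r₂ : ℝ → ℝ)
    (hr₁mem : ∀ s ∈ Icc (0:ℝ) M₁, r₁ s ∈ Icc a c₁ ∧ u₁ (r₁ s) = s)
    (hr₁inv : ∀ r ∈ Icc a c₁, r₁ (u₁ r) = r)
    (hr₂mem : ∀ s ∈ Icc (0:ℝ) M₂, r₂ s ∈ Icc a c₂ ∧ u₂ (r₂ s) = s)
    (hr₂inv : ∀ r ∈ Icc a c₂, r₂ (u₂ r) = r)
    (s₀ : ℝ) (hs₀ : s₀ ∈ Ioo (0:ℝ) (min M₁ M₂))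
    (hV : ∀ s ∈ Icc (0:ℝ) s₀,
      (r₁ s) ^ (2 * (n - 1)) * ((u₁' (r₁ s)) ^ 2 + 2 * Fint f s) ≤
      (r₂ s) ^ (2 * (n - 1)) * ((u₂' (r₂ s)) ^ 2 + 2 * Fint f s)) :
    ∀ s ∈ Ioc (0:ℝ) s₀, r₂ s < r₁ s ∧ u₁' (r₁ s) < u₂' (r₂ s) := by
  have hfc : ContinuousOn f (Ici 0) := hf1.1
  obtain ⟨hM₁0, hr₁0, hr₁c, hw₁pos, hr₁d, hE₁⟩ :=
    vc_pack hn hfc ha hab h₁ hc₁ hc₁up hc₁down hM₁ hr₁mem hr₁inv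
  obtain ⟨hM₂0, hr₂0, hr₂c, hw₂pos, hr₂d, hE₂⟩ :=
    vc_pack hn hfc ha hab h₂ hc₂ hc₂up hc₂down hM₂ hr₂mem hr₂inv
  have hs₀M₁ : s₀ < M₁ := lt_of_lt_of_le hs₀.2 (min_le_left _ _)
  have hs₀M₂ : s₀ < M₂ := lt_of_lt_of_le hs₀.2 (min_le_right _ _)
  have hIccM₁s : Icc (0:ℝ) s₀ ⊆ Icc 0 M₁ := Icc_subset_Icc le_rfl hs₀M₁.le
  have hIccM₂s : Icc (0:ℝ) s₀ ⊆ Icc 0 M₂ := Icc_subset_Icc le_rfl hs₀M₂.le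
  -- strict monotonicity helper for r₁ - r₂
  have hgmono : ∀ t ∈ Ioc (0:ℝ) s₀, (∀ x ∈ Ioo (0:ℝ) t, u₁' (r₁ x) < u₂' (r₂ x)) →
      StrictMonoOn (fun s => r₁ s - r₂ s) (Icc 0 t) := by
    intro t ht hw
    apply strictMonoOn_of_deriv_pos (convex_Icc 0 t)
      ((hr₁c.mono (Icc_subset_Icc le_rfl (ht.2.trans hs₀M₁.le))).sub
       (hr₂c.mono (Icc_subset_Icc le_rfl (ht.2.trans hs₀M₂.le))))
    intro x hx
    rw [interior_Icc] at hx
    have hx₁ : x ∈ Ioo (0:ℝ) M₁ := ⟨hx.1, (hx.2.trans_le ht.2).trans hs₀M₁⟩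
    have hx₂ : x ∈ Ioo (0:ℝ) M₂ := ⟨hx.1, (hx.2.trans_le ht.2).trans hs₀M₂⟩
    rw [((hr₁d x hx₁).sub (hr₂d x hx₂)).deriv]
    have h1 : 0 < u₁' (r₁ x) := hw₁pos x ⟨hx.1.le, hx₁.2⟩
    have h2 := hw x hx
    have h3 : (u₂' (r₂ x))⁻¹ < (u₁' (r₁ x))⁻¹ := inv_strictAnti₀ h1 h2
    linarith
  -- continuity of the slope difference
  have hmaps₁ : ∀ s ∈ Icc (0:ℝ) s₀, r₁ s ∈ Icc a b := fun s hs =>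
    Icc_subset_Icc le_rfl hc₁.2.le (hr₁mem s (hIccM₁s hs)).1
  have hmaps₂ : ∀ s ∈ Icc (0:ℝ) s₀, r₂ s ∈ Icc a b := fun s hs =>
    Icc_subset_Icc le_rfl hc₂.2.le (hr₂mem s (hIccM₂s hs)).1
  have hwcont : ContinuousOn (fun s => u₂' (r₂ s) - u₁' (r₁ s)) (Icc 0 s₀) :=
    (h₂.2.2.1.comp (hr₂c.mono hIccM₂s) hmaps₂).sub
      (h₁.2.2.1.comp (hr₁c.mono hIccM₁s) hmaps₁)
  -- initial interval
  have hφ0 : 0 < u₂' (r₂ 0) - u₁' (r₁ 0) := by rw [hr₁0, hr₂0]; linarith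
  have hev : ∀ᶠ x in 𝓝[Icc (0:ℝ) s₀] 0, 0 < u₂' (r₂ x) - u₁' (r₁ x) :=
    (hwcont 0 ⟨le_rfl, hs₀.1.le⟩).eventually (eventually_gt_nhds hφ0)
  obtain ⟨ε, hε0, hball⟩ := Metric.mem_nhdsWithin_iff.1 hev
  set δ := min (ε/2) s₀ with hδdef
  have hδ0 : 0 < δ := lt_min (half_pos hε0) hs₀.1
  have hδs₀ : δ ≤ s₀ := min_le_right _ _
  have hδw : ∀ s ∈ Icc (0:ℝ) δ, u₁' (r₁ s) < u₂' (r₂ s) := by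
    intro s hs
    have hmem : s ∈ Metric.ball (0:ℝ) ε ∩ Icc 0 s₀ := by
      constructor
      · rw [Metric.mem_ball, Real.dist_eq, sub_zero, abs_of_nonneg hs.1]
        exact lt_of_le_of_lt (hs.2.trans (min_le_left _ _)) (half_lt_self hε0)
      · exact ⟨hs.1, hs.2.trans hδs₀⟩
    have h' : 0 < u₂' (r₂ s) - u₁' (r₁ s) := hball hmem
    linarith
  have hinit : ∀ s ∈ Ioc (0:ℝ) δ, r₂ s < r₁ s ∧ u₁' (r₁ s) < u₂' (r₂ s) := by
    intro s hs
    refine ⟨?_, hδw s ⟨hs.1.le, hs.2⟩⟩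
    have hg := hgmono δ ⟨hδ0, hδs₀⟩ (fun x hx => hδw x ⟨hx.1.le, hx.2.le⟩)
    have h2 := hg (left_mem_Icc.2 hδ0.le) ⟨hs.1.le, hs.2⟩ hs.1
    simp only [hr₁0, hr₂0] at h2
    linarith
  -- the failure set is empty
  set T := {s | s ∈ Icc δ s₀ ∧ (r₁ s ≤ r₂ s ∨ u₂' (r₂ s) ≤ u₁' (r₁ s))} with hTdef
  have hTempty : T = ∅ := by
    by_contra hne
    have hTne : T.Nonempty := nonempty_iff_ne_empty.2 hne
    have hbdd : BddBelow T := ⟨δ, fun x hx => hx.1.1⟩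
    have hclosed : IsClosed T := by
      have h1 : ContinuousOn (fun s => r₁ s - r₂ s) (Icc δ s₀) :=
        ((hr₁c.mono hIccM₁s).sub (hr₂c.mono hIccM₂s)).mono
          (Icc_subset_Icc hδ0.le le_rfl)
      have h2 : ContinuousOn (fun s => u₂' (r₂ s) - u₁' (r₁ s)) (Icc δ s₀) :=
        hwcont.mono (Icc_subset_Icc hδ0.le le_rfl)
      have e : T = (Icc δ s₀ ∩ (fun s => r₁ s - r₂ s) ⁻¹' (Iic 0)) ∪
                   (Icc δ s₀ ∩ (fun s => u₂' (r₂ s) - u₁' (r₁ s)) ⁻¹' (Iic 0)) := by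
        ext x
        simp only [hTdef, mem_setOf_eq, mem_union, mem_inter_iff, mem_preimage, mem_Iic]
        constructor
        · rintro ⟨hx, h' | h'⟩
          · exact Or.inl ⟨hx, by linarith⟩
          · exact Or.inr ⟨hx, by linarith⟩
        · rintro (⟨hx, h'⟩ | ⟨hx, h'⟩)
          · exact ⟨hx, Or.inl (by linarith)⟩
          · exact ⟨hx, Or.inr (by linarith)⟩
      rw [e]
      exact (h1.preimage_isClosed_of_isClosed isClosed_Icc isClosed_Iic).union
        (h2.preimage_isClosed_of_isClosed isClosed_Icc isClosed_Iic)
    set q := sInf T with hqdef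
    have hqT : q ∈ T := hclosed.csInf_mem hTne hbdd
    have hqmem : q ∈ Icc δ s₀ := hqT.1
    have hq0 : 0 < q := lt_of_lt_of_le hδ0 hqmem.1
    have hbelow : ∀ x ∈ Ioo (0:ℝ) q, r₂ x < r₁ x ∧ u₁' (r₁ x) < u₂' (r₂ x) := by
      intro x hx
      by_cases hxδ : x ≤ δ
      · exact hinit x ⟨hx.1, hxδ⟩
      · push_neg at hxδ
        have hxT : x ∉ T := fun hmm => absurd (csInf_le hbdd hmm) (not_le.2 hx.2)
        have hxI : x ∈ Icc δ s₀ := ⟨hxδ.le, hx.2.le.trans hqmem.2⟩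
        by_contra hcon
        apply hxT
        refine ⟨hxI, ?_⟩
        rcases not_and_or.1 hcon with h' | h'
        · exact Or.inl (not_lt.1 h')
        · exact Or.inr (not_lt.1 h')
    have hnb : (𝓝[Ioo (0:ℝ) q] q).NeBot := by
      apply mem_closure_iff_nhdsWithin_neBot.1
      rw [closure_Ioo hq0.ne]
      exact ⟨hq0.le, le_rfl⟩
    have hIooq : Ioo (0:ℝ) q ⊆ Icc 0 s₀ := fun x hx => ⟨hx.1.le, hx.2.le.trans hqmem.2⟩
    have hqIcc : q ∈ Icc (0:ℝ) s₀ := ⟨hq0.le, hqmem.2⟩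
    haveI := hnb
    have hrle : r₂ q ≤ r₁ q := by
      have hcw : ContinuousWithinAt (fun s => r₁ s - r₂ s) (Ioo (0:ℝ) q) q :=
        (((hr₁c.mono hIccM₁s).sub (hr₂c.mono hIccM₂s)) q hqIcc).mono hIooq
      have hge : (0:ℝ) ≤ r₁ q - r₂ q :=
        ge_of_tendsto hcw
          (eventually_nhdsWithin_of_forall (fun x hx => sub_nonneg.2 (hbelow x hx).1.le))
      linarith
    have hwle : u₁' (r₁ q) ≤ u₂' (r₂ q) := by
      have hcw : ContinuousWithinAt (fun s => u₂' (r₂ s) - u₁' (r₁ s)) (Ioo (0:ℝ) q) q :=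
        (hwcont q hqIcc).mono hIooq
      have hge : (0:ℝ) ≤ u₂' (r₂ q) - u₁' (r₁ q) :=
        ge_of_tendsto hcw
          (eventually_nhdsWithin_of_forall (fun x hx => sub_nonneg.2 (hbelow x hx).2.le))
      linarith
    have hrstrict : r₂ q < r₁ q := by
      rcases lt_or_eq_of_le hrle with h' | h'
      · exact h'
      exfalso
      have hg := hgmono q ⟨hq0, hqmem.2⟩ (fun x hx => (hbelow x hx).2)
      have h2 := hg (left_mem_Icc.2 hq0.le) (right_mem_Icc.2 hq0.le) hq0
      simp only [hr₁0, hr₂0] at h2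
      linarith
    rcases hqT.2 with hcase | hcase
    · exact absurd hrstrict (not_lt.2 hcase)
    · have hweq : u₁' (r₁ q) = u₂' (r₂ q) := le_antisymm hwle hcase
      have hVq := hV q hqIcc
      rw [← hweq] at hVq
      have hP : 0 < (u₁' (r₁ q))^2 + 2 * Fint f q := hE₁ q (hIccM₁s hqIcc)
      have hk : r₁ q ^ (2*(n-1)) ≤ r₂ q ^ (2*(n-1)) := le_of_mul_le_mul_right hVq hP
      have har₁ : (0:ℝ) ≤ r₁ q := le_trans ha.le (hr₁mem q (hIccM₁s hqIcc)).1.1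
      have har₂ : (0:ℝ) ≤ r₂ q := le_trans ha.le (hr₂mem q (hIccM₂s hqIcc)).1.1
      have hkne : 2*(n-1) ≠ 0 := by omega
      have hle := (pow_le_pow_iff_left₀ har₁ har₂ hkne).1 hk
      exact absurd hle (not_le.2 hrstrict)
  intro s hs
  by_cases hsδ : s ≤ δ
  · exact hinit s ⟨hs.1, hsδ⟩
  · push_neg at hsδ
    have hsT : s ∉ T := by rw [hTempty]; exact notMem_empty s
    by_contra hcon
    apply hsT
    refine ⟨⟨hsδ.le, hs.2⟩, ?_⟩
    rcases not_and_or.1 hcon with h' | h'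
    · exact Or.inl (not_lt.1 h')
    · exact Or.inr (not_lt.1 h')
end

section
/- Assume f satisfies (f1) and (f2), let 0 < a < b < ∞, and let u₁ and u₂ be two positive solutions of (R) with 0 < u₁'(a) < u₂'(a). Then r₁(β)^{n−1}·u₁'(r₁(β)) < r₂(β)^{n−1}·u₂'(r₂(β)) (this quantity equals rᵢ(β)^{n−1}/rᵢ'(β)); moreover, if β > 0 then r₁(s) > r₂(s) for all s ∈ (0, β]. -/
open Set Filter MeasureTheory
open Topology

namespace StepOneAux

/-! ### Facts about the primitive `Fint` -/

lemma fint_intervalIntegrable {f : ℝ → ℝ} (hf : ContinuousOn f (Ici 0))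
    {x y : ℝ} (hx : 0 ≤ x) (hy : 0 ≤ y) : IntervalIntegrable f volume x y := by
  apply ContinuousOn.intervalIntegrable
  apply hf.mono
  intro t ht
  rcases le_total x y with h | h
  · rw [uIcc_of_le h] at ht; exact le_trans hx ht.1
  · rw [uIcc_of_ge h] at ht; exact le_trans hy ht.1

lemma fint_hasDerivAt {f : ℝ → ℝ} (hf : ContinuousOn f (Ici 0)) {s : ℝ} (hs : 0 < s) :
    HasDerivAt (Fint f) (f s) s := by
  have h1 : IntervalIntegrable f volume 0 s := fint_intervalIntegrable hf le_rfl hs.le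
  have hmeas : StronglyMeasurableAtFilter f (𝓝 s) volume :=
    (hf.mono Ioi_subset_Ici_self).stronglyMeasurableAtFilter isOpen_Ioi s hs
  have hc : ContinuousAt f s := hf.continuousAt (Ici_mem_nhds hs)
  exact intervalIntegral.integral_hasDerivAt_right h1 hmeas hc

lemma fint_continuousOn {f : ℝ → ℝ} (hf : ContinuousOn f (Ici 0)) {T : ℝ} (hT : 0 ≤ T) :
    ContinuousOn (Fint f) (Icc 0 T) := by
  have hint : IntegrableOn f (uIcc 0 T) volume := by
    rw [uIcc_of_le hT]
    exact (hf.mono (Icc_subset_Ici_self)).integrableOn_compact isCompact_Icc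
  have := intervalIntegral.continuousOn_primitive_interval (μ := volume) (a := (0:ℝ)) (b := T) hint
  rw [uIcc_of_le hT] at this
  exact this

lemma fint_zero (f : ℝ → ℝ) : Fint f 0 = 0 := intervalIntegral.integral_same

lemma fint_nonpos {f : ℝ → ℝ} (hf : ContinuousOn f (Ici 0)) {β B : ℝ}
    (hBβ : B < β) (hfle : ∀ s ∈ Icc (0:ℝ) B, f s ≤ 0)
    (hfpos : ∀ s, B < s → 0 < f s) (hFβ : Fint f β = 0) :
    ∀ s ∈ Icc (0:ℝ) β, Fint f s ≤ 0 := by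
  intro s hs
  by_cases hsB : s ≤ B
  · have h0 : 0 ≤ ∫ t in (0:ℝ)..s, (fun t => -f t) t := by
      apply intervalIntegral.integral_nonneg hs.1
      intro t ht
      simp only [neg_nonneg]
      exact hfle t ⟨ht.1, le_trans ht.2 hsB⟩
    have : (∫ t in (0:ℝ)..s, -f t) = - ∫ t in (0:ℝ)..s, f t := by
      simpa using intervalIntegral.integral_neg (f := f) (a := (0:ℝ)) (b := s)
    rw [this] at h0
    simp only [Fint]
    linarith
  · push_neg at hsB
    have hint1 : IntervalIntegrable f volume 0 s := fint_intervalIntegrable hf le_rfl hs.1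
    have hint2 : IntervalIntegrable f volume s β := fint_intervalIntegrable hf hs.1 (hs.1.trans hs.2)
    have hsplit : (∫ t in (0:ℝ)..s, f t) + ∫ t in s..β, f t = ∫ t in (0:ℝ)..β, f t :=
      intervalIntegral.integral_add_adjacent_intervals hint1 hint2
    have h2 : 0 ≤ ∫ t in s..β, f t := by
      apply intervalIntegral.integral_nonneg hs.2
      intro t ht
      exact (hfpos t (lt_of_lt_of_le hsB ht.1)).le
    have hFβ' : (∫ t in (0:ℝ)..β, f t) = 0 := hFβ
    simp only [Fint]
    linarith

lemma fint_pos_of_gt {f : ℝ → ℝ} (hf : ContinuousOn f (Ici 0)) {β B M : ℝ}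
    (hB : 0 ≤ B) (hBβ : B < β) (hfpos : ∀ s, B < s → 0 < f s) (hFβ : Fint f β = 0)
    (hM : β < M) : 0 < Fint f M := by
  have hβ0 : 0 < β := lt_of_le_of_lt hB hBβ
  have hint1 : IntervalIntegrable f volume 0 β := fint_intervalIntegrable hf le_rfl hβ0.le
  have hint2 : IntervalIntegrable f volume β M := fint_intervalIntegrable hf hβ0.le (hβ0.le.trans hM.le)
  have hsplit : (∫ t in (0:ℝ)..β, f t) + ∫ t in β..M, f t = ∫ t in (0:ℝ)..M, f t :=
    intervalIntegral.integral_add_adjacent_intervals hint1 hint2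
  have hpos : 0 < ∫ t in β..M, f t :=
    intervalIntegral.intervalIntegral_pos_of_pos_on hint2 (fun x hx => hfpos x (hBβ.trans hx.1)) hM
  have hFβ' : (∫ t in (0:ℝ)..β, f t) = 0 := hFβ
  simp only [Fint]
  linarith


/-! ### Facts about the increasing branch and its inverse -/

section Branch

variable {n : ℕ} {a b c M : ℝ} {f u u' r : ℝ → ℝ}

lemma u_strictMono (hc : c ∈ Ioo a b)
    (hcont : ContinuousOn u (Icc a b))
    (hderiv : ∀ x ∈ Ioo a b, HasDerivAt u (u' x) x)
    (hup : ∀ x ∈ Ico a c, 0 < u' x) :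
    StrictMonoOn u (Icc a c) := by
  apply strictMonoOn_of_deriv_pos (convex_Icc a c)
    (hcont.mono (Icc_subset_Icc le_rfl hc.2.le))
  intro x hx
  rw [interior_Icc] at hx
  have hx' : x ∈ Ioo a b := ⟨hx.1, hx.2.trans hc.2⟩
  rw [(hderiv x hx').deriv]
  exact hup x ⟨hx.1.le, hx.2⟩

lemma u_mem_Icc (hc : c ∈ Ioo a b) (hM : M = u c) (hua : u a = 0)
    (hsm : StrictMonoOn u (Icc a c)) :
    ∀ y ∈ Icc a c, u y ∈ Icc 0 M := by
  intro y hy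
  have hac : a ≤ c := hc.1.le.trans hc.2.le |>.trans (le_refl b) |> fun _ => le_of_lt (lt_of_le_of_lt hy.1 (lt_of_le_of_lt hy.2 hc.2)) |> fun _ => hy.1.trans hy.2
  constructor
  · rw [← hua]
    exact hsm.monotoneOn ⟨le_rfl, hac⟩ hy hy.1
  · rw [hM]
    exact hsm.monotoneOn hy ⟨hac, le_rfl⟩ hy.2

lemma r_zero (hc : c ∈ Ioo a b) (hM0 : 0 < M) (hua : u a = 0)
    (hpos : ∀ x ∈ Ioo a b, 0 < u x)
    (hrmem : ∀ s ∈ Icc (0:ℝ) M, r s ∈ Icc a c ∧ u (r s) = s) :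
    r 0 = a := by
  obtain ⟨hmem, hval⟩ := hrmem 0 ⟨le_rfl, hM0.le⟩
  by_contra hne
  have h1 : a < r 0 := lt_of_le_of_ne hmem.1 (Ne.symm hne)
  have h2 : 0 < u (r 0) := hpos _ ⟨h1, lt_of_le_of_lt hmem.2 hc.2⟩
  rw [hval] at h2
  exact lt_irrefl 0 h2

lemma r_top (hc : c ∈ Ioo a b) (hM : M = u c) (hM0 : 0 < M)
    (hsm : StrictMonoOn u (Icc a c))
    (hrmem : ∀ s ∈ Icc (0:ℝ) M, r s ∈ Icc a c ∧ u (r s) = s) :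
    r M = c := by
  obtain ⟨hmem, hval⟩ := hrmem M ⟨hM0.le, le_rfl⟩
  have hac : a ≤ c := hmem.1.trans hmem.2
  apply hsm.injOn hmem ⟨hac, le_rfl⟩
  rw [hval, hM]

lemma r_strictMono (hsm : StrictMonoOn u (Icc a c))
    (hrmem : ∀ s ∈ Icc (0:ℝ) M, r s ∈ Icc a c ∧ u (r s) = s) :
    StrictMonoOn r (Icc 0 M) := by
  intro s hs t ht hst
  by_contra hle
  push_neg at hle
  have h1 := hrmem s hs
  have h2 := hrmem t ht
  have : u (r t) ≤ u (r s) := hsm.monotoneOn h2.1 h1.1 hle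
  rw [h1.2, h2.2] at this
  exact absurd hst (not_lt.2 this)

lemma r_mem_Ioo (hc : c ∈ Ioo a b) (hM : M = u c)
    (hua : u a = 0)
    (hrmem : ∀ s ∈ Icc (0:ℝ) M, r s ∈ Icc a c ∧ u (r s) = s)
    {s : ℝ} (hs : s ∈ Ioo 0 M) :
    r s ∈ Ioo a c := by
  obtain ⟨hmem, hval⟩ := hrmem s ⟨hs.1.le, hs.2.le⟩
  constructor
  · rcases eq_or_lt_of_le hmem.1 with h | h
    · exfalso; rw [← h, hua] at hval; exact absurd hval.symm (ne_of_gt hs.1)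
    · exact h
  · rcases eq_or_lt_of_le hmem.2 with h | h
    · exfalso; rw [h, ← hM] at hval; exact absurd hval (ne_of_gt hs.2)
    · exact h

lemma r_exists_right (hc : c ∈ Ioo a b) (hM : M = u c) (hM0 : 0 < M) (hua : u a = 0)
    (hsm : StrictMonoOn u (Icc a c)) (hsmr : StrictMonoOn r (Icc 0 M))
    (hrmem : ∀ s ∈ Icc (0:ℝ) M, r s ∈ Icc a c ∧ u (r s) = s)
    (hrinv : ∀ x ∈ Icc a c, r (u x) = x) :
    ∀ s₀ ∈ Ico (0:ℝ) M, ∀ y, y > r s₀ → ∃ t ∈ Icc 0 M, r t ∈ Ioc (r s₀) y := by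
  intro s₀ hs₀ y hy
  have hrM : r M = c := r_top hc hM hM0 hsm hrmem
  have hrs₀c : r s₀ < c := by
    rw [← hrM]
    exact hsmr ⟨hs₀.1, hs₀.2.le⟩ ⟨hM0.le, le_rfl⟩ hs₀.2
  by_cases hyc : c ≤ y
  · exact ⟨M, ⟨hM0.le, le_rfl⟩, by rw [hrM]; exact ⟨hrs₀c, hyc⟩⟩
  · push_neg at hyc
    have hya : a < y := lt_of_le_of_lt (hrmem s₀ ⟨hs₀.1, hs₀.2.le⟩).1.1 hy
    have hymem : y ∈ Icc a c := ⟨hya.le, hyc.le⟩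
    exact ⟨u y, u_mem_Icc hc hM hua hsm y hymem, by rw [hrinv y hymem]; exact ⟨hy, le_rfl⟩⟩

lemma r_exists_left (hc : c ∈ Ioo a b) (hM : M = u c) (hM0 : 0 < M) (hua : u a = 0)
    (hsm : StrictMonoOn u (Icc a c)) (hsmr : StrictMonoOn r (Icc 0 M))
    (hrmem : ∀ s ∈ Icc (0:ℝ) M, r s ∈ Icc a c ∧ u (r s) = s)
    (hrinv : ∀ x ∈ Icc a c, r (u x) = x) :
    ∀ s₀ ∈ Ioc (0:ℝ) M, ∀ y, y < r s₀ → ∃ t ∈ Icc 0 M, r t ∈ Ico y (r s₀) := by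
  intro s₀ hs₀ y hy
  have hpos' : ∀ x ∈ Ioo a b, 0 < u x → True := fun _ _ _ => trivial
  have hr0 : r 0 = a := by
    obtain ⟨hmem, hval⟩ := hrmem 0 ⟨le_rfl, hM0.le⟩
    apply hsm.injOn hmem ⟨le_rfl, hmem.1.trans hmem.2⟩
    rw [hval, hua]
  have har : a < r s₀ := by
    rw [← hr0]
    exact hsmr ⟨le_rfl, hM0.le⟩ ⟨hs₀.1.le, hs₀.2⟩ hs₀.1
  by_cases hya : y ≤ a
  · exact ⟨0, ⟨le_rfl, hM0.le⟩, by rw [hr0]; exact ⟨hya, har⟩⟩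
  · push_neg at hya
    have hyc : y ≤ c := le_of_lt (lt_of_lt_of_le hy (hrmem s₀ ⟨hs₀.1.le, hs₀.2⟩).1.2)
    have hymem : y ∈ Icc a c := ⟨hya.le, hyc⟩
    exact ⟨u y, u_mem_Icc hc hM hua hsm y hymem, by rw [hrinv y hymem]; exact ⟨le_rfl, hy⟩⟩

lemma r_continuousAt (hc : c ∈ Ioo a b) (hM : M = u c) (hM0 : 0 < M) (hua : u a = 0)
    (hsm : StrictMonoOn u (Icc a c)) (hsmr : StrictMonoOn r (Icc 0 M))
    (hrmem : ∀ s ∈ Icc (0:ℝ) M, r s ∈ Icc a c ∧ u (r s) = s)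
    (hrinv : ∀ x ∈ Icc a c, r (u x) = x)
    {s : ℝ} (hs : s ∈ Ioo 0 M) : ContinuousAt r s := by
  apply hsmr.continuousAt_of_exists_between (Icc_mem_nhds hs.1 hs.2)
  · intro y hy
    obtain ⟨t, ht, hmem⟩ := r_exists_left hc hM hM0 hua hsm hsmr hrmem hrinv s ⟨hs.1, hs.2.le⟩ y hy
    exact ⟨t, ht, hmem⟩
  · intro y hy
    obtain ⟨t, ht, hmem⟩ := r_exists_right hc hM hM0 hua hsm hsmr hrmem hrinv s ⟨hs.1.le, hs.2⟩ y hy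
    exact ⟨t, ht, hmem⟩

lemma r_continuousOn (hc : c ∈ Ioo a b) (hM : M = u c) (hM0 : 0 < M) (hua : u a = 0)
    (hsm : StrictMonoOn u (Icc a c)) (hsmr : StrictMonoOn r (Icc 0 M))
    (hrmem : ∀ s ∈ Icc (0:ℝ) M, r s ∈ Icc a c ∧ u (r s) = s)
    (hrinv : ∀ x ∈ Icc a c, r (u x) = x) :
    ContinuousOn r (Icc 0 M) := by
  intro s₀ hs₀
  rcases eq_or_lt_of_le hs₀.1 with h0 | h0
  · -- s₀ = 0
    subst h0
    have h := hsmr.continuousWithinAt_right_of_exists_between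
      (Icc_mem_nhdsGE_of_mem ⟨le_rfl, hM0⟩)
      (fun y hy => r_exists_right hc hM hM0 hua hsm hsmr hrmem hrinv 0 ⟨le_rfl, hM0⟩ y hy)
    exact h.mono Icc_subset_Ici_self
  rcases eq_or_lt_of_le hs₀.2 with hM' | hM'
  · -- s₀ = M
    rw [hM']
    have h := hsmr.continuousWithinAt_left_of_exists_between
      (Icc_mem_nhdsLE_of_mem ⟨hM0, le_rfl⟩)
      (fun y hy => r_exists_left hc hM hM0 hua hsm hsmr hrmem hrinv M ⟨hM0, le_rfl⟩ y hy)
    exact h.mono Icc_subset_Iic_self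
  · exact (r_continuousAt hc hM hM0 hua hsm hsmr hrmem hrinv ⟨h0, hM'⟩).continuousWithinAt

lemma r_hasDerivAt (hc : c ∈ Ioo a b) (hM : M = u c) (hM0 : 0 < M) (hua : u a = 0)
    (hderiv : ∀ x ∈ Ioo a b, HasDerivAt u (u' x) x)
    (hup : ∀ x ∈ Ico a c, 0 < u' x)
    (hsm : StrictMonoOn u (Icc a c)) (hsmr : StrictMonoOn r (Icc 0 M))
    (hrmem : ∀ s ∈ Icc (0:ℝ) M, r s ∈ Icc a c ∧ u (r s) = s)
    (hrinv : ∀ x ∈ Icc a c, r (u x) = x)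
    {s : ℝ} (hs : s ∈ Ioo 0 M) : HasDerivAt r (u' (r s))⁻¹ s := by
  have hca : ContinuousAt r s := r_continuousAt hc hM hM0 hua hsm hsmr hrmem hrinv hs
  have hrIoo : r s ∈ Ioo a c := r_mem_Ioo hc hM hua hrmem hs
  have hrab : r s ∈ Ioo a b := ⟨hrIoo.1, hrIoo.2.trans hc.2⟩
  have hne : u' (r s) ≠ 0 := ne_of_gt (hup (r s) ⟨hrIoo.1.le, hrIoo.2⟩)
  have hev : ∀ᶠ y in 𝓝 s, u (r y) = y := by
    filter_upwards [isOpen_Ioo.mem_nhds hs] with y hy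
    exact (hrmem y ⟨hy.1.le, hy.2.le⟩).2
  exact HasDerivAt.of_local_left_inverse hca (hderiv (r s) hrab) hne hev


lemma H_hasDerivAt (hn : 2 ≤ n) (ha : 0 < a) (hfc : ContinuousOn f (Ici 0))
    (hc : c ∈ Ioo a b) (hM : M = u c) (hM0 : 0 < M) (hua : u a = 0)
    (hderiv : ∀ x ∈ Ioo a b, HasDerivAt u (u' x) x)
    (hu'deriv : ∀ x ∈ Ioo a b, HasDerivAt u' (-(((n : ℝ) - 1) / x * u' x + f (u x))) x)
    (hup : ∀ x ∈ Ico a c, 0 < u' x)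
    (hsm : StrictMonoOn u (Icc a c)) (hsmr : StrictMonoOn r (Icc 0 M))
    (hrmem : ∀ s ∈ Icc (0:ℝ) M, r s ∈ Icc a c ∧ u (r s) = s)
    (hrinv : ∀ x ∈ Icc a c, r (u x) = x)
    {s : ℝ} (hs : s ∈ Ioo 0 M) :
    HasDerivAt (fun t => (r t)^(2*(n-1)) * ((1/2 : ℝ) * (u' (r t))^2 + Fint f t))
      (2*((n:ℝ)-1) * Fint f s * (r s)^(2*(n-1)-1) * (u' (r s))⁻¹) s := by
  have hr' : HasDerivAt r (u' (r s))⁻¹ s :=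
    r_hasDerivAt hc hM hM0 hua hderiv hup hsm hsmr hrmem hrinv hs
  have hrIoo : r s ∈ Ioo a c := r_mem_Ioo hc hM hua hrmem hs
  have hrab : r s ∈ Ioo a b := ⟨hrIoo.1, hrIoo.2.trans hc.2⟩
  have hppos : 0 < u' (r s) := hup _ ⟨hrIoo.1.le, hrIoo.2⟩
  have hrpos : 0 < r s := ha.trans hrIoo.1
  have hfu : f (u (r s)) = f s := by rw [(hrmem s ⟨hs.1.le, hs.2.le⟩).2]
  have h1 : HasDerivAt (fun t => u' (r t))
      (-(((n : ℝ) - 1) / (r s) * u' (r s) + f s) * (u' (r s))⁻¹) s := by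
    have h := (hu'deriv (r s) hrab).comp s hr'
    rw [hfu] at h
    exact h
  have h2 : HasDerivAt (fun t => (1/2 : ℝ) * (u' (r t))^2)
      ((1/2 : ℝ) * (((2:ℕ):ℝ) * (u' (r s))^(2-1) *
        (-(((n : ℝ) - 1) / (r s) * u' (r s) + f s) * (u' (r s))⁻¹))) s :=
    (h1.pow 2).const_mul (1/2)
  have h3 := h2.fun_add (fint_hasDerivAt hfc hs.1)
  have h4 : HasDerivAt (fun t => (r t)^(2*(n-1)))
      (((2*(n-1) : ℕ):ℝ) * (r s)^(2*(n-1)-1) * (u' (r s))⁻¹) s := hr'.pow _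
  have h5 := h4.fun_mul h3
  refine h5.congr_deriv ?_
  obtain ⟨k, hk⟩ : ∃ k, 2*(n-1) = k+1 := ⟨2*(n-1)-1, by omega⟩
  have hcast : (k:ℝ)+1 = 2*((n:ℝ)-1) := by
    have h := congrArg (Nat.cast : ℕ → ℝ) hk
    push_cast [Nat.cast_sub (show 1 ≤ n by omega)] at h
    linarith
  rw [hk]
  simp only [Nat.add_sub_cancel, pow_succ]
  have hp : u' (r s) ≠ 0 := hppos.ne'
  have hρ : r s ≠ 0 := hrpos.ne'
  push_cast
  rw [hcast]
  field_simp
  ring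

lemma energy_antitone (hn : 2 ≤ n) (ha : 0 < a) (hfc : ContinuousOn f (Ici 0))
    (hderiv : ∀ x ∈ Ioo a b, HasDerivAt u (u' x) x)
    (hu'deriv : ∀ x ∈ Ioo a b, HasDerivAt u' (-(((n : ℝ) - 1) / x * u' x + f (u x))) x)
    (hpos : ∀ x ∈ Ioo a b, 0 < u x)
    {ρ : ℝ} (hρ : ρ ∈ Ioo a b) (hcb : c ∈ Ioo a b) :
    AntitoneOn (fun x => (1/2 : ℝ) * (u' x)^2 + Fint f (u x)) (Icc ρ c) := by
  have hW : ∀ x ∈ Icc ρ c, HasDerivAt (fun y => (1/2 : ℝ) * (u' y)^2 + Fint f (u y))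
      ((1/2 : ℝ) * (((2:ℕ):ℝ) * (u' x)^(2-1) * (-(((n : ℝ) - 1) / x * u' x + f (u x))))
        + f (u x) * u' x) x := by
    intro x hx
    have hxab : x ∈ Ioo a b := ⟨lt_of_lt_of_le hρ.1 hx.1, lt_of_le_of_lt hx.2 hcb.2⟩
    exact (((hu'deriv x hxab).pow 2).const_mul (1/2)).add
      ((fint_hasDerivAt hfc (hpos x hxab)).comp x (hderiv x hxab))
  apply antitoneOn_of_deriv_nonpos (convex_Icc ρ c)
  · exact fun x hx => (hW x hx).continuousAt.continuousWithinAt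
  · intro x hx
    rw [interior_Icc] at hx
    exact (hW x (Ioo_subset_Icc_self hx)).differentiableAt.differentiableWithinAt
  · intro x hx
    rw [interior_Icc] at hx
    rw [(hW x (Ioo_subset_Icc_self hx)).deriv]
    have hx0 : 0 < x := ha.trans (lt_of_lt_of_le hρ.1 hx.1.le)
    have hn1 : (0:ℝ) ≤ (n:ℝ) - 1 := by
      have : (1:ℝ) ≤ (n:ℝ) := by exact_mod_cast (by omega : 1 ≤ n)
      linarith
    have heq : (1/2 : ℝ) * (((2:ℕ):ℝ) * (u' x)^(2-1) * (-(((n : ℝ) - 1) / x * u' x + f (u x))))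
        + f (u x) * u' x = -(((n:ℝ)-1)/x * (u' x)^2) := by push_cast; ring
    rw [heq]
    have h2 : 0 ≤ ((n:ℝ)-1)/x * (u' x)^2 := mul_nonneg (div_nonneg hn1 hx0.le) (sq_nonneg _)
    linarith

/-- Core estimate: if the matched-level speed ordering holds on `(0,σ)`, then the radii are
strictly ordered on `(0,σ]` and the weighted-energy difference at `σ` dominates its value at `0`. -/
lemma main_estimate
    {n : ℕ} {a b c₁ c₂ M₁ M₂ β : ℝ} {f u₁ u₁' u₂ u₂' r₁ r₂ : ℝ → ℝ}
    (hn : 2 ≤ n) (ha : 0 < a)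
    (hfc : ContinuousOn f (Ici 0))
    (hc₁ : c₁ ∈ Ioo a b) (hc₂ : c₂ ∈ Ioo a b)
    (hu₁d : ∀ x ∈ Ioo a b, HasDerivAt u₁ (u₁' x) x)
    (hu₁'c : ContinuousOn u₁' (Icc a b))
    (hu₁'d : ∀ x ∈ Ioo a b, HasDerivAt u₁' (-(((n : ℝ) - 1) / x * u₁' x + f (u₁ x))) x)
    (hu₁a : u₁ a = 0)
    (hc₁up : ∀ x ∈ Ico a c₁, 0 < u₁' x)
    (hM₁ : M₁ = u₁ c₁) (hM₁0 : 0 < M₁)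
    (hsm₁ : StrictMonoOn u₁ (Icc a c₁)) (hsmr₁ : StrictMonoOn r₁ (Icc 0 M₁))
    (hr₁mem : ∀ s ∈ Icc (0:ℝ) M₁, r₁ s ∈ Icc a c₁ ∧ u₁ (r₁ s) = s)
    (hr₁inv : ∀ x ∈ Icc a c₁, r₁ (u₁ x) = x)
    (hr₁0 : r₁ 0 = a) (hr₁cont : ContinuousOn r₁ (Icc 0 M₁))
    (hu₂d : ∀ x ∈ Ioo a b, HasDerivAt u₂ (u₂' x) x)
    (hu₂'c : ContinuousOn u₂' (Icc a b))
    (hu₂'d : ∀ x ∈ Ioo a b, HasDerivAt u₂' (-(((n : ℝ) - 1) / x * u₂' x + f (u₂ x))) x)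
    (hu₂a : u₂ a = 0)
    (hc₂up : ∀ x ∈ Ico a c₂, 0 < u₂' x)
    (hM₂ : M₂ = u₂ c₂) (hM₂0 : 0 < M₂)
    (hsm₂ : StrictMonoOn u₂ (Icc a c₂)) (hsmr₂ : StrictMonoOn r₂ (Icc 0 M₂))
    (hr₂mem : ∀ s ∈ Icc (0:ℝ) M₂, r₂ s ∈ Icc a c₂ ∧ u₂ (r₂ s) = s)
    (hr₂inv : ∀ x ∈ Icc a c₂, r₂ (u₂ x) = x)
    (hr₂0 : r₂ 0 = a) (hr₂cont : ContinuousOn r₂ (Icc 0 M₂))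
    (hβ0 : 0 < β) (hβM₁ : β < M₁) (hβM₂ : β < M₂)
    (hFnonpos : ∀ s ∈ Icc (0:ℝ) β, Fint f s ≤ 0)
    {σ : ℝ} (hσ0 : 0 < σ) (hσβ : σ ≤ β)
    (hPpos : ∀ s ∈ Ioo (0:ℝ) σ, u₁' (r₁ s) < u₂' (r₂ s)) :
    (∀ s ∈ Ioc (0:ℝ) σ, r₂ s < r₁ s) ∧
    a^(2*(n-1)) * ((1/2 : ℝ)*(u₂' a)^2) - a^(2*(n-1)) * ((1/2 : ℝ)*(u₁' a)^2)
      ≤ (r₂ σ)^(2*(n-1)) * ((1/2 : ℝ)*(u₂' (r₂ σ))^2 + Fint f σ)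
        - (r₁ σ)^(2*(n-1)) * ((1/2 : ℝ)*(u₁' (r₁ σ))^2 + Fint f σ) := by
  have hσM₁ : σ ≤ M₁ := hσβ.trans hβM₁.le
  have hσM₂ : σ ≤ M₂ := hσβ.trans hβM₂.le
  have hsubσ₁ : Icc (0:ℝ) σ ⊆ Icc 0 M₁ := Icc_subset_Icc le_rfl hσM₁
  have hsubσ₂ : Icc (0:ℝ) σ ⊆ Icc 0 M₂ := Icc_subset_Icc le_rfl hσM₂
  have hIooσ₁ : ∀ {s : ℝ}, s ∈ Ioo (0:ℝ) σ → s ∈ Ioo (0:ℝ) M₁ :=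
    fun hs => ⟨hs.1, lt_of_lt_of_le hs.2 hσM₁⟩
  have hIooσ₂ : ∀ {s : ℝ}, s ∈ Ioo (0:ℝ) σ → s ∈ Ioo (0:ℝ) M₂ :=
    fun hs => ⟨hs.1, lt_of_lt_of_le hs.2 hσM₂⟩
  have hp₁ : ∀ s ∈ Icc (0:ℝ) σ, 0 < u₁' (r₁ s) := by
    intro s hs
    apply hc₁up
    rcases eq_or_lt_of_le hs.1 with h | h
    · rw [← h, hr₁0]; exact ⟨le_rfl, hc₁.1⟩
    · have hmem := r_mem_Ioo hc₁ hM₁ hu₁a hr₁mem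
        (⟨h, lt_of_le_of_lt hs.2 (lt_of_le_of_lt hσβ hβM₁)⟩ : s ∈ Ioo (0:ℝ) M₁)
      exact ⟨hmem.1.le, hmem.2⟩
  have hp₂ : ∀ s ∈ Icc (0:ℝ) σ, 0 < u₂' (r₂ s) := by
    intro s hs
    apply hc₂up
    rcases eq_or_lt_of_le hs.1 with h | h
    · rw [← h, hr₂0]; exact ⟨le_rfl, hc₂.1⟩
    · have hmem := r_mem_Ioo hc₂ hM₂ hu₂a hr₂mem
        (⟨h, lt_of_le_of_lt hs.2 (lt_of_le_of_lt hσβ hβM₂)⟩ : s ∈ Ioo (0:ℝ) M₂)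
      exact ⟨hmem.1.le, hmem.2⟩
  have hrd₁ : ∀ s ∈ Ioo (0:ℝ) σ, HasDerivAt r₁ (u₁' (r₁ s))⁻¹ s := fun s hs =>
    r_hasDerivAt hc₁ hM₁ hM₁0 hu₁a hu₁d hc₁up hsm₁ hsmr₁ hr₁mem hr₁inv (hIooσ₁ hs)
  have hrd₂ : ∀ s ∈ Ioo (0:ℝ) σ, HasDerivAt r₂ (u₂' (r₂ s))⁻¹ s := fun s hs =>
    r_hasDerivAt hc₂ hM₂ hM₂0 hu₂a hu₂d hc₂up hsm₂ hsmr₂ hr₂mem hr₂inv (hIooσ₂ hs)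
  -- the radii difference is strictly increasing
  have hDmono : StrictMonoOn (fun t => r₁ t - r₂ t) (Icc 0 σ) := by
    apply strictMonoOn_of_deriv_pos (convex_Icc 0 σ)
    · exact (hr₁cont.mono hsubσ₁).sub (hr₂cont.mono hsubσ₂)
    · intro x hx
      rw [interior_Icc] at hx
      rw [((hrd₁ x hx).fun_sub (hrd₂ x hx)).deriv]
      have h1 : 0 < u₁' (r₁ x) := hp₁ x (Ioo_subset_Icc_self hx)
      have h2 : u₁' (r₁ x) < u₂' (r₂ x) := hPpos x hx
      have h3 : (u₂' (r₂ x))⁻¹ < (u₁' (r₁ x))⁻¹ := by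
        apply inv_strictAnti₀ h1 h2
      linarith
  have hrlt : ∀ s ∈ Ioc (0:ℝ) σ, r₂ s < r₁ s := by
    intro s hs
    have h := hDmono (left_mem_Icc.2 hσ0.le) ⟨hs.1.le, hs.2⟩ hs.1
    simp only [hr₁0, hr₂0, sub_self] at h
    linarith
  refine ⟨hrlt, ?_⟩
  -- the weighted-energy difference is monotone
  have hHd₁ : ∀ s ∈ Ioo (0:ℝ) σ,
      HasDerivAt (fun t => (r₁ t)^(2*(n-1)) * ((1/2 : ℝ) * (u₁' (r₁ t))^2 + Fint f t))
        (2*((n:ℝ)-1) * Fint f s * (r₁ s)^(2*(n-1)-1) * (u₁' (r₁ s))⁻¹) s := fun s hs =>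
    H_hasDerivAt hn ha hfc hc₁ hM₁ hM₁0 hu₁a hu₁d hu₁'d hc₁up hsm₁ hsmr₁ hr₁mem hr₁inv (hIooσ₁ hs)
  have hHd₂ : ∀ s ∈ Ioo (0:ℝ) σ,
      HasDerivAt (fun t => (r₂ t)^(2*(n-1)) * ((1/2 : ℝ) * (u₂' (r₂ t))^2 + Fint f t))
        (2*((n:ℝ)-1) * Fint f s * (r₂ s)^(2*(n-1)-1) * (u₂' (r₂ s))⁻¹) s := fun s hs =>
    H_hasDerivAt hn ha hfc hc₂ hM₂ hM₂0 hu₂a hu₂d hu₂'d hc₂up hsm₂ hsmr₂ hr₂mem hr₂inv (hIooσ₂ hs)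
  have hFcont : ContinuousOn (Fint f) (Icc (0:ℝ) σ) := fint_continuousOn hfc hσ0.le
  have hHcont₁ : ContinuousOn
      (fun t => (r₁ t)^(2*(n-1)) * ((1/2 : ℝ) * (u₁' (r₁ t))^2 + Fint f t)) (Icc 0 σ) := by
    have hrc : ContinuousOn r₁ (Icc 0 σ) := hr₁cont.mono hsubσ₁
    have hmaps : MapsTo r₁ (Icc 0 σ) (Icc a b) := fun t ht =>
      Icc_subset_Icc le_rfl hc₁.2.le (hr₁mem t (hsubσ₁ ht)).1
    have hpc : ContinuousOn (fun t => u₁' (r₁ t)) (Icc 0 σ) := hu₁'c.comp hrc hmaps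
    exact (hrc.pow _).mul ((continuousOn_const.mul (hpc.pow 2)).add hFcont)
  have hHcont₂ : ContinuousOn
      (fun t => (r₂ t)^(2*(n-1)) * ((1/2 : ℝ) * (u₂' (r₂ t))^2 + Fint f t)) (Icc 0 σ) := by
    have hrc : ContinuousOn r₂ (Icc 0 σ) := hr₂cont.mono hsubσ₂
    have hmaps : MapsTo r₂ (Icc 0 σ) (Icc a b) := fun t ht =>
      Icc_subset_Icc le_rfl hc₂.2.le (hr₂mem t (hsubσ₂ ht)).1
    have hpc : ContinuousOn (fun t => u₂' (r₂ t)) (Icc 0 σ) := hu₂'c.comp hrc hmaps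
    exact (hrc.pow _).mul ((continuousOn_const.mul (hpc.pow 2)).add hFcont)
  have hHmono : MonotoneOn
      (fun t => (r₂ t)^(2*(n-1)) * ((1/2 : ℝ) * (u₂' (r₂ t))^2 + Fint f t)
        - (r₁ t)^(2*(n-1)) * ((1/2 : ℝ) * (u₁' (r₁ t))^2 + Fint f t)) (Icc 0 σ) := by
    apply monotoneOn_of_deriv_nonneg (convex_Icc 0 σ) (hHcont₂.sub hHcont₁)
    · intro x hx
      rw [interior_Icc] at hx
      exact ((hHd₂ x hx).sub (hHd₁ x hx)).differentiableAt.differentiableWithinAt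
    · intro x hx
      rw [interior_Icc] at hx
      rw [((hHd₂ x hx).sub (hHd₁ x hx)).deriv]
      have hr21 : r₂ x < r₁ x := hrlt x ⟨hx.1, hx.2.le⟩
      have hp1 : 0 < u₁' (r₁ x) := hp₁ x (Ioo_subset_Icc_self hx)
      have hp2 : 0 < u₂' (r₂ x) := hp₂ x (Ioo_subset_Icc_self hx)
      have hplt : u₁' (r₁ x) < u₂' (r₂ x) := hPpos x hx
      have hF : Fint f x ≤ 0 := hFnonpos x ⟨hx.1.le, hx.2.le.trans hσβ⟩
      have hr₂a : a ≤ r₂ x := (hr₂mem x (hsubσ₂ (Ioo_subset_Icc_self hx))).1.1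
      have hr₂pos : 0 < r₂ x := ha.trans_le hr₂a
      have hrpow : (r₂ x)^(2*(n-1)-1) ≤ (r₁ x)^(2*(n-1)-1) :=
        pow_le_pow_left₀ hr₂pos.le hr21.le _
      have hinv : (u₂' (r₂ x))⁻¹ ≤ (u₁' (r₁ x))⁻¹ := by
        apply inv_anti₀ hp1 hplt.le
      have hterm : (r₂ x)^(2*(n-1)-1) * (u₂' (r₂ x))⁻¹
          ≤ (r₁ x)^(2*(n-1)-1) * (u₁' (r₁ x))⁻¹ :=
        mul_le_mul hrpow hinv (inv_nonneg.2 hp2.le) (pow_nonneg (hr₂pos.trans hr21).le _)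
      have h2n : (0:ℝ) ≤ 2*((n:ℝ)-1) := by
        have : (1:ℝ) ≤ (n:ℝ) := by exact_mod_cast (by omega : 1 ≤ n)
        linarith
      have heq : 2*((n:ℝ)-1) * Fint f x * (r₂ x)^(2*(n-1)-1) * (u₂' (r₂ x))⁻¹
          - 2*((n:ℝ)-1) * Fint f x * (r₁ x)^(2*(n-1)-1) * (u₁' (r₁ x))⁻¹
          = 2*((n:ℝ)-1) * (Fint f x * ((r₂ x)^(2*(n-1)-1) * (u₂' (r₂ x))⁻¹
            - (r₁ x)^(2*(n-1)-1) * (u₁' (r₁ x))⁻¹)) := by ring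
      rw [heq]
      exact mul_nonneg h2n (by nlinarith [hF, hterm])
  have h := hHmono (left_mem_Icc.2 hσ0.le) (right_mem_Icc.2 hσ0.le) hσ0.le
  simp only [hr₁0, hr₂0, fint_zero, add_zero] at h
  linarith

end Branch

end StepOneAux

set_option maxHeartbeats 1000000 in
/-- Step one (Proposition 3.1): `r₁(β)^{n-1} u₁'(r₁(β)) < r₂(β)^{n-1} u₂'(r₂(β))`,
and if `β > 0` then `r₁ > r₂` on `(0, β]`. -/
theorem step_one
    (n : ℕ) (hn : 2 ≤ n) (f : ℝ → ℝ) (β B : ℝ)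
    (hf1 : CondF1 f) (hf2 : CondF2 f β B)
    (a b : ℝ) (ha : 0 < a) (hab : a < b)
    (u₁ u₁' u₂ u₂' : ℝ → ℝ)
    (h₁ : IsPosSolAnn n a b f u₁ u₁') (h₂ : IsPosSolAnn n a b f u₂ u₂')
    (hslope₁ : 0 < u₁' a) (hslope₁₂ : u₁' a < u₂' a)
    (c₁ c₂ : ℝ) (hc₁ : c₁ ∈ Ioo a b) (hc₂ : c₂ ∈ Ioo a b)
    (hc₁up : ∀ r ∈ Ico a c₁, 0 < u₁' r) (hc₁down : ∀ r ∈ Ioo c₁ b, u₁' r < 0)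
    (hc₂up : ∀ r ∈ Ico a c₂, 0 < u₂' r) (hc₂down : ∀ r ∈ Ioo c₂ b, u₂' r < 0)
    (M₁ M₂ : ℝ) (hM₁ : M₁ = u₁ c₁) (hM₂ : M₂ = u₂ c₂)
    (hβM₁ : β < M₁) (hβM₂ : β < M₂)
    (r₁ r₂ : ℝ → ℝ)
    (hr₁mem : ∀ s ∈ Icc (0:ℝ) M₁, r₁ s ∈ Icc a c₁ ∧ u₁ (r₁ s) = s)
    (hr₁inv : ∀ r ∈ Icc a c₁, r₁ (u₁ r) = r)
    (hr₂mem : ∀ s ∈ Icc (0:ℝ) M₂, r₂ s ∈ Icc a c₂ ∧ u₂ (r₂ s) = s)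
    (hr₂inv : ∀ r ∈ Icc a c₂, r₂ (u₂ r) = r)
    :
    (r₁ β) ^ (n - 1) * u₁' (r₁ β) < (r₂ β) ^ (n - 1) * u₂' (r₂ β) ∧
    (0 < β → ∀ s ∈ Ioc (0:ℝ) β, r₂ s < r₁ s) := by
  obtain ⟨hu₁c, hu₁dw, hu₁'c, hu₁d, hu₁'d, hu₁a, hu₁b, hu₁pos⟩ := h₁
  obtain ⟨hu₂c, hu₂dw, hu₂'c, hu₂d, hu₂'d, hu₂a, hu₂b, hu₂pos⟩ := h₂
  obtain ⟨hfc, -, -, -⟩ := hf1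
  have hsm₁ : StrictMonoOn u₁ (Icc a c₁) := StepOneAux.u_strictMono hc₁ hu₁c hu₁d hc₁up
  have hsm₂ : StrictMonoOn u₂ (Icc a c₂) := StepOneAux.u_strictMono hc₂ hu₂c hu₂d hc₂up
  have hM₁0 : 0 < M₁ := by rw [hM₁]; exact hu₁pos c₁ hc₁
  have hM₂0 : 0 < M₂ := by rw [hM₂]; exact hu₂pos c₂ hc₂
  have hsmr₁ : StrictMonoOn r₁ (Icc 0 M₁) := StepOneAux.r_strictMono hsm₁ hr₁mem
  have hsmr₂ : StrictMonoOn r₂ (Icc 0 M₂) := StepOneAux.r_strictMono hsm₂ hr₂mem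
  have hr₁0 : r₁ 0 = a := StepOneAux.r_zero hc₁ hM₁0 hu₁a hu₁pos hr₁mem
  have hr₂0 : r₂ 0 = a := StepOneAux.r_zero hc₂ hM₂0 hu₂a hu₂pos hr₂mem
  have hr₁cont : ContinuousOn r₁ (Icc 0 M₁) :=
    StepOneAux.r_continuousOn hc₁ hM₁ hM₁0 hu₁a hsm₁ hsmr₁ hr₁mem hr₁inv
  have hr₂cont : ContinuousOn r₂ (Icc 0 M₂) :=
    StepOneAux.r_continuousOn hc₂ hM₂ hM₂0 hu₂a hsm₂ hsmr₂ hr₂mem hr₂inv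
  rcases hf2 with ⟨hβz, hBz, hf00, hfposall⟩ | hf2b
  · -- the case β = 0
    subst hβz
    refine ⟨?_, fun h => absurd h (lt_irrefl 0)⟩
    rw [hr₁0, hr₂0]
    exact mul_lt_mul_of_pos_left hslope₁₂ (pow_pos ha _)
  · -- the case β > B > 0
    obtain ⟨hf00, hB0, hBβ, hfpos, hfle, -, hFβ⟩ := hf2b
    have hβ0 : 0 < β := hB0.trans hBβ
    have hFnonpos : ∀ s ∈ Icc (0:ℝ) β, Fint f s ≤ 0 :=
      StepOneAux.fint_nonpos hfc hBβ hfle hfpos hFβ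
    have hp₁β : ∀ s ∈ Icc (0:ℝ) β, 0 < u₁' (r₁ s) := by
      intro s hs
      apply hc₁up
      rcases eq_or_lt_of_le hs.1 with h | h
      · rw [← h, hr₁0]; exact ⟨le_rfl, hc₁.1⟩
      · have hmem := StepOneAux.r_mem_Ioo hc₁ hM₁ hu₁a hr₁mem
          (⟨h, lt_of_le_of_lt hs.2 hβM₁⟩ : s ∈ Ioo (0:ℝ) M₁)
        exact ⟨hmem.1.le, hmem.2⟩
    have hp₂β : ∀ s ∈ Icc (0:ℝ) β, 0 < u₂' (r₂ s) := by
      intro s hs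
      apply hc₂up
      rcases eq_or_lt_of_le hs.1 with h | h
      · rw [← h, hr₂0]; exact ⟨le_rfl, hc₂.1⟩
      · have hmem := StepOneAux.r_mem_Ioo hc₂ hM₂ hu₂a hr₂mem
          (⟨h, lt_of_le_of_lt hs.2 hβM₂⟩ : s ∈ Ioo (0:ℝ) M₂)
        exact ⟨hmem.1.le, hmem.2⟩
    have hA : (0:ℝ) < a^(2*(n-1)) * ((1/2 : ℝ)*(u₂' a)^2)
        - a^(2*(n-1)) * ((1/2 : ℝ)*(u₁' a)^2) := by
      have hd : (0:ℝ) < (1/2 : ℝ)*(u₂' a)^2 - (1/2 : ℝ)*(u₁' a)^2 := by nlinarith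
      have := mul_pos (pow_pos ha (2*(n-1))) hd
      nlinarith [this]
    -- the key claim : speeds at matched levels stay ordered on [0, β]
    have key : ∀ s ∈ Icc (0:ℝ) β, u₁' (r₁ s) < u₂' (r₂ s) := by
      by_contra hcon
      push_neg at hcon
      obtain ⟨s', hs', hle⟩ := hcon
      have hPcont : ContinuousOn (fun s => u₂' (r₂ s) - u₁' (r₁ s)) (Icc 0 β) := by
        have hrc₁ : ContinuousOn r₁ (Icc 0 β) := hr₁cont.mono (Icc_subset_Icc le_rfl hβM₁.le)
        have hrc₂ : ContinuousOn r₂ (Icc 0 β) := hr₂cont.mono (Icc_subset_Icc le_rfl hβM₂.le)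
        have hmaps₁ : MapsTo r₁ (Icc 0 β) (Icc a b) := fun t ht =>
          Icc_subset_Icc le_rfl hc₁.2.le (hr₁mem t (Icc_subset_Icc le_rfl hβM₁.le ht)).1
        have hmaps₂ : MapsTo r₂ (Icc 0 β) (Icc a b) := fun t ht =>
          Icc_subset_Icc le_rfl hc₂.2.le (hr₂mem t (Icc_subset_Icc le_rfl hβM₂.le ht)).1
        exact (hu₂'c.comp hrc₂ hmaps₂).sub (hu₁'c.comp hrc₁ hmaps₁)
      obtain ⟨s₀, hs₀S, hs₀min⟩ : ∃ s₀ ∈ {s ∈ Icc (0:ℝ) β | u₂' (r₂ s) - u₁' (r₁ s) ≤ 0},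
          ∀ x ∈ {s ∈ Icc (0:ℝ) β | u₂' (r₂ s) - u₁' (r₁ s) ≤ 0}, s₀ ≤ x := by
        have hSclosed : IsClosed {s ∈ Icc (0:ℝ) β | u₂' (r₂ s) - u₁' (r₁ s) ≤ 0} := by
          have hSeq : {s ∈ Icc (0:ℝ) β | u₂' (r₂ s) - u₁' (r₁ s) ≤ 0}
              = Icc (0:ℝ) β ∩ (fun s => u₂' (r₂ s) - u₁' (r₁ s)) ⁻¹' (Iic 0) := by
            ext x; simp [Set.mem_sep_iff, and_comm]
          rw [hSeq]
          exact hPcont.preimage_isClosed_of_isClosed isClosed_Icc isClosed_Iic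
        have hSne : Set.Nonempty {s ∈ Icc (0:ℝ) β | u₂' (r₂ s) - u₁' (r₁ s) ≤ 0} :=
          ⟨s', hs', by linarith⟩
        have hSbdd : BddBelow {s ∈ Icc (0:ℝ) β | u₂' (r₂ s) - u₁' (r₁ s) ≤ 0} :=
          ⟨0, fun x hx => hx.1.1⟩
        exact ⟨_, hSclosed.csInf_mem hSne hSbdd, fun x hx => csInf_le hSbdd hx⟩
      obtain ⟨hs₀Icc, hs₀P⟩ := hs₀S
      have hs₀0 : 0 < s₀ := by
        rcases eq_or_lt_of_le hs₀Icc.1 with h | h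
        · exfalso
          rw [← h, hr₁0, hr₂0] at hs₀P
          linarith
        · exact h
      have hPpos : ∀ s ∈ Ioo (0:ℝ) s₀, u₁' (r₁ s) < u₂' (r₂ s) := by
        intro s hs
        by_contra hle'
        push_neg at hle'
        have hmem : s ∈ {s ∈ Icc (0:ℝ) β | u₂' (r₂ s) - u₁' (r₁ s) ≤ 0} :=
          ⟨⟨hs.1.le, hs.2.le.trans hs₀Icc.2⟩, by linarith⟩
        exact absurd (hs₀min s hmem) (not_le.2 hs.2)
      obtain ⟨hrlt, hHle⟩ := StepOneAux.main_estimate hn ha hfc hc₁ hc₂ hu₁d hu₁'c hu₁'d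
        hu₁a hc₁up hM₁ hM₁0 hsm₁ hsmr₁ hr₁mem hr₁inv hr₁0 hr₁cont hu₂d hu₂'c hu₂'d
        hu₂a hc₂up hM₂ hM₂0 hsm₂ hsmr₂ hr₂mem hr₂inv hr₂0 hr₂cont hβ0 hβM₁ hβM₂
        hFnonpos hs₀0 hs₀Icc.2 hPpos
      -- energy lower bound at s₀ for the second solution
      have hρ : r₂ s₀ ∈ Ioo a c₂ := StepOneAux.r_mem_Ioo hc₂ hM₂ hu₂a hr₂mem
        ⟨hs₀0, lt_of_le_of_lt hs₀Icc.2 hβM₂⟩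
      have hρab : r₂ s₀ ∈ Ioo a b := ⟨hρ.1, hρ.2.trans hc₂.2⟩
      have hanti := StepOneAux.energy_antitone (n := n) (c := c₂) hn ha hfc hu₂d hu₂'d
        hu₂pos hρab hc₂
      have hW := hanti (left_mem_Icc.2 hρ.2.le) (right_mem_Icc.2 hρ.2.le) hρ.2.le
      have hu₂ρ : u₂ (r₂ s₀) = s₀ :=
        (hr₂mem _ ⟨hs₀0.le, hs₀Icc.2.trans hβM₂.le⟩).2
      have hFM₂ : 0 < Fint f M₂ := StepOneAux.fint_pos_of_gt hfc hB0.le hBβ hfpos hFβ hβM₂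
      have henergy : 0 < (1/2 : ℝ)*(u₂' (r₂ s₀))^2 + Fint f s₀ := by
        have h1 : (1/2:ℝ)*(u₂' c₂)^2 + Fint f (u₂ c₂)
            ≤ (1/2:ℝ)*(u₂' (r₂ s₀))^2 + Fint f (u₂ (r₂ s₀)) := hW
        rw [hu₂ρ, ← hM₂] at h1
        nlinarith [sq_nonneg (u₂' c₂), hFM₂]
      have hr21 : r₂ s₀ < r₁ s₀ := hrlt _ ⟨hs₀0, le_rfl⟩
      have hr₂pos : 0 < r₂ s₀ := ha.trans hρ.1
      have hpow : (r₂ s₀)^(2*(n-1)) < (r₁ s₀)^(2*(n-1)) :=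
        pow_lt_pow_left₀ hr21 hr₂pos.le (by omega)
      have he21 : (1/2:ℝ)*(u₂' (r₂ s₀))^2 + Fint f s₀
          ≤ (1/2:ℝ)*(u₁' (r₁ s₀))^2 + Fint f s₀ := by
        have hp2pos : 0 < u₂' (r₂ s₀) := hp₂β _ hs₀Icc
        nlinarith [hs₀P]
      have hneg : (r₂ s₀)^(2*(n-1)) * ((1/2:ℝ)*(u₂' (r₂ s₀))^2 + Fint f s₀)
          - (r₁ s₀)^(2*(n-1)) * ((1/2:ℝ)*(u₁' (r₁ s₀))^2 + Fint f s₀) < 0 := by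
        have h1 := mul_lt_mul_of_pos_right hpow henergy
        have h2 := mul_le_mul_of_nonneg_left he21 (pow_nonneg (hr₂pos.trans hr21).le (2*(n-1)))
        linarith
      linarith [hA, hHle, hneg]
    -- conclusion
    obtain ⟨hrltβ, hHβ⟩ := StepOneAux.main_estimate hn ha hfc hc₁ hc₂ hu₁d hu₁'c hu₁'d
      hu₁a hc₁up hM₁ hM₁0 hsm₁ hsmr₁ hr₁mem hr₁inv hr₁0 hr₁cont hu₂d hu₂'c hu₂'d
      hu₂a hc₂up hM₂ hM₂0 hsm₂ hsmr₂ hr₂mem hr₂inv hr₂0 hr₂cont hβ0 hβM₁ hβM₂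
      hFnonpos hβ0 le_rfl (fun s hs => key s ⟨hs.1.le, hs.2.le⟩)
    constructor
    · -- first conclusion, using F(β) = 0
      rw [hFβ, add_zero, add_zero] at hHβ
      have hr₁βpos : 0 < r₁ β := ha.trans_le (hr₁mem β ⟨hβ0.le, hβM₁.le⟩).1.1
      have hr₂βpos : 0 < r₂ β := ha.trans_le (hr₂mem β ⟨hβ0.le, hβM₂.le⟩).1.1
      have hp₁' : 0 < u₁' (r₁ β) := hp₁β β ⟨hβ0.le, le_rfl⟩
      have hp₂' : 0 < u₂' (r₂ β) := hp₂β β ⟨hβ0.le, le_rfl⟩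
      have hq₂pos : (0:ℝ) ≤ (r₂ β)^(n-1) * u₂' (r₂ β) :=
        (mul_pos (pow_pos hr₂βpos _) hp₂').le
      apply lt_of_pow_lt_pow_left₀ 2 hq₂pos
      have hid₁ : ((r₁ β)^(n-1) * u₁' (r₁ β))^2 = (r₁ β)^(2*(n-1)) * (u₁' (r₁ β))^2 := by
        rw [mul_pow, ← pow_mul, Nat.mul_comm]
      have hid₂ : ((r₂ β)^(n-1) * u₂' (r₂ β))^2 = (r₂ β)^(2*(n-1)) * (u₂' (r₂ β))^2 := by
        rw [mul_pow, ← pow_mul, Nat.mul_comm]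
      rw [hid₁, hid₂]
      nlinarith [hA, hHβ]
    · intro _
      exact hrltβ
end

section
/- Assume f satisfies (f1) and (f2), let 0 < a < b < ∞, and let u₁ and u₂ be two positive solutions of (R) with 0 < u₁'(a) < u₂'(a). Then M₁ < M₂, and for all s ∈ (β, M₁): r₁(s) > r₂(s) and r₁(s)^{n−1}·u₁'(r₁(s)) < r₂(s)^{n−1}·u₂'(r₂(s)) (the latter quantity being rᵢ(s)^{n−1}/rᵢ'(s)). -/
open Set Filter MeasureTheory

section StepTwoAux

open Set Filter MeasureTheory Topology

lemma Fint_intble {f : ℝ → ℝ} (hf : ContinuousOn f (Ici 0)) {p q : ℝ} (hp : 0 ≤ p) (hq : 0 ≤ q) :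
    IntervalIntegrable f volume p q := by
  apply ContinuousOn.intervalIntegrable
  apply hf.mono
  intro x hx
  rcases le_total p q with h | h
  · rw [uIcc_of_le h] at hx; exact le_trans hp hx.1
  · rw [uIcc_of_ge h] at hx; exact le_trans hq hx.1

lemma Fint_hasDerivAt {f : ℝ → ℝ} (hf : ContinuousOn f (Ici 0)) {s : ℝ} (hs : 0 < s) :
    HasDerivAt (Fint f) (f s) s := by
  have hint : IntervalIntegrable f volume 0 s := Fint_intble hf le_rfl hs.le
  have hconts : ContinuousOn f (Ioi 0) := hf.mono Ioi_subset_Ici_self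
  exact intervalIntegral.integral_hasDerivAt_right hint
    (hconts.stronglyMeasurableAtFilter isOpen_Ioi s hs)
    (hconts.continuousAt (Ioi_mem_nhds hs))

lemma Fint_continuousOn {f : ℝ → ℝ} (hf : ContinuousOn f (Ici 0)) {X : ℝ} (hX : 0 ≤ X) :
    ContinuousOn (Fint f) (Icc 0 X) := by
  have h := intervalIntegral.continuousOn_primitive_interval
    (f := f) (μ := volume) (a := 0) (b := X) ?_
  · rw [uIcc_of_le hX] at h; exact h
  · rw [uIcc_of_le hX]
    exact (hf.mono Icc_subset_Ici_self).integrableOn_compact isCompact_Icc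

lemma Fint_zero (f : ℝ → ℝ) : Fint f 0 = 0 := intervalIntegral.integral_same

lemma F_pos_aux {f : ℝ → ℝ} {β : ℝ} (hf : ContinuousOn f (Ici 0)) (hβ0 : 0 ≤ β)
    (hfp : ∀ t, β < t → 0 < f t) (hFβ : Fint f β = 0) :
    ∀ X, β < X → 0 < Fint f X := by
  intro X hX
  have hX0 : 0 ≤ X := le_trans hβ0 hX.le
  have h1 : Fint f β + ∫ t in β..X, f t = Fint f X :=
    intervalIntegral.integral_add_adjacent_intervals (Fint_intble hf le_rfl hβ0)
      (Fint_intble hf hβ0 hX0)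
  have h2 : 0 < ∫ t in β..X, f t :=
    intervalIntegral.intervalIntegral_pos_of_pos_on (Fint_intble hf hβ0 hX0)
      (fun x hx => hfp x hx.1) hX
  rw [hFβ, zero_add] at h1
  rw [← h1]
  exact h2

lemma F_nonpos_case2 {f : ℝ → ℝ} {β B : ℝ} (hf : ContinuousOn f (Ici 0))
    (hB : 0 < B) (hBβ : B < β)
    (hfn : ∀ s ∈ Icc 0 B, f s ≤ 0) (hfp : ∀ s, B < s → 0 < f s)
    (hFβ : Fint f β = 0) : ∀ t ∈ Icc 0 β, Fint f t ≤ 0 := by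
  intro t ht
  rcases le_or_gt t B with h | h
  · have h1 : 0 ≤ ∫ s in (0:ℝ)..t, (-f) s :=
      intervalIntegral.integral_nonneg ht.1
        (fun u hu => neg_nonneg.mpr (hfn u ⟨hu.1, le_trans hu.2 h⟩))
    have h2 : ∫ s in (0:ℝ)..t, (-f) s = - Fint f t := by
      rw [show ((-f) : ℝ → ℝ) = (fun s => -(f s)) from rfl]
      rw [intervalIntegral.integral_neg]
      rfl
    rw [h2] at h1
    linarith
  · have h1 : Fint f t + ∫ s in t..β, f s = Fint f β :=
      intervalIntegral.integral_add_adjacent_intervals (Fint_intble hf le_rfl ht.1)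
        (Fint_intble hf ht.1 (le_trans hB.le hBβ.le))
    have h2 : 0 ≤ ∫ s in t..β, f s :=
      intervalIntegral.integral_nonneg ht.2
        (fun u hu => (hfp u (lt_of_lt_of_le h hu.1)).le)
    rw [hFβ] at h1
    linarith

lemma mono_from_deriv {g g' : ℝ → ℝ} {σ τ : ℝ} (hστ : σ ≤ τ)
    (hcont : ContinuousOn g (Icc σ τ))
    (hd : ∀ t ∈ Ioo σ τ, HasDerivAt g (g' t) t)
    (hsign : ∀ t ∈ Ioo σ τ, 0 ≤ g' t) : g σ ≤ g τ := by
  have h := monotoneOn_of_deriv_nonneg (convex_Icc σ τ) hcont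
    (fun t ht => by
      rw [interior_Icc] at ht
      exact ((hd t ht).differentiableAt).differentiableWithinAt)
    (fun t ht => by
      rw [interior_Icc] at ht
      rw [(hd t ht).deriv]
      exact hsign t ht)
  exact h ⟨le_refl σ, hστ⟩ ⟨hστ, le_refl τ⟩ hστ

lemma anti_from_deriv {g g' : ℝ → ℝ} {σ τ : ℝ} (hστ : σ < τ)
    (hcont : ContinuousOn g (Icc σ τ))
    (hd : ∀ t ∈ Ioo σ τ, HasDerivAt g (g' t) t)
    (hsign : ∀ t ∈ Ioo σ τ, g' t < 0) : g τ < g σ := by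
  have h := strictAntiOn_of_deriv_neg (convex_Icc σ τ) hcont
    (fun t ht => by
      rw [interior_Icc] at ht
      rw [(hd t ht).deriv]
      exact hsign t ht)
  exact h ⟨le_refl σ, hστ.le⟩ ⟨hστ.le, le_refl τ⟩ hστ

lemma csInf_bump {S : Set ℝ} (hne : S.Nonempty) (hbdd : BddBelow S)
    (h : ∀ᶠ x in nhds (sInf S), x ∉ S) : False := by
  obtain ⟨ε, hε, hball⟩ := Metric.eventually_nhds_iff.mp h
  have hlb : ∀ x ∈ S, sInf S + ε/2 ≤ x := by
    intro x hx
    by_contra hlt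
    push_neg at hlt
    have h1 : sInf S ≤ x := csInf_le hbdd hx
    have h2 : dist x (sInf S) < ε := by
      rw [Real.dist_eq, abs_of_nonneg (by linarith)]; linarith
    exact (hball h2) hx
  have := le_csInf hne hlb
  linarith

lemma left_le_aux {g : ℝ → ℝ} {s : ℝ} (h0 : 0 < s) (hca : ContinuousAt g s)
    (hge : ∀ t ∈ Ioo 0 s, 0 ≤ g t) : 0 ≤ g s := by
  have ht : Tendsto g (nhdsWithin s (Iio s)) (nhds (g s)) :=
    hca.tendsto.mono_left nhdsWithin_le_nhds
  refine ge_of_tendsto ht ?_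
  filter_upwards [Ioo_mem_nhdsLT_of_mem (show s ∈ Ioc (0:ℝ) s from ⟨h0, le_refl s⟩)] with t htt
  exact hge t htt

lemma deriv_nonpos_of_nonneg_left {g : ℝ → ℝ} {x s d : ℝ} (hx : x < s)
    (hg : ∀ t ∈ Ioo x s, 0 ≤ g t) (hgs : g s = 0) (hd : HasDerivAt g d s) : d ≤ 0 := by
  have hslope := hasDerivAt_iff_tendsto_slope.mp hd
  have hsub : Ioo x s ⊆ {s}ᶜ := fun t ht => by simp [ne_of_lt ht.2]
  have hne : (nhdsWithin s (Ioo x s)).NeBot := by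
    apply mem_closure_iff_nhdsWithin_neBot.mp
    rw [closure_Ioo (ne_of_lt hx)]
    exact ⟨le_of_lt hx, le_refl s⟩
  have htend : Tendsto (slope g s) (nhdsWithin s (Ioo x s)) (nhds d) :=
    hslope.mono_left (nhdsWithin_mono s hsub)
  refine le_of_tendsto htend (eventually_mem_nhdsWithin.mono ?_)
  intro t ht
  have h1 : 0 ≤ g t := hg t ht
  have h2 : t - s < 0 := sub_neg.mpr ht.2
  have h3 : slope g s t = (g t - g s) / (t - s) := slope_def_field g s t
  rw [h3, hgs, sub_zero]
  exact div_nonpos_of_nonneg_of_nonpos h1 h2.le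

lemma deriv_zero_at_peak {u' : ℝ → ℝ} {a b c : ℝ} (hc : c ∈ Ioo a b)
    (hcont : ContinuousOn u' (Icc a b))
    (hup : ∀ x ∈ Ico a c, 0 < u' x) (hdown : ∀ x ∈ Ioo c b, u' x < 0) : u' c = 0 := by
  have hca : ContinuousAt u' c := by
    have := hcont.continuousWithinAt (x := c) ⟨hc.1.le, hc.2.le⟩
    exact this.continuousAt (Icc_mem_nhds hc.1 hc.2)
  have h1 : 0 ≤ u' c := by
    have hmem : Ioo a c ∈ nhdsWithin c (Iio c) := Ioo_mem_nhdsLT_of_mem ⟨hc.1, le_refl c⟩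
    refine ge_of_tendsto (x := nhdsWithin c (Iio c))
      (hca.tendsto.mono_left nhdsWithin_le_nhds) ?_
    filter_upwards [hmem] with t ht
    exact (hup t ⟨ht.1.le, ht.2⟩).le
  have h2 : u' c ≤ 0 := by
    have hmem : Ioo c b ∈ nhdsWithin c (Ioi c) := Ioo_mem_nhdsGT_of_mem ⟨le_refl c, hc.2⟩
    refine le_of_tendsto (x := nhdsWithin c (Ioi c))
      (hca.tendsto.mono_left nhdsWithin_le_nhds) ?_
    filter_upwards [hmem] with t ht
    exact (hdown t ht).le
  linarith

lemma rho_no_cross {u₁' u₂' r₁ r₂ : ℝ → ℝ} {x : ℝ} (hx : 0 < x)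
    (hcont : ContinuousOn (fun t => r₁ t - r₂ t) (Icc 0 x))
    (hzero : r₁ 0 = r₂ 0)
    (hd : ∀ t ∈ Ioo 0 x, HasDerivAt (fun t => r₁ t - r₂ t)
        ((u₁' (r₁ t))⁻¹ - (u₂' (r₂ t))⁻¹) t)
    (hvpos : ∀ t ∈ Ioo 0 x, 0 < u₁' (r₁ t))
    (hvlt : ∀ t ∈ Ioo 0 x, u₁' (r₁ t) < u₂' (r₂ t))
    (hfail : r₁ x < r₂ x) : False := by
  obtain ⟨ξ, hξ, heq⟩ := exists_hasDerivAt_eq_slope (fun t => r₁ t - r₂ t)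
    (fun t => (u₁' (r₁ t))⁻¹ - (u₂' (r₂ t))⁻¹) hx hcont hd
  have h3 : (u₂' (r₂ ξ))⁻¹ < (u₁' (r₁ ξ))⁻¹ :=
    inv_strictAnti₀ (hvpos ξ hξ) (hvlt ξ hξ)
  have h4 : ((r₁ x - r₂ x) - (r₁ 0 - r₂ 0)) / (x - 0) < 0 := by
    rw [hzero]
    apply div_neg_of_neg_of_pos
    · linarith
    · linarith
  have h5 : 0 < (u₁' (r₁ ξ))⁻¹ - (u₂' (r₂ ξ))⁻¹ := by linarith
  rw [heq] at h5
  linarith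

lemma inv_pack {u r : ℝ → ℝ} {a c M : ℝ} (hac : a < c) (hM : 0 < M)
    (hu : StrictMonoOn u (Icc a c)) (hua : u a = 0) (huc : u c = M)
    (hmem : ∀ s ∈ Icc 0 M, r s ∈ Icc a c ∧ u (r s) = s) :
    StrictMonoOn r (Icc 0 M) ∧ r 0 = a ∧ r M = c ∧
    ContinuousOn r (Icc 0 M) ∧ (∀ s ∈ Ioo 0 M, ContinuousAt r s) := by
  have hmono : StrictMonoOn r (Icc 0 M) := by
    intro s hs t ht hst
    by_contra hle
    push_neg at hle
    have h1 : u (r t) ≤ u (r s) :=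
      hu.monotoneOn (hmem t ht).1 (hmem s hs).1 hle
    rw [(hmem s hs).2, (hmem t ht).2] at h1
    exact absurd h1 (not_le.mpr hst)
  have hr0 : r 0 = a := by
    have h0 : (0:ℝ) ∈ Icc (0:ℝ) M := ⟨le_refl 0, hM.le⟩
    exact hu.injOn (hmem 0 h0).1 ⟨le_refl a, hac.le⟩ (by rw [(hmem 0 h0).2, hua])
  have hrM : r M = c := by
    have h0 : M ∈ Icc (0:ℝ) M := ⟨hM.le, le_refl M⟩
    exact hu.injOn (hmem M h0).1 ⟨hac.le, le_refl c⟩ (by rw [(hmem M h0).2, huc])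
  have hsur : ∀ x ∈ Icc a c, ∃ t ∈ Icc (0:ℝ) M, r t = x := by
    intro x hx
    have hux : u x ∈ Icc (0:ℝ) M := by
      constructor
      · rw [← hua]; exact hu.monotoneOn ⟨le_refl a, hac.le⟩ hx hx.1
      · rw [← huc]; exact hu.monotoneOn hx ⟨hac.le, le_refl c⟩ hx.2
    exact ⟨u x, hux, hu.injOn (hmem _ hux).1 hx (hmem _ hux).2⟩
  have hright : ∀ s₀ ∈ Ico (0:ℝ) M, ContinuousWithinAt r (Ici s₀) s₀ := by
    intro s₀ hs₀
    have hs₀' : s₀ ∈ Icc (0:ℝ) M := ⟨hs₀.1, hs₀.2.le⟩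
    refine StrictMonoOn.continuousWithinAt_right_of_exists_between hmono
      (Icc_mem_nhdsGE_of_mem ⟨hs₀.1, hs₀.2⟩) ?_
    intro y hy
    have hrc : r s₀ < c := by
      rw [← hrM]
      exact hmono hs₀' ⟨hM.le, le_refl M⟩ hs₀.2
    have hra : a ≤ r s₀ := (hmem s₀ hs₀').1.1
    have hx1 : r s₀ < min y c := lt_min hy hrc
    have hxmem : min y c ∈ Icc a c := ⟨le_trans hra hx1.le, min_le_right y c⟩
    obtain ⟨t, ht, hrt⟩ := hsur (min y c) hxmem
    exact ⟨t, ht, by rw [hrt]; exact ⟨hx1, min_le_left y c⟩⟩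
  have hleft : ∀ s₀ ∈ Ioc (0:ℝ) M, ContinuousWithinAt r (Iic s₀) s₀ := by
    intro s₀ hs₀
    have hs₀' : s₀ ∈ Icc (0:ℝ) M := ⟨hs₀.1.le, hs₀.2⟩
    refine StrictMonoOn.continuousWithinAt_left_of_exists_between hmono
      (Icc_mem_nhdsLE_of_mem ⟨hs₀.1, hs₀.2⟩) ?_
    intro y hy
    have hrc : a < r s₀ := by
      rw [← hr0]
      exact hmono ⟨le_refl 0, hM.le⟩ hs₀' hs₀.1
    have hra : r s₀ ≤ c := (hmem s₀ hs₀').1.2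
    have hx1 : max y a < r s₀ := max_lt hy hrc
    have hxmem : max y a ∈ Icc a c := ⟨le_max_right y a, le_trans hx1.le hra⟩
    obtain ⟨t, ht, hrt⟩ := hsur (max y a) hxmem
    exact ⟨t, ht, by rw [hrt]; exact ⟨le_max_left y a, hx1⟩⟩
  have hca : ∀ s ∈ Ioo 0 M, ContinuousAt r s := by
    intro s hs
    exact continuousAt_iff_continuous_left_right.mpr
      ⟨hleft s ⟨hs.1, hs.2.le⟩, hright s ⟨hs.1.le, hs.2⟩⟩
  refine ⟨hmono, hr0, hrM, ?_, hca⟩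
  intro s hs
  rcases eq_or_lt_of_le hs.1 with h0 | h0
  · rw [← h0]
    exact (hright 0 ⟨le_refl 0, hM⟩).mono Icc_subset_Ici_self
  · rcases eq_or_lt_of_le hs.2 with hM0 | hM0
    · rw [hM0]
      exact (hleft M ⟨hM, le_refl M⟩).mono Icc_subset_Iic_self
    · exact (hca s ⟨h0, hM0⟩).continuousWithinAt

lemma sol_pack (k : ℕ) {f u u' r : ℝ → ℝ} {a b c M : ℝ}
    (ha : 0 < a) (h : IsPosSolAnn (k+2) a b f u u') (hc : c ∈ Ioo a b)
    (hup : ∀ x ∈ Ico a c, 0 < u' x) (hM : M = u c) (hMpos : 0 < M)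
    (hmem : ∀ s ∈ Icc 0 M, r s ∈ Icc a c ∧ u (r s) = s) :
    (r 0 = a ∧ r M = c ∧ StrictMonoOn r (Icc 0 M) ∧ ContinuousOn r (Icc 0 M)) ∧
    (∀ s ∈ Ioo 0 M, r s ∈ Ioo a c) ∧
    (∀ s ∈ Ico 0 M, 0 < u' (r s)) ∧
    (∀ s ∈ Ioo 0 M, ContinuousAt r s) ∧
    (∀ s ∈ Ioo 0 M, HasDerivAt r (u' (r s))⁻¹ s) ∧
    (∀ s ∈ Ioo 0 M, HasDerivAt (fun t => u' (r t))
        (-(((k:ℝ)+1)/(r s) * u' (r s) + f s) * (u' (r s))⁻¹) s) ∧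
    (∀ s ∈ Ioo 0 M, HasDerivAt (fun t => (r t)^(k+1) * u' (r t))
        (-((r s)^(k+1) * f s / u' (r s))) s) := by
  obtain ⟨hucont, hudw, hu'cont, hud, hode, hua0, hub0, hupos⟩ := h
  have hsmono : StrictMonoOn u (Icc a c) := by
    apply strictMonoOn_of_deriv_pos (convex_Icc a c)
      (hucont.mono (Icc_subset_Icc_right hc.2.le))
    intro x hx
    rw [interior_Icc] at hx
    rw [(hud x ⟨hx.1, hx.2.trans hc.2⟩).deriv]
    exact hup x ⟨hx.1.le, hx.2⟩
  obtain ⟨hrmono, hr0, hrM, hrcont, hrca⟩ :=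
    inv_pack hc.1 hMpos hsmono hua0 (by rw [hM]) hmem
  have hIoo : ∀ s ∈ Ioo 0 M, r s ∈ Ioo a c := by
    intro s hs
    constructor
    · rw [← hr0]; exact hrmono ⟨le_refl 0, hMpos.le⟩ ⟨hs.1.le, hs.2.le⟩ hs.1
    · rw [← hrM]; exact hrmono ⟨hs.1.le, hs.2.le⟩ ⟨hMpos.le, le_refl M⟩ hs.2
  have hvpos : ∀ s ∈ Ico 0 M, 0 < u' (r s) := by
    intro s hs
    apply hup
    refine ⟨(hmem s ⟨hs.1, hs.2.le⟩).1.1, ?_⟩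
    rw [← hrM]; exact hrmono ⟨hs.1, hs.2.le⟩ ⟨hMpos.le, le_refl M⟩ hs.2
  have hsubIoo : Ioo a c ⊆ Ioo a b := Ioo_subset_Ioo_right hc.2.le
  have hder_r : ∀ s ∈ Ioo 0 M, HasDerivAt r (u' (r s))⁻¹ s := by
    intro s hs
    have hfd : HasDerivAt u (u' (r s)) (r s) := hud (r s) (hsubIoo (hIoo s hs))
    have hne : u' (r s) ≠ 0 := (hvpos s ⟨hs.1.le, hs.2⟩).ne'
    have hev : ∀ᶠ y in nhds s, u (r y) = y := by
      filter_upwards [Icc_mem_nhds hs.1 hs.2] with y hy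
      exact (hmem y hy).2
    exact HasDerivAt.of_local_left_inverse (hrca s hs) hfd hne hev
  have hcast : ((k+2:ℕ):ℝ) - 1 = (k:ℝ)+1 := by push_cast; ring
  have hder_v : ∀ s ∈ Ioo 0 M, HasDerivAt (fun t => u' (r t))
      (-(((k:ℝ)+1)/(r s) * u' (r s) + f s) * (u' (r s))⁻¹) s := by
    intro s hs
    have h0 := hode (r s) (hsubIoo (hIoo s hs))
    rw [(hmem s ⟨hs.1.le, hs.2.le⟩).2, hcast] at h0
    have := h0.comp s (hder_r s hs)
    simpa [Function.comp_def] using this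
  refine ⟨⟨hr0, hrM, hrmono, hrcont⟩, hIoo, hvpos, hrca, hder_r, hder_v, ?_⟩
  intro s hs
  have hρpos : 0 < r s := lt_trans ha (hIoo s hs).1
  have hvp : 0 < u' (r s) := hvpos s ⟨hs.1.le, hs.2⟩
  have h1 : HasDerivAt (fun t => (r t)^(k+1))
      ((((k+1:ℕ)):ℝ) * (r s)^(k+1-1) * (u' (r s))⁻¹) s := (hder_r s hs).pow (k+1)
  have h3 := h1.mul (hder_v s hs)
  refine h3.congr_deriv ?_
  have hρ : r s ≠ 0 := hρpos.ne'
  have hv : u' (r s) ≠ 0 := hvp.ne'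
  push_cast
  field_simp
  ring

lemma W_hasDeriv {f u₁' u₂' r₁ r₂ : ℝ → ℝ} {k : ℕ} {s : ℝ}
    (h₁ : HasDerivAt (fun t => (r₁ t)^(k+1) * u₁' (r₁ t)) (-((r₁ s)^(k+1) * f s / u₁' (r₁ s))) s)
    (h₂ : HasDerivAt (fun t => (r₂ t)^(k+1) * u₂' (r₂ t)) (-((r₂ s)^(k+1) * f s / u₂' (r₂ s))) s)
    (hv₁ : u₁' (r₁ s) ≠ 0) (hv₂ : u₂' (r₂ s) ≠ 0) :
    HasDerivAt (fun t => ((r₂ t)^(k+1) * u₂' (r₂ t))^2 - ((r₁ t)^(k+1) * u₁' (r₁ t))^2)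
      (2 * f s * (((r₁ s)^(k+1))^2 - ((r₂ s)^(k+1))^2)) s := by
  have h := (h₂.pow 2).sub (h₁.pow 2)
  refine h.congr_deriv ?_
  field_simp
  ring

lemma Z_hasDeriv {f u₁' u₂' r₁ r₂ : ℝ → ℝ} {k : ℕ} {s : ℝ}
    (hF : HasDerivAt (Fint f) (f s) s)
    (hr₁ : HasDerivAt r₁ (u₁' (r₁ s))⁻¹ s) (hr₂ : HasDerivAt r₂ (u₂' (r₂ s))⁻¹ s)
    (h₁ : HasDerivAt (fun t => (r₁ t)^(k+1) * u₁' (r₁ t)) (-((r₁ s)^(k+1) * f s / u₁' (r₁ s))) s)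
    (h₂ : HasDerivAt (fun t => (r₂ t)^(k+1) * u₂' (r₂ t)) (-((r₂ s)^(k+1) * f s / u₂' (r₂ s))) s)
    (hv₁ : u₁' (r₁ s) ≠ 0) (hv₂ : u₂' (r₂ s) ≠ 0) :
    HasDerivAt (fun t => (((r₂ t)^(k+1) * u₂' (r₂ t))^2 - ((r₁ t)^(k+1) * u₁' (r₁ t))^2)
        + 2 * Fint f t * (((r₂ t)^(k+1))^2 - ((r₁ t)^(k+1))^2))
      (4 * ((k:ℝ)+1) * Fint f s *
        ((r₂ s)^(k+1) * (r₂ s)^k / u₂' (r₂ s) - (r₁ s)^(k+1) * (r₁ s)^k / u₁' (r₁ s))) s := by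
  have hW := W_hasDeriv h₁ h₂ hv₁ hv₂
  have hG := ((hr₂.pow (k+1)).pow 2).sub ((hr₁.pow (k+1)).pow 2)
  have hFG := (hF.const_mul (2:ℝ)).mul hG
  have htot := hW.add hFG
  refine htot.congr_deriv ?_
  simp only [Pi.pow_apply, Pi.sub_apply]
  push_cast
  field_simp
  ring

lemma E_hasDeriv {f u₂' r₂ : ℝ → ℝ} {k : ℕ} {s : ℝ}
    (hF : HasDerivAt (Fint f) (f s) s)
    (hv : HasDerivAt (fun t => u₂' (r₂ t))
        (-(((k:ℝ)+1)/(r₂ s) * u₂' (r₂ s) + f s) * (u₂' (r₂ s))⁻¹) s)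
    (hvne : u₂' (r₂ s) ≠ 0) (hρne : r₂ s ≠ 0) :
    HasDerivAt (fun t => (u₂' (r₂ t))^2 + 2 * Fint f t)
      (-(2 * ((k:ℝ)+1) * u₂' (r₂ s) / r₂ s)) s := by
  have h := (hv.pow 2).add (hF.const_mul (2:ℝ))
  refine h.congr_deriv ?_
  field_simp
  ring

end StepTwoAux

set_option maxHeartbeats 3000000 in
/-- Step two (Proposition 3.3): `M₁ < M₂`, and for all `s ∈ (β, M₁)`:
`r₁(s) > r₂(s)` and `r₁(s)^{n-1} u₁'(r₁(s)) < r₂(s)^{n-1} u₂'(r₂(s))`. -/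
theorem step_two
    (n : ℕ) (hn : 2 ≤ n) (f : ℝ → ℝ) (β B : ℝ)
    (hf1 : CondF1 f) (hf2 : CondF2 f β B)
    (a b : ℝ) (ha : 0 < a) (hab : a < b)
    (u₁ u₁' u₂ u₂' : ℝ → ℝ)
    (h₁ : IsPosSolAnn n a b f u₁ u₁') (h₂ : IsPosSolAnn n a b f u₂ u₂')
    (hslope₁ : 0 < u₁' a) (hslope₁₂ : u₁' a < u₂' a)
    (c₁ c₂ : ℝ) (hc₁ : c₁ ∈ Ioo a b) (hc₂ : c₂ ∈ Ioo a b)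
    (hc₁up : ∀ r ∈ Ico a c₁, 0 < u₁' r) (hc₁down : ∀ r ∈ Ioo c₁ b, u₁' r < 0)
    (hc₂up : ∀ r ∈ Ico a c₂, 0 < u₂' r) (hc₂down : ∀ r ∈ Ioo c₂ b, u₂' r < 0)
    (M₁ M₂ : ℝ) (hM₁ : M₁ = u₁ c₁) (hM₂ : M₂ = u₂ c₂)
    (hβM₁ : β < M₁) (hβM₂ : β < M₂)
    (r₁ r₂ : ℝ → ℝ)
    (hr₁mem : ∀ s ∈ Icc (0:ℝ) M₁, r₁ s ∈ Icc a c₁ ∧ u₁ (r₁ s) = s)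
    (hr₁inv : ∀ r ∈ Icc a c₁, r₁ (u₁ r) = r)
    (hr₂mem : ∀ s ∈ Icc (0:ℝ) M₂, r₂ s ∈ Icc a c₂ ∧ u₂ (r₂ s) = s)
    (hr₂inv : ∀ r ∈ Icc a c₂, r₂ (u₂ r) = r)
    :
    M₁ < M₂ ∧ ∀ s ∈ Ioo β M₁, r₂ s < r₁ s ∧
      (r₁ s) ^ (n - 1) * u₁' (r₁ s) < (r₂ s) ^ (n - 1) * u₂' (r₂ s) := by
  classical
  obtain ⟨k, rfl⟩ : ∃ k, n = k + 2 := ⟨n - 2, by omega⟩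
  simp only [show k+2-1 = k+1 from rfl]
  have hfcont : ContinuousOn f (Ici 0) := hf1.1
  have hβ0 : 0 ≤ β := by
    rcases hf2 with h | h
    · exact le_of_eq h.1.symm
    · exact (lt_trans h.2.1 h.2.2.1).le
  have hfposβ : ∀ t, β < t → 0 < f t := by
    rcases hf2 with h | h
    · intro t ht; rw [h.1] at ht; exact h.2.2.2 t ht
    · intro t ht; exact h.2.2.2.1 t (lt_trans h.2.2.1 ht)
  have hFβ0 : Fint f β = 0 := by
    rcases hf2 with h | h
    · rw [h.1]; exact Fint_zero f
    · exact h.2.2.2.2.2.2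
  have hFneg : ∀ t ∈ Icc 0 β, Fint f t ≤ 0 := by
    rcases hf2 with h | h
    · intro t ht
      rw [h.1] at ht
      have ht0 : t = 0 := le_antisymm ht.2 ht.1
      rw [ht0, Fint_zero]
    · exact F_nonpos_case2 hfcont h.2.1 h.2.2.1 h.2.2.2.2.1 h.2.2.2.1 h.2.2.2.2.2.2
  have hFpos := F_pos_aux hfcont hβ0 hfposβ hFβ0
  have hM₁pos : 0 < M₁ := lt_of_le_of_lt hβ0 hβM₁
  have hM₂pos : 0 < M₂ := lt_of_le_of_lt hβ0 hβM₂
  obtain ⟨⟨hr₁0, hr₁M, hr₁mono, hr₁cont⟩, hr₁Ioo, hv₁pos, hr₁ca, hd_r₁, hd_v₁, hd_w₁⟩ :=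
    sol_pack k ha h₁ hc₁ hc₁up hM₁ hM₁pos hr₁mem
  obtain ⟨⟨hr₂0, hr₂M, hr₂mono, hr₂cont⟩, hr₂Ioo, hv₂pos, hr₂ca, hd_r₂, hd_v₂, hd_w₂⟩ :=
    sol_pack k ha h₂ hc₂ hc₂up hM₂ hM₂pos hr₂mem
  set m := min M₁ M₂ with hmdef
  have hmM₁ : m ≤ M₁ := min_le_left _ _
  have hmM₂ : m ≤ M₂ := min_le_right _ _
  have hβm : β < m := lt_min hβM₁ hβM₂
  have hm0 : 0 < m := lt_of_le_of_lt hβ0 hβm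
  have hsm₁ : Ioo 0 m ⊆ Ioo 0 M₁ := Ioo_subset_Ioo_right hmM₁
  have hsm₂ : Ioo 0 m ⊆ Ioo 0 M₂ := Ioo_subset_Ioo_right hmM₂
  have hIcc₁ : Icc 0 m ⊆ Icc 0 M₁ := Icc_subset_Icc_right hmM₁
  have hIcc₂ : Icc 0 m ⊆ Icc 0 M₂ := Icc_subset_Icc_right hmM₂
  -- continuity of composites
  have hv₁cont : ContinuousOn (fun s => u₁' (r₁ s)) (Icc 0 M₁) := by
    have := (h₁.2.2.1).comp hr₁cont
      (fun s hs => (Icc_subset_Icc_right hc₁.2.le) (hr₁mem s hs).1)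
    simpa [Function.comp_def] using this
  have hv₂cont : ContinuousOn (fun s => u₂' (r₂ s)) (Icc 0 M₂) := by
    have := (h₂.2.2.1).comp hr₂cont
      (fun s hs => (Icc_subset_Icc_right hc₂.2.le) (hr₂mem s hs).1)
    simpa [Function.comp_def] using this
  have hw₁cont : ContinuousOn (fun s => (r₁ s)^(k+1) * u₁' (r₁ s)) (Icc 0 M₁) :=
    (hr₁cont.pow _).mul hv₁cont
  have hw₂cont : ContinuousOn (fun s => (r₂ s)^(k+1) * u₂' (r₂ s)) (Icc 0 M₂) :=
    (hr₂cont.pow _).mul hv₂cont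
  have hWcont : ContinuousOn (fun t => ((r₂ t)^(k+1) * u₂' (r₂ t))^2
      - ((r₁ t)^(k+1) * u₁' (r₁ t))^2) (Icc 0 m) :=
    ((hw₂cont.mono hIcc₂).pow 2).sub ((hw₁cont.mono hIcc₁).pow 2)
  have hZcont : ContinuousOn (fun t => (((r₂ t)^(k+1) * u₂' (r₂ t))^2
      - ((r₁ t)^(k+1) * u₁' (r₁ t))^2)
      + 2 * Fint f t * (((r₂ t)^(k+1))^2 - ((r₁ t)^(k+1))^2)) (Icc 0 m) := by
    apply hWcont.add
    exact (continuousOn_const.mul (Fint_continuousOn hfcont hm0.le)).mul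
      ((((hr₂cont.mono hIcc₂).pow (k+1)).pow 2).sub (((hr₁cont.mono hIcc₁).pow (k+1)).pow 2))
  -- continuousAt of v's
  have hv₁ca : ∀ s ∈ Ioo 0 M₁, ContinuousAt (fun t => u₁' (r₁ t)) s := by
    intro s hs
    have h1 := hr₁Ioo s hs
    have h2 : ContinuousAt u₁' (r₁ s) :=
      (h₁.2.2.1).continuousAt (Icc_mem_nhds h1.1 (lt_trans h1.2 hc₁.2))
    have := h2.comp (hr₁ca s hs)
    simpa [Function.comp_def] using this
  have hv₂ca : ∀ s ∈ Ioo 0 M₂, ContinuousAt (fun t => u₂' (r₂ t)) s := by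
    intro s hs
    have h1 := hr₂Ioo s hs
    have h2 : ContinuousAt u₂' (r₂ s) :=
      (h₂.2.2.1).continuousAt (Icc_mem_nhds h1.1 (lt_trans h1.2 hc₂.2))
    have := h2.comp (hr₂ca s hs)
    simpa [Function.comp_def] using this
  -- positivity of ρ's
  have hρ₁pos : ∀ s ∈ Icc 0 M₁, 0 < r₁ s := fun s hs => lt_of_lt_of_le ha (hr₁mem s hs).1.1
  have hρ₂pos : ∀ s ∈ Icc 0 M₂, 0 < r₂ s := fun s hs => lt_of_lt_of_le ha (hr₂mem s hs).1.1
  -- derivative of W on (0, m)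
  have hd_W : ∀ s ∈ Ioo 0 m, HasDerivAt (fun t => ((r₂ t)^(k+1) * u₂' (r₂ t))^2
      - ((r₁ t)^(k+1) * u₁' (r₁ t))^2)
      (2 * f s * (((r₁ s)^(k+1))^2 - ((r₂ s)^(k+1))^2)) s := by
    intro s hs
    exact W_hasDeriv (hd_w₁ s (hsm₁ hs)) (hd_w₂ s (hsm₂ hs))
      (hv₁pos s ⟨hs.1.le, (hsm₁ hs).2⟩).ne' (hv₂pos s ⟨hs.1.le, (hsm₂ hs).2⟩).ne'
  have hd_Z : ∀ s ∈ Ioo 0 m, HasDerivAt (fun t => (((r₂ t)^(k+1) * u₂' (r₂ t))^2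
      - ((r₁ t)^(k+1) * u₁' (r₁ t))^2)
      + 2 * Fint f t * (((r₂ t)^(k+1))^2 - ((r₁ t)^(k+1))^2))
      (4 * ((k:ℝ)+1) * Fint f s *
        ((r₂ s)^(k+1) * (r₂ s)^k / u₂' (r₂ s) - (r₁ s)^(k+1) * (r₁ s)^k / u₁' (r₁ s))) s := by
    intro s hs
    exact Z_hasDeriv (Fint_hasDerivAt hfcont hs.1) (hd_r₁ s (hsm₁ hs)) (hd_r₂ s (hsm₂ hs))
      (hd_w₁ s (hsm₁ hs)) (hd_w₂ s (hsm₂ hs))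
      (hv₁pos s ⟨hs.1.le, (hsm₁ hs).2⟩).ne' (hv₂pos s ⟨hs.1.le, (hsm₂ hs).2⟩).ne'
  -- energy positivity for solution 2
  have he₂pos : ∀ s ∈ Ico (0:ℝ) M₂, 0 < (u₂' (r₂ s))^2 + 2 * Fint f s := by
    intro s hs
    have hFM₂ : 0 < Fint f M₂ := hFpos M₂ hβM₂
    have hEcont : ContinuousOn (fun t => (u₂' (r₂ t))^2 + 2 * Fint f t) (Icc 0 M₂) :=
      (hv₂cont.pow 2).add (continuousOn_const.mul (Fint_continuousOn hfcont hM₂pos.le))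
    have h := anti_from_deriv (g := fun t => (u₂' (r₂ t))^2 + 2 * Fint f t)
      (g' := fun t => -(2 * ((k:ℝ)+1) * u₂' (r₂ t) / r₂ t)) hs.2
      (hEcont.mono (Icc_subset_Icc_left hs.1))
      (fun t ht => by
        have ht' : t ∈ Ioo 0 M₂ := ⟨lt_of_le_of_lt hs.1 ht.1, ht.2⟩
        exact E_hasDeriv (Fint_hasDerivAt hfcont ht'.1) (hd_v₂ t ht')
          (hv₂pos t ⟨ht'.1.le, ht'.2⟩).ne' (hρ₂pos t ⟨ht'.1.le, ht'.2.le⟩).ne')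
      (fun t ht => by
        have ht' : t ∈ Ioo 0 M₂ := ⟨lt_of_le_of_lt hs.1 ht.1, ht.2⟩
        have hv := hv₂pos t ⟨ht'.1.le, ht'.2⟩
        have hρ := hρ₂pos t ⟨ht'.1.le, ht'.2.le⟩
        have h2 : (0:ℝ) < 2 * ((k:ℝ)+1) := by positivity
        have := div_pos (mul_pos h2 hv) hρ
        linarith)
    have h' : (u₂' (r₂ M₂))^2 + 2 * Fint f M₂ < (u₂' (r₂ s))^2 + 2 * Fint f s := h
    nlinarith [sq_nonneg (u₂' (r₂ M₂))]
  -- basic positivity of W at 0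
  have hW0 : 0 < ((r₂ 0)^(k+1) * u₂' (r₂ 0))^2 - ((r₁ 0)^(k+1) * u₁' (r₁ 0))^2 := by
    rw [hr₁0, hr₂0]
    have hA : 0 < a^(k+1) := pow_pos ha _
    nlinarith [mul_pos hA hslope₁, mul_lt_mul_of_pos_left hslope₁₂ hA]
  -- sign of Z' under the orderings
  have hZsign : ∀ t, t ∈ Ioo 0 m → t ≤ β → r₂ t ≤ r₁ t → u₁' (r₁ t) ≤ u₂' (r₂ t) →
      0 ≤ 4 * ((k:ℝ)+1) * Fint f t *
        ((r₂ t)^(k+1) * (r₂ t)^k / u₂' (r₂ t) - (r₁ t)^(k+1) * (r₁ t)^k / u₁' (r₁ t)) := by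
    intro t htm htβ hρ hv
    have hFt : Fint f t ≤ 0 := hFneg t ⟨htm.1.le, htβ⟩
    have hρ₂0 : 0 ≤ r₂ t := (hρ₂pos t ⟨htm.1.le, le_trans htm.2.le hmM₂⟩).le
    have hρ₁0 : 0 ≤ r₁ t := le_trans hρ₂0 hρ
    have hv₁p : 0 < u₁' (r₁ t) := hv₁pos t ⟨htm.1.le, (hsm₁ htm).2⟩
    have hnum : (r₂ t)^(k+1) * (r₂ t)^k ≤ (r₁ t)^(k+1) * (r₁ t)^k :=
      mul_le_mul (pow_le_pow_left₀ hρ₂0 hρ _) (pow_le_pow_left₀ hρ₂0 hρ _)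
        (pow_nonneg hρ₂0 _) (pow_nonneg hρ₁0 _)
    have hdiv : (r₂ t)^(k+1) * (r₂ t)^k / u₂' (r₂ t)
        ≤ (r₁ t)^(k+1) * (r₁ t)^k / u₁' (r₁ t) :=
      div_le_div₀ (mul_nonneg (pow_nonneg hρ₁0 _) (pow_nonneg hρ₁0 _)) hnum hv₁p hv
    have hc1 : 4 * ((k:ℝ)+1) * Fint f t ≤ 0 := by
      have h4 : (0:ℝ) ≤ 4 * ((k:ℝ)+1) := by positivity
      nlinarith
    have h := mul_nonneg (neg_nonneg.mpr hc1) (neg_nonneg.mpr (sub_nonpos.mpr hdiv))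
    rw [neg_mul_neg] at h
    exact h
  -- small-time strict v ordering
  have hsmall : ∃ δ > (0:ℝ), ∀ t, 0 ≤ t → t ≤ m → t < δ → u₁' (r₁ t) < u₂' (r₂ t) := by
    have hvc : ContinuousWithinAt (fun t => u₂' (r₂ t) - u₁' (r₁ t)) (Icc 0 m) 0 :=
      ((hv₂cont.mono hIcc₂).sub (hv₁cont.mono hIcc₁)).continuousWithinAt
        ⟨le_refl (0:ℝ), hm0.le⟩
    have hv0 : (0:ℝ) < u₂' (r₂ 0) - u₁' (r₁ 0) := by rw [hr₁0, hr₂0]; linarith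
    have hev : ∀ᶠ t in nhdsWithin 0 (Icc 0 m), 0 < u₂' (r₂ t) - u₁' (r₁ t) :=
      hvc.eventually (lt_mem_nhds hv0)
    have hev2 := eventually_nhdsWithin_iff.mp hev
    obtain ⟨δ, hδ0, hδ⟩ := Metric.eventually_nhds_iff.mp hev2
    refine ⟨δ, hδ0, ?_⟩
    intro t h1 h2 h3
    have hd : dist t (0:ℝ) < δ := by
      rw [Real.dist_eq, sub_zero, abs_of_nonneg h1]; exact h3
    have := hδ hd ⟨h1, h2⟩
    linarith
  -- ===== PHASE A =====
  have hA : ∀ t ∈ Ioc 0 β, r₂ t ≤ r₁ t ∧ u₁' (r₁ t) ≤ u₂' (r₂ t) := by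
    set S : Set ℝ := {t : ℝ | t ∈ Ioc 0 β ∧ (r₁ t < r₂ t ∨ u₂' (r₂ t) < u₁' (r₁ t))} with hSdef
    have hkey : ¬ S.Nonempty := by
      intro hSne
      have hbdd : BddBelow S := ⟨0, fun x hx => hx.1.1.le⟩
      have hlb : ∀ x ∈ S, sInf S ≤ x := fun x hx => csInf_le hbdd hx
      have hs0 : 0 ≤ sInf S := le_csInf hSne fun x hx => hx.1.1.le
      obtain ⟨x₀, hx₀⟩ := id hSne
      have hsβ : sInf S ≤ β := le_trans (hlb x₀ hx₀) hx₀.1.2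
      have hsm : sInf S < m := lt_of_le_of_lt hsβ hβm
      have hgood : ∀ t ∈ Ioo 0 (sInf S), r₂ t ≤ r₁ t ∧ u₁' (r₁ t) ≤ u₂' (r₂ t) := by
        intro t ht
        have htβ : t ∈ Ioc 0 β := ⟨ht.1, le_trans ht.2.le hsβ⟩
        have htS : t ∉ S := fun hts => absurd (hlb t hts) (not_le.mpr ht.2)
        constructor
        · by_contra hlt; push_neg at hlt; exact htS ⟨htβ, Or.inl hlt⟩
        · by_contra hlt; push_neg at hlt; exact htS ⟨htβ, Or.inr hlt⟩
      rcases eq_or_lt_of_le hs0 with h0 | h0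
      · -- sInf S = 0 : MVT argument near zero
        obtain ⟨δ, hδ0, hδ⟩ := hsmall
        obtain ⟨x, hxS, hxδ⟩ := exists_lt_of_csInf_lt hSne (by rw [← h0]; exact hδ0)
        have hx1 : 0 < x := hxS.1.1
        have hxβ : x ≤ β := hxS.1.2
        have hxm : x ≤ m := le_trans hxβ hβm.le
        rcases hxS.2 with hρf | hvf
        · refine rho_no_cross (u₁' := u₁') (u₂' := u₂') hx1 ?_ (by rw [hr₁0, hr₂0]) ?_ ?_ ?_ hρf
          · exact ((hr₁cont.mono (Icc_subset_Icc_right (le_trans hxm hmM₁))).sub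
              (hr₂cont.mono (Icc_subset_Icc_right (le_trans hxm hmM₂))))
          · intro t ht
            have htm : t ∈ Ioo 0 m := ⟨ht.1, lt_of_lt_of_le ht.2 hxm⟩
            exact (hd_r₁ t (hsm₁ htm)).sub (hd_r₂ t (hsm₂ htm))
          · intro t ht
            exact hv₁pos t ⟨ht.1.le, lt_of_lt_of_le ht.2 (le_trans hxm hmM₁)⟩
          · intro t ht
            exact hδ t ht.1.le (le_trans ht.2.le hxm) (lt_trans ht.2 hxδ)
        · have := hδ x hx1.le hxm hxδ
          linarith
      · -- 0 < sInf S
        have hs'M₁ : sInf S ∈ Ioo 0 M₁ := ⟨h0, lt_of_lt_of_le hsm hmM₁⟩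
        have hs'M₂ : sInf S ∈ Ioo 0 M₂ := ⟨h0, lt_of_lt_of_le hsm hmM₂⟩
        have hca₁ := hr₁ca _ hs'M₁
        have hca₂ := hr₂ca _ hs'M₂
        have hcav₁ := hv₁ca _ hs'M₁
        have hcav₂ := hv₂ca _ hs'M₂
        have hvp₁ : 0 < u₁' (r₁ (sInf S)) := hv₁pos _ ⟨hs0, hs'M₁.2⟩
        have hvp₂ : 0 < u₂' (r₂ (sInf S)) := hv₂pos _ ⟨hs0, hs'M₂.2⟩
        have hnb : ¬(r₂ (sInf S) < r₁ (sInf S) ∧ u₁' (r₁ (sInf S)) < u₂' (r₂ (sInf S))) := by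
          intro hboth
          apply csInf_bump hSne hbdd
          have e1 : ∀ᶠ t in nhds (sInf S), 0 < r₁ t - r₂ t :=
            (hca₁.sub hca₂).eventually (lt_mem_nhds
              (show (0:ℝ) < r₁ (sInf S) - r₂ (sInf S) by linarith [hboth.1]))
          have e2 : ∀ᶠ t in nhds (sInf S), 0 < u₂' (r₂ t) - u₁' (r₁ t) :=
            (hcav₂.sub hcav₁).eventually (lt_mem_nhds
              (show (0:ℝ) < u₂' (r₂ (sInf S)) - u₁' (r₁ (sInf S)) by linarith [hboth.2]))
          filter_upwards [e1, e2] with t ht1 ht2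
          intro htS
          rcases htS.2 with h | h
          · linarith
          · linarith
        have hLρ : 0 ≤ r₁ (sInf S) - r₂ (sInf S) :=
          left_le_aux (g := fun t => r₁ t - r₂ t) (s := sInf S) h0 (hca₁.sub hca₂) (fun t ht => sub_nonneg.mpr (hgood t ht).1)
        have hLv : 0 ≤ u₂' (r₂ (sInf S)) - u₁' (r₁ (sInf S)) :=
          left_le_aux (g := fun t => u₂' (r₂ t) - u₁' (r₁ t)) (s := sInf S) h0 (hcav₂.sub hcav₁) (fun t ht => sub_nonneg.mpr (hgood t ht).2)
        -- Z is monotone on [0, sInf S]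
        have hZm := mono_from_deriv (σ := 0) (τ := sInf S) hs0
          (hZcont.mono (Icc_subset_Icc_right hsm.le))
          (fun t ht => hd_Z t ⟨ht.1, lt_trans ht.2 hsm⟩)
          (fun t ht => hZsign t ⟨ht.1, lt_trans ht.2 hsm⟩ (le_trans ht.2.le hsβ)
            (hgood t ht).1 (hgood t ht).2)
        have hZm' : (((r₂ (0:ℝ))^(k+1) * u₂' (r₂ 0))^2 - ((r₁ (0:ℝ))^(k+1) * u₁' (r₁ 0))^2)
            + 2 * Fint f 0 * (((r₂ (0:ℝ))^(k+1))^2 - ((r₁ (0:ℝ))^(k+1))^2)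
            ≤ (((r₂ (sInf S))^(k+1) * u₂' (r₂ (sInf S)))^2
              - ((r₁ (sInf S))^(k+1) * u₁' (r₁ (sInf S)))^2)
            + 2 * Fint f (sInf S) * (((r₂ (sInf S))^(k+1))^2 - ((r₁ (sInf S))^(k+1))^2) := hZm
        have hz0eq : (((r₂ (0:ℝ))^(k+1) * u₂' (r₂ 0))^2 - ((r₁ (0:ℝ))^(k+1) * u₁' (r₁ 0))^2)
            + 2 * Fint f 0 * (((r₂ (0:ℝ))^(k+1))^2 - ((r₁ (0:ℝ))^(k+1))^2)
            = ((r₂ (0:ℝ))^(k+1) * u₂' (r₂ 0))^2 - ((r₁ (0:ℝ))^(k+1) * u₁' (r₁ 0))^2 := by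
          rw [Fint_zero]; ring
        have hZpos : 0 < (((r₂ (sInf S))^(k+1) * u₂' (r₂ (sInf S)))^2
              - ((r₁ (sInf S))^(k+1) * u₁' (r₁ (sInf S)))^2)
            + 2 * Fint f (sInf S) * (((r₂ (sInf S))^(k+1))^2 - ((r₁ (sInf S))^(k+1))^2) := by
          rw [hz0eq] at hZm'
          linarith
        rcases not_and_or.mp hnb with hc1 | hc2
        · -- ρ's are equal at sInf S
          have heq : r₁ (sInf S) = r₂ (sInf S) := le_antisymm (not_lt.mp hc1) (by linarith)
          have hvlt' : u₁' (r₁ (sInf S)) < u₂' (r₂ (sInf S)) := by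
            by_contra hle
            push_neg at hle
            have hveq : u₂' (r₂ (sInf S)) = u₁' (r₁ (sInf S)) := le_antisymm hle (by linarith)
            have hzz : (((r₂ (sInf S))^(k+1) * u₂' (r₂ (sInf S)))^2
                - ((r₁ (sInf S))^(k+1) * u₁' (r₁ (sInf S)))^2)
                + 2 * Fint f (sInf S) * (((r₂ (sInf S))^(k+1))^2 - ((r₁ (sInf S))^(k+1))^2)
                = 0 := by
              rw [hveq, heq]; ring
            linarith
          have hdg : HasDerivAt (fun t => r₁ t - r₂ t)
              ((u₁' (r₁ (sInf S)))⁻¹ - (u₂' (r₂ (sInf S)))⁻¹) (sInf S) :=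
            (hd_r₁ _ hs'M₁).sub (hd_r₂ _ hs'M₂)
          have hinv : (u₂' (r₂ (sInf S)))⁻¹ < (u₁' (r₁ (sInf S)))⁻¹ :=
            inv_strictAnti₀ hvp₁ hvlt'
          have hd0 := deriv_nonpos_of_nonneg_left h0
            (fun t ht => sub_nonneg.mpr (hgood t ht).1) (by rw [heq]; ring) hdg
          linarith
        · -- v's are equal at sInf S
          have hveq : u₂' (r₂ (sInf S)) = u₁' (r₁ (sInf S)) :=
            le_antisymm (not_lt.mp hc2) (by linarith)
          have hρle : r₂ (sInf S) ≤ r₁ (sInf S) := by linarith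
          have hρ₂0 : 0 ≤ r₂ (sInf S) := (hρ₂pos _ ⟨hs0, hs'M₂.2.le⟩).le
          have hpowle : ((r₂ (sInf S))^(k+1))^2 ≤ ((r₁ (sInf S))^(k+1))^2 :=
            pow_le_pow_left₀ (pow_nonneg hρ₂0 _) (pow_le_pow_left₀ hρ₂0 hρle _) 2
          have hE := he₂pos (sInf S) ⟨hs0, hs'M₂.2⟩
          have hfac : (((r₂ (sInf S))^(k+1) * u₂' (r₂ (sInf S)))^2
              - ((r₁ (sInf S))^(k+1) * u₁' (r₁ (sInf S)))^2)
              + 2 * Fint f (sInf S) * (((r₂ (sInf S))^(k+1))^2 - ((r₁ (sInf S))^(k+1))^2)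
              = ((u₂' (r₂ (sInf S)))^2 + 2 * Fint f (sInf S))
                * (((r₂ (sInf S))^(k+1))^2 - ((r₁ (sInf S))^(k+1))^2) := by
            rw [hveq]; ring
          have hle0 : (((r₂ (sInf S))^(k+1) * u₂' (r₂ (sInf S)))^2
              - ((r₁ (sInf S))^(k+1) * u₁' (r₁ (sInf S)))^2)
              + 2 * Fint f (sInf S) * (((r₂ (sInf S))^(k+1))^2 - ((r₁ (sInf S))^(k+1))^2)
              ≤ 0 := by
            rw [hfac]
            exact mul_nonpos_of_nonneg_of_nonpos hE.le (by linarith)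
          linarith
    intro t ht
    constructor
    · by_contra hlt; push_neg at hlt; exact hkey ⟨t, ⟨ht, Or.inl hlt⟩⟩
    · by_contra hlt; push_neg at hlt; exact hkey ⟨t, ⟨ht, Or.inr hlt⟩⟩
  -- ===== W positive at β =====
  have hWβ : 0 < ((r₂ β)^(k+1) * u₂' (r₂ β))^2 - ((r₁ β)^(k+1) * u₁' (r₁ β))^2 := by
    rcases eq_or_lt_of_le hβ0 with h | h
    · rw [← h]; exact hW0
    · have hZm := mono_from_deriv (σ := 0) (τ := β) hβ0
        (hZcont.mono (Icc_subset_Icc_right hβm.le))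
        (fun t ht => hd_Z t ⟨ht.1, lt_trans ht.2 hβm⟩)
        (fun t ht => hZsign t ⟨ht.1, lt_trans ht.2 hβm⟩ ht.2.le
          (hA t ⟨ht.1, ht.2.le⟩).1 (hA t ⟨ht.1, ht.2.le⟩).2)
      have hZm' : (((r₂ (0:ℝ))^(k+1) * u₂' (r₂ 0))^2 - ((r₁ (0:ℝ))^(k+1) * u₁' (r₁ 0))^2)
          + 2 * Fint f 0 * (((r₂ (0:ℝ))^(k+1))^2 - ((r₁ (0:ℝ))^(k+1))^2)
          ≤ (((r₂ β)^(k+1) * u₂' (r₂ β))^2 - ((r₁ β)^(k+1) * u₁' (r₁ β))^2)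
          + 2 * Fint f β * (((r₂ β)^(k+1))^2 - ((r₁ β)^(k+1))^2) := hZm
      rw [Fint_zero, hFβ0] at hZm'
      linarith [hW0]
  -- ===== PHASE B =====
  have hB : ∀ t ∈ Ioo β m, r₂ t ≤ r₁ t := by
    set S : Set ℝ := {t : ℝ | t ∈ Ioo β m ∧ r₁ t < r₂ t} with hSdef
    have hkey : ¬ S.Nonempty := by
      intro hSne
      have hbdd : BddBelow S := ⟨0, fun x hx => le_trans hβ0 hx.1.1.le⟩
      have hlb : ∀ x ∈ S, sInf S ≤ x := fun x hx => csInf_le hbdd hx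
      have hs0 : 0 ≤ sInf S := le_csInf hSne fun x hx => le_trans hβ0 hx.1.1.le
      have hsβ : β ≤ sInf S := le_csInf hSne fun x hx => hx.1.1.le
      obtain ⟨x₀, hx₀⟩ := id hSne
      have hsm : sInf S < m := lt_of_le_of_lt (hlb x₀ hx₀) hx₀.1.2
      have hgood : ∀ t ∈ Ioo 0 (sInf S), r₂ t ≤ r₁ t := by
        intro t ht
        rcases le_or_gt t β with h | h
        · exact (hA t ⟨ht.1, h⟩).1
        · have htS : t ∉ S := fun hts => absurd (hlb t hts) (not_le.mpr ht.2)
          have htm : t ∈ Ioo β m := ⟨h, lt_trans ht.2 hsm⟩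
          by_contra hlt; push_neg at hlt
          exact htS ⟨htm, hlt⟩
      rcases eq_or_lt_of_le hs0 with h0 | h0
      · -- sInf S = 0 : MVT argument near zero
        obtain ⟨δ, hδ0, hδ⟩ := hsmall
        obtain ⟨x, hxS, hxδ⟩ := exists_lt_of_csInf_lt hSne (by rw [← h0]; exact hδ0)
        have hx1 : 0 < x := lt_of_le_of_lt hβ0 hxS.1.1
        have hxm : x ≤ m := hxS.1.2.le
        refine rho_no_cross (u₁' := u₁') (u₂' := u₂') hx1 ?_ (by rw [hr₁0, hr₂0]) ?_ ?_ ?_ hxS.2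
        · exact ((hr₁cont.mono (Icc_subset_Icc_right (le_trans hxm hmM₁))).sub
            (hr₂cont.mono (Icc_subset_Icc_right (le_trans hxm hmM₂))))
        · intro t ht
          have htm : t ∈ Ioo 0 m := ⟨ht.1, lt_of_lt_of_le ht.2 hxm⟩
          exact (hd_r₁ t (hsm₁ htm)).sub (hd_r₂ t (hsm₂ htm))
        · intro t ht
          exact hv₁pos t ⟨ht.1.le, lt_of_lt_of_le ht.2 (le_trans hxm hmM₁)⟩
        · intro t ht
          exact hδ t ht.1.le (le_trans ht.2.le hxm) (lt_trans ht.2 hxδ)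
      · -- 0 < sInf S
        have hs'M₁ : sInf S ∈ Ioo 0 M₁ := ⟨h0, lt_of_lt_of_le hsm hmM₁⟩
        have hs'M₂ : sInf S ∈ Ioo 0 M₂ := ⟨h0, lt_of_lt_of_le hsm hmM₂⟩
        have hca₁ := hr₁ca _ hs'M₁
        have hca₂ := hr₂ca _ hs'M₂
        have hvp₁ : 0 < u₁' (r₁ (sInf S)) := hv₁pos _ ⟨hs0, hs'M₁.2⟩
        have hvp₂ : 0 < u₂' (r₂ (sInf S)) := hv₂pos _ ⟨hs0, hs'M₂.2⟩
        have hLρ : 0 ≤ r₁ (sInf S) - r₂ (sInf S) :=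
          left_le_aux (g := fun t => r₁ t - r₂ t) (s := sInf S) h0 (hca₁.sub hca₂) (fun t ht => sub_nonneg.mpr (hgood t ht))
        have hnb : ¬(r₂ (sInf S) < r₁ (sInf S)) := by
          intro hlt
          apply csInf_bump hSne hbdd
          have e1 : ∀ᶠ t in nhds (sInf S), 0 < r₁ t - r₂ t :=
            (hca₁.sub hca₂).eventually (lt_mem_nhds
              (show (0:ℝ) < r₁ (sInf S) - r₂ (sInf S) by linarith))
          filter_upwards [e1] with t ht1
          intro htS
          have := htS.2
          linarith
        have heq : r₁ (sInf S) = r₂ (sInf S) := le_antisymm (not_lt.mp hnb) (by linarith)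
        -- W monotone on [β, sInf S]
        have hWm := mono_from_deriv (σ := β) (τ := sInf S) hsβ
          (hWcont.mono (Icc_subset_Icc hβ0 hsm.le))
          (fun t ht => hd_W t ⟨lt_of_le_of_lt hβ0 ht.1, lt_trans ht.2 hsm⟩)
          (fun t ht => by
            have hf := hfposβ t ht.1
            have hρ := hgood t ⟨lt_of_le_of_lt hβ0 ht.1, ht.2⟩
            have hρ₂0 : 0 ≤ r₂ t :=
              (hρ₂pos t ⟨(lt_of_le_of_lt hβ0 ht.1).le, le_trans (lt_trans ht.2 hsm).le hmM₂⟩).le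
            have hpow : ((r₂ t)^(k+1))^2 ≤ ((r₁ t)^(k+1))^2 :=
              pow_le_pow_left₀ (pow_nonneg hρ₂0 _) (pow_le_pow_left₀ hρ₂0 hρ _) 2
            have h2f : (0:ℝ) ≤ 2 * f t := by linarith
            exact mul_nonneg h2f (by linarith))
        have hWm' : ((r₂ β)^(k+1) * u₂' (r₂ β))^2 - ((r₁ β)^(k+1) * u₁' (r₁ β))^2
            ≤ ((r₂ (sInf S))^(k+1) * u₂' (r₂ (sInf S)))^2
              - ((r₁ (sInf S))^(k+1) * u₁' (r₁ (sInf S)))^2 := hWm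
        have hvlt' : u₁' (r₁ (sInf S)) < u₂' (r₂ (sInf S)) := by
          by_contra hle
          push_neg at hle
          have hX : 0 < (r₂ (sInf S))^(k+1) := pow_pos (hρ₂pos _ ⟨hs0, hs'M₂.2.le⟩) _
          rw [heq] at hWm' hle
          have hm1 : (r₂ (sInf S))^(k+1) * u₂' (r₂ (sInf S))
              ≤ (r₂ (sInf S))^(k+1) * u₁' (r₂ (sInf S)) :=
            mul_le_mul_of_nonneg_left hle hX.le
          have hm2 : 0 < (r₂ (sInf S))^(k+1) * u₂' (r₂ (sInf S)) := mul_pos hX hvp₂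
          have hm3 : ((r₂ (sInf S))^(k+1) * u₂' (r₂ (sInf S)))^2
              ≤ ((r₂ (sInf S))^(k+1) * u₁' (r₂ (sInf S)))^2 :=
            pow_le_pow_left₀ hm2.le hm1 2
          linarith [hWβ]
        have hdg : HasDerivAt (fun t => r₁ t - r₂ t)
            ((u₁' (r₁ (sInf S)))⁻¹ - (u₂' (r₂ (sInf S)))⁻¹) (sInf S) :=
          (hd_r₁ _ hs'M₁).sub (hd_r₂ _ hs'M₂)
        have hinv : (u₂' (r₂ (sInf S)))⁻¹ < (u₁' (r₁ (sInf S)))⁻¹ :=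
          inv_strictAnti₀ hvp₁ hvlt'
        have hd0 := deriv_nonpos_of_nonneg_left h0
          (fun t ht => sub_nonneg.mpr (hgood t ht)) (by rw [heq]; ring) hdg
        linarith
    intro t ht
    by_contra hlt
    push_neg at hlt
    exact hkey ⟨t, ⟨ht, hlt⟩⟩
  -- ===== W positive on (β, m] =====
  have hWpos : ∀ t, β < t → t ≤ m →
      0 < ((r₂ t)^(k+1) * u₂' (r₂ t))^2 - ((r₁ t)^(k+1) * u₁' (r₁ t))^2 := by
    intro t h1 h2
    have hWm := mono_from_deriv (σ := β) (τ := t) h1.le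
      (hWcont.mono (Icc_subset_Icc hβ0 h2))
      (fun u hu => hd_W u ⟨lt_of_le_of_lt hβ0 hu.1, lt_of_lt_of_le hu.2 h2⟩)
      (fun u hu => by
        have hf := hfposβ u hu.1
        have hρ := hB u ⟨hu.1, lt_of_lt_of_le hu.2 h2⟩
        have hρ₂0 : 0 ≤ r₂ u :=
          (hρ₂pos u ⟨(lt_of_le_of_lt hβ0 hu.1).le,
            le_trans (lt_of_lt_of_le hu.2 h2).le hmM₂⟩).le
        have hpow : ((r₂ u)^(k+1))^2 ≤ ((r₁ u)^(k+1))^2 :=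
          pow_le_pow_left₀ (pow_nonneg hρ₂0 _) (pow_le_pow_left₀ hρ₂0 hρ _) 2
        have h2f : (0:ℝ) ≤ 2 * f u := by linarith
        exact mul_nonneg h2f (by linarith))
    have hWm' : ((r₂ β)^(k+1) * u₂' (r₂ β))^2 - ((r₁ β)^(k+1) * u₁' (r₁ β))^2
        ≤ ((r₂ t)^(k+1) * u₂' (r₂ t))^2 - ((r₁ t)^(k+1) * u₁' (r₁ t))^2 := hWm
    linarith
  -- ===== M₁ < M₂ =====
  have hM12 : M₁ < M₂ := by
    by_contra hcon
    push_neg at hcon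
    have hm2 : m = M₂ := min_eq_right hcon
    have hu₂c : u₂' c₂ = 0 := deriv_zero_at_peak hc₂ h₂.2.2.1 hc₂up hc₂down
    have h1 : 0 < ((r₂ M₂)^(k+1) * u₂' (r₂ M₂))^2 - ((r₁ M₂)^(k+1) * u₁' (r₁ M₂))^2 :=
      hWpos M₂ hβM₂ (le_of_eq hm2.symm)
    rw [hr₂M, hu₂c] at h1
    have h2 := sq_nonneg ((r₁ M₂)^(k+1) * u₁' (r₁ M₂))
    nlinarith [h1, h2]
  refine ⟨hM12, ?_⟩
  have hmM₁' : m = M₁ := min_eq_left hM12.le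
  intro s hs
  have hsm : s ∈ Ioo β m := ⟨hs.1, by rw [hmM₁']; exact hs.2⟩
  have hsM₁ : s ∈ Ioo 0 M₁ := ⟨lt_of_le_of_lt hβ0 hs.1, hs.2⟩
  have hsM₂ : s ∈ Ioo 0 M₂ := ⟨lt_of_le_of_lt hβ0 hs.1, lt_of_lt_of_le hsm.2 hmM₂⟩
  have hρs : r₂ s ≤ r₁ s := hB s hsm
  have hWs : 0 < ((r₂ s)^(k+1) * u₂' (r₂ s))^2 - ((r₁ s)^(k+1) * u₁' (r₁ s))^2 :=
    hWpos s hs.1 hsm.2.le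
  have hv₁p : 0 < u₁' (r₁ s) := hv₁pos s ⟨hsM₁.1.le, hsM₁.2⟩
  have hv₂p : 0 < u₂' (r₂ s) := hv₂pos s ⟨hsM₂.1.le, hsM₂.2⟩
  have hρ₂p : 0 < r₂ s := hρ₂pos s ⟨hsM₂.1.le, hsM₂.2.le⟩
  have hstrict : r₂ s < r₁ s := by
    rcases eq_or_lt_of_le hρs with heq | h
    · exfalso
      -- heq : r₂ s = r₁ s
      have hvlt' : u₁' (r₁ s) < u₂' (r₂ s) := by
        by_contra hle
        push_neg at hle
        have hX : 0 < (r₂ s)^(k+1) := pow_pos hρ₂p _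
        rw [← heq] at hWs hle
        have hm1 : (r₂ s)^(k+1) * u₂' (r₂ s) ≤ (r₂ s)^(k+1) * u₁' (r₂ s) :=
          mul_le_mul_of_nonneg_left hle hX.le
        have hm2 : 0 < (r₂ s)^(k+1) * u₂' (r₂ s) := mul_pos hX hv₂p
        have hm3 : ((r₂ s)^(k+1) * u₂' (r₂ s))^2 ≤ ((r₂ s)^(k+1) * u₁' (r₂ s))^2 :=
          pow_le_pow_left₀ hm2.le hm1 2
        linarith
      have hloc : IsLocalMin (fun t => r₁ t - r₂ t) s := by
        have hev : ∀ᶠ t in nhds s, (fun t => r₁ t - r₂ t) s ≤ (fun t => r₁ t - r₂ t) t := by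
          filter_upwards [isOpen_Ioo.mem_nhds hsm] with t ht
          have h1 := hB t ht
          show r₁ s - r₂ s ≤ r₁ t - r₂ t
          linarith [heq]
        exact hev
      have hz := hloc.hasDerivAt_eq_zero ((hd_r₁ s hsM₁).sub (hd_r₂ s hsM₂))
      have hinv : (u₂' (r₂ s))⁻¹ < (u₁' (r₁ s))⁻¹ := inv_strictAnti₀ hv₁p hvlt'
      linarith [hz, hinv]
    · exact h
  have hwlt : (r₁ s)^(k+1) * u₁' (r₁ s) < (r₂ s)^(k+1) * u₂' (r₂ s) := by
    by_contra hle
    push_neg at hle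
    have hw₂0 : 0 ≤ (r₂ s)^(k+1) * u₂' (r₂ s) := (mul_pos (pow_pos hρ₂p _) hv₂p).le
    have hm3 : ((r₂ s)^(k+1) * u₂' (r₂ s))^2 ≤ ((r₁ s)^(k+1) * u₁' (r₁ s))^2 :=
      pow_le_pow_left₀ hw₂0 hle 2
    linarith
  exact ⟨hstrict, hwlt⟩
end
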